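/- arXiv:2008.04962 — 4 statements merged into one kernel-verified Lean document; each statement's English description precedes it below -/
import Mathlib

section
/- There is a universal constant C such that for every finite set E ⊂ ℝ², every x ∈ ℝ², and every integer k ≥ 0, there exist subsets S₁, …, S₁₂ ⊂ E with #S_ν ≤ k for each ν, such that ∩_{ν=1}^{12} σ(x, S_ν) ⊂ C·σ^♯(x, k). -/
open Set Real Pointwise

noncomputable section

abbrev E2 := EuclideanSpace ℝ (Fin 2)

/-- Partial derivative in coordinate direction `i`. -/
noncomputable def pd (i : Fin 2) (F : E2 → ℝ) : E2 → ℝ :=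
  fun x => fderiv ℝ F x (EuclideanSpace.single i 1)

/-- Iterated partial derivative `∂^α` for a multi-index `α = (α₁, α₂)`. -/
noncomputable def Dmul (α : ℕ × ℕ) (F : E2 → ℝ) : E2 → ℝ :=
  (pd 0)^[α.1] ((pd 1)^[α.2] F)

/-- The multi-indices `α` with `|α| ≤ 2`. -/
def multiIdx2 : Finset (ℕ × ℕ) :=
  (Finset.range 3 ×ˢ Finset.range 3).filter (fun α => α.1 + α.2 ≤ 2)

/-- `(Σ_{|α| ≤ 2} |∂^α F (x)|²)^{1/2}`. -/
noncomputable def C2sum (F : E2 → ℝ) (x : E2) : ℝ :=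
  Real.sqrt (∑ α ∈ multiIdx2, (Dmul α F x) ^ 2)

/-- `‖F‖_{C²(ℝ²)} ≤ M`. -/
def C2NormLE (F : E2 → ℝ) (M : ℝ) : Prop := ∀ x, C2sum F x ≤ M

/-- `f ∈ C²₊(E)`: `f` is the restriction to `E` of a nonnegative `C²` function of finite norm. -/
def MemC2plusTrace (E : Set E2) (f : E2 → ℝ) : Prop :=
  ∃ F : E2 → ℝ, ContDiff ℝ 2 F ∧ (∀ x, 0 ≤ F x) ∧ (∀ x ∈ E, F x = f x) ∧ ∃ M, C2NormLE F M

/-- The trace norm `‖f‖_{C²₊(E)}`. -/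
noncomputable def traceNormPlus (E : Set E2) (f : E2 → ℝ) : ℝ :=
  sInf { M | ∃ F : E2 → ℝ, ContDiff ℝ 2 F ∧ (∀ x, 0 ≤ F x) ∧ (∀ x ∈ E, F x = f x) ∧
    C2NormLE F M }

/-- The one-jet `𝒥_x F`, as an affine function on `ℝ²`. -/
noncomputable def jet (F : E2 → ℝ) (x : E2) : E2 → ℝ :=
  fun y => F x + fderiv ℝ F x (y - x)

/-- The (half-open) square with center `c` and sidelength `δ`. -/
def sqC (c : E2) (δ : ℝ) : Set E2 :=
  {x | ∀ i : Fin 2, c i - δ / 2 ≤ x i ∧ x i < c i + δ / 2}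

/-- `σ(x, S)`. -/
def sigmaSet (x : E2) (S : Set E2) : Set (E2 → ℝ) :=
  { P | ∃ φ : E2 → ℝ, ContDiff ℝ 2 φ ∧ (∀ z ∈ S, φ z = 0) ∧ C2NormLE φ 1 ∧ P = jet φ x }

/-- `σ^♯(x, k)`. -/
def sigmaSharp (E : Set E2) (x : E2) (k : ℕ) : Set (E2 → ℝ) :=
  { P | ∀ S : Set E2, S ⊆ E → S.ncard ≤ k → P ∈ sigmaSet x S }

/-- `Γ₊(x, S, M)` (for the data `f`). -/
def GammaPlus (f : E2 → ℝ) (x : E2) (S : Set E2) (M : ℝ) : Set (E2 → ℝ) :=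
  { P | ∃ F : E2 → ℝ, ContDiff ℝ 2 F ∧ (∀ y, 0 ≤ F y) ∧ (∀ z ∈ S, F z = f z) ∧
      C2NormLE F M ∧ P = jet F x }

/-- `Γ₊^♯(x, k, M)` (for `f` given on `E`). -/
def GammaSharp (E : Set E2) (f : E2 → ℝ) (x : E2) (k : ℕ) (M : ℝ) : Set (E2 → ℝ) :=
  { P | ∀ S : Set E2, S ⊆ E → S.ncard ≤ k → P ∈ GammaPlus f x S M }

/-- `ℬ(x, δ) = {P : |∂^α P(x)| ≤ δ^{2-|α|} for |α| ≤ 1}`. -/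
def jetBall (x : E2) (δ : ℝ) : Set (E2 → ℝ) :=
  { P | |P x| ≤ δ ^ 2 ∧ ∀ i : Fin 2, |fderiv ℝ P x (EuclideanSpace.single i 1)| ≤ δ }

/-- `|P|_{ℛ_x}`. -/
noncomputable def jetNormAt (x : E2) (P : E2 → ℝ) : ℝ :=
  Real.sqrt ((P x) ^ 2 + ‖fderiv ℝ P x‖ ^ 2)

/-- diameter of a set of jets with respect to `|·|_{ℛ_x}`. -/
noncomputable def jetDiam (x : E2) (A : Set (E2 → ℝ)) : ℝ :=
  sSup { r | ∃ P ∈ A, ∃ P' ∈ A, r = jetNormAt x (P - P') }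

noncomputable def vec2 (a b : ℝ) : E2 := (WithLp.equiv 2 (Fin 2 → ℝ)).symm ![a, b]

/-- A dyadic square is encoded by a triple `q = (i, j, k)`,
corresponding to `[2^k i, 2^k (i+1)) × [2^k j, 2^k (j+1))`; its sidelength is `2^k`. -/
noncomputable def dyadicLen (q : ℤ × ℤ × ℤ) : ℝ := (2 : ℝ) ^ q.2.2

noncomputable def dyadicCenter (q : ℤ × ℤ × ℤ) : E2 :=
  vec2 ((2 : ℝ) ^ q.2.2 * ((q.1 : ℝ) + 1 / 2)) ((2 : ℝ) ^ q.2.2 * ((q.2.1 : ℝ) + 1 / 2))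

noncomputable def dyadicSq (q : ℤ × ℤ × ℤ) : Set E2 := sqC (dyadicCenter q) (dyadicLen q)

/-- The concentric dilate `λQ` of the dyadic square `q`. -/
noncomputable def dilate (q : ℤ × ℤ × ℤ) (lam : ℝ) : Set E2 :=
  sqC (dyadicCenter q) (lam * dyadicLen q)

/-- The dyadic parent `Q⁺`. -/
def dyadicParent (q : ℤ × ℤ × ℤ) : ℤ × ℤ × ℤ := (Int.fdiv q.1 2, Int.fdiv q.2.1 2, q.2.2 + 1)

/-- Membership in the Calderón–Zygmund collection `Λ₀`. -/
def memLambda0 (E : Set E2) (k₀ : ℕ) (C₀ : ℝ) (q : ℤ × ℤ × ℤ) : Prop :=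
  dyadicLen q ≤ 1 ∧
  (∀ x ∈ dilate q 2, C₀ * dyadicLen q ≤ jetDiam x (sigmaSharp E x k₀)) ∧
  (∃ y ∈ dilate (dyadicParent q) 2, jetDiam y (sigmaSharp E y k₀) < 2 * C₀ * dyadicLen q)

def Lambda0 (E : Set E2) (k₀ : ℕ) (C₀ : ℝ) : Set (ℤ × ℤ × ℤ) := { q | memLambda0 E k₀ C₀ q }

def LambdaSharp (E : Set E2) (k₀ : ℕ) (C₀ : ℝ) : Set (ℤ × ℤ × ℤ) :=
  { q | q ∈ Lambda0 E k₀ C₀ ∧ (E ∩ dilate q 2).Nonempty }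



set_option maxHeartbeats 1600000

open RealInnerProductSpace

abbrev G3 := EuclideanSpace ℝ (Fin 3)


lemma segm_mem {T : Set G3} (hc : Convex ℝ T) (hs : ∀ v ∈ T, -v ∈ T)
    {v : G3} (hv : v ∈ T) {c : ℝ} (hcb : |c| ≤ 1) : c • v ∈ T := by
  have h1 : (0:ℝ) ≤ (1 + c)/2 := by cases abs_le.1 hcb; linarith
  have h2 : (0:ℝ) ≤ (1 - c)/2 := by cases abs_le.1 hcb; linarith
  have h3 : (1 + c)/2 + (1 - c)/2 = 1 := by ring
  have := hc hv (hs v hv) h1 h2 h3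
  have heq : ((1 + c)/2) • v + ((1 - c)/2) • (-v) = c • v := by
    rw [smul_neg, ← sub_eq_add_neg, ← sub_smul]; congr 1; ring
  rwa [heq] at this

lemma absconv {T : Set G3} (hc : Convex ℝ T) (h0 : (0:G3) ∈ T)
    (hs : ∀ v ∈ T, -v ∈ T) {ι : Type*} (s : Finset ι) (w : ι → G3) (c : ι → ℝ)
    (hw : ∀ i ∈ s, w i ∈ T) (hb : ∑ i ∈ s, |c i| ≤ 1) :
    (∑ i ∈ s, c i • w i) ∈ T := by
  classical
  induction s using Finset.induction_on generalizing c with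
  | empty => simpa using h0
  | @insert a s ha ih =>
    rw [Finset.sum_insert ha] at hb ⊢
    have hwa : w a ∈ T := hw a (Finset.mem_insert_self a s)
    have hws : ∀ i ∈ s, w i ∈ T := fun i hi => hw i (Finset.mem_insert_of_mem hi)
    set lam := ∑ i ∈ s, |c i| with hlam
    have hlam0 : 0 ≤ lam := Finset.sum_nonneg fun i _ => abs_nonneg _
    by_cases hl : lam = 0
    · have hz : ∀ i ∈ s, c i = 0 := by
        intro i hi
        have h0' := (Finset.sum_eq_zero_iff_of_nonneg (fun j (_ : j ∈ s) => abs_nonneg (c j))).1 hl i hi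
        exact abs_eq_zero.1 h0'
      have : ∑ i ∈ s, c i • w i = 0 := Finset.sum_eq_zero fun i hi => by rw [hz i hi, zero_smul]
      rw [this, add_zero]
      have hca : |c a| ≤ 1 := by rw [hl] at hb; linarith
      exact segm_mem hc hs hwa hca
    · have hlpos : 0 < lam := lt_of_le_of_ne hlam0 (Ne.symm hl)
      set y := lam⁻¹ • ∑ i ∈ s, c i • w i with hy
      have hyT : y ∈ T := by
        have : lam⁻¹ • ∑ i ∈ s, c i • w i = ∑ i ∈ s, (lam⁻¹ * c i) • w i := by
          rw [Finset.smul_sum]; exact Finset.sum_congr rfl fun i _ => (smul_smul _ _ _)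
        rw [hy, this]
        refine ih _ hws ?_
        have : ∑ i ∈ s, |lam⁻¹ * c i| = lam⁻¹ * lam := by
          rw [Finset.mul_sum]
          refine Finset.sum_congr rfl fun i _ => ?_
          rw [abs_mul, abs_of_nonneg (le_of_lt (inv_pos.2 hlpos))]
        rw [this, inv_mul_cancel₀ hl]
      set u := if 0 ≤ c a then w a else -w a with hu
      have huT : u ∈ T := by
        rw [hu]; split_ifs
        · exact hwa
        · exact hs _ hwa
      have hcau : c a • w a = |c a| • u := by
        rw [hu]; split_ifs with h
        · rw [abs_of_nonneg h]
        · rw [smul_neg, abs_of_neg (lt_of_not_ge h), neg_smul, neg_neg]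
          
      have hsum3 : |c a| • u + lam • y + (1 - |c a| - lam) • (0:G3) = c a • w a + ∑ i ∈ s, c i • w i := by
        rw [smul_zero, add_zero, hcau, hy, smul_inv_smul₀ hl]
      rw [← hsum3]
      have h3 : (0:ℝ) ≤ 1 - |c a| - lam := by linarith
      have := Convex.sum_mem (t := (Finset.univ : Finset (Fin 3)))
        (w := ![|c a|, lam, 1 - |c a| - lam]) (z := ![u, y, 0]) hc
        (by intro i hi; fin_cases i <;> simp [abs_nonneg, hlam0, h3])
        (by rw [Fin.sum_univ_three]; norm_num; change |c a| + lam + (1 - |c a| - lam) = 1; ring)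
        (by intro i hi; fin_cases i <;> simp [huT, hyT, h0])
      simpa [Fin.sum_univ_three] using this

lemma span_ball {T : Set G3} {V : Submodule ℝ G3} (hc : Convex ℝ T) (h0 : (0:G3) ∈ T)
    (hs : ∀ v ∈ T, -v ∈ T) (hspan : Submodule.span ℝ T = V) :
    ∃ ρ : ℝ, 0 < ρ ∧ ∀ v ∈ (V : Set G3), ‖v‖ ≤ ρ → v ∈ T := by
  classical
  obtain ⟨b, hbT, hbspan, hbli⟩ := exists_linearIndependent ℝ T
  have hfin : b.Finite := hbli.setFinite
  haveI : Fintype ↥b := hfin.fintype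
  have hre : Submodule.span ℝ (Set.range (Subtype.val : b → G3)) = V := by
    rw [Subtype.range_coe]; rw [hbspan]; exact hspan
  let B : Module.Basis ↥b ℝ ↥V := (Module.Basis.span hbli).map (LinearEquiv.ofEq _ _ hre)
  have hBcoe : ∀ i : ↥b, (B i : G3) = (i : G3) := by
    intro i
    simp [B, Module.Basis.span_apply]
  let φ : ↥b → (↥V →L[ℝ] ℝ) := fun i => LinearMap.toContinuousLinearMap
    ((LinearMap.proj i).comp B.equivFun.toLinearMap)
  set Cb : ℝ := ∑ i : ↥b, ‖φ i‖ with hCb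
  have hCb0 : 0 ≤ Cb := Finset.sum_nonneg fun i _ => ContinuousLinearMap.opNorm_nonneg _
  refine ⟨(Cb + 1)⁻¹, by positivity, ?_⟩
  intro v hvV hvn
  set vV : ↥V := ⟨v, hvV⟩ with hvV'
  have hcoord : ∀ i : ↥b, |B.equivFun vV i| ≤ ‖φ i‖ * ‖vV‖ := by
    intro i
    have := (φ i).le_opNorm vV
    simpa [φ] using this
  have hsum : ∑ i : ↥b, |B.equivFun vV i| ≤ 1 := by
    calc ∑ i : ↥b, |B.equivFun vV i| ≤ ∑ i : ↥b, ‖φ i‖ * ‖vV‖ :=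
          Finset.sum_le_sum fun i _ => hcoord i
      _ = Cb * ‖vV‖ := by rw [hCb, Finset.sum_mul]
      _ ≤ Cb * (Cb + 1)⁻¹ := by
          refine mul_le_mul_of_nonneg_left ?_ hCb0
          simpa using hvn
      _ ≤ 1 := by
          rw [mul_inv_le_iff₀ (by positivity)]
          linarith
  have hrepr : v = ∑ i : ↥b, (B.equivFun vV i) • ((B i : G3)) := by
    have := B.sum_equivFun vV
    calc v = ((vV : ↥V) : G3) := rfl
      _ = ((∑ i : ↥b, (B.equivFun vV i) • B i : ↥V) : G3) := by rw [this]
      _ = ∑ i : ↥b, (B.equivFun vV i) • ((B i : G3)) := by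
          push_cast [Submodule.coe_sum]
          rfl
  rw [hrepr]
  refine absconv hc h0 hs Finset.univ _ _ (fun i _ => ?_) hsum
  rw [hBcoe i]
  exact hbT i.2

lemma closure_double {T : Set G3} {V : Submodule ℝ G3} (hc : Convex ℝ T) (h0 : (0:G3) ∈ T)
    (hs : ∀ v ∈ T, -v ∈ T) (hspan : Submodule.span ℝ T = V) :
    ∀ z ∈ closure T, (2:ℝ)⁻¹ • z ∈ T := by
  obtain ⟨ρ, hρ, hball⟩ := span_ball hc h0 hs hspan
  intro z hz
  have hzV : z ∈ V := by
    have hTV : T ⊆ (V : Set G3) := by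
      rw [← hspan]; exact Submodule.subset_span
    have : closure T ⊆ closure (V : Set G3) := closure_mono hTV
    have hVc : IsClosed (V : Set G3) := Submodule.closed_of_finiteDimensional V
    rw [hVc.closure_eq] at this
    exact this hz
  obtain ⟨x', hx'T, hx'd⟩ := Metric.mem_closure_iff.1 hz ρ hρ
  have hdiff : z - x' ∈ T := by
    refine hball _ ?_ ?_
    · exact Submodule.sub_mem V hzV (by rw [← hspan]; exact Submodule.subset_span hx'T)
    · rw [← dist_eq_norm]; exact le_of_lt hx'd
  have := hc hx'T hdiff (by norm_num : (0:ℝ) ≤ 1/2) (by norm_num : (0:ℝ) ≤ 1/2) (by norm_num)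
  have heq : (1/2 : ℝ) • x' + (1/2 : ℝ) • (z - x') = (2:ℝ)⁻¹ • z := by
    rw [smul_sub, one_div]
    abel
  rwa [heq] at this

lemma sepLem {K : Set G3} (hc : Convex ℝ K) (hcl : IsClosed K)
    (hsym : ∀ a ∈ K, -a ∈ K) (h0 : (0:G3) ∈ K) {z : G3} (hz : z ∉ K) :
    ∃ w : G3, (∀ a ∈ K, |⟪w, a⟫| ≤ 1) ∧ 1 < ⟪w, z⟫ := by
  obtain ⟨f, u, hfu, hu⟩ := geometric_hahn_banach_closed_point hc hcl hz
  have hu0 : 0 < u := by have := hfu 0 h0; simpa using this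
  refine ⟨u⁻¹ • ((InnerProductSpace.toDual ℝ G3).symm f), ?_, ?_⟩
  · intro a ha
    have h1 : ⟪u⁻¹ • ((InnerProductSpace.toDual ℝ G3).symm f), a⟫ = u⁻¹ * f a := by
      rw [real_inner_smul_left, InnerProductSpace.toDual_symm_apply]
    rw [h1, abs_mul, abs_of_nonneg (le_of_lt (inv_pos.2 hu0))]
    rw [inv_mul_le_iff₀ hu0, mul_one]
    have hpos := hfu a ha
    have hneg := hfu (-a) (hsym a ha)
    rw [map_neg] at hneg
    rw [abs_le]; constructor <;> linarith
  · have h1 : ⟪u⁻¹ • ((InnerProductSpace.toDual ℝ G3).symm f), z⟫ = u⁻¹ * f z := by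
      rw [real_inner_smul_left, InnerProductSpace.toDual_symm_apply]
    rw [h1]
    rw [lt_inv_mul_iff₀ hu0, mul_one]
    exact hu

def InvP {I : Type} (T : I → Set G3) (Kc : Set G3) (W : Submodule ℝ G3) (L : List I) (β : ℝ) : Prop :=
  ∀ t : ℝ, 0 < t → ∀ f : G3, f ∈ W → (∀ a ∈ Kc, |⟪f, a⟫| ≤ t) →
    ∀ y : G3, (∀ i ∈ L, y ∈ T i) → |⟪f, y⟫| ≤ β * t

lemma bstep {I : Type} [Nonempty I] (T : I → Set G3) (V : Submodule ℝ G3)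
    (hconv : ∀ i, Convex ℝ (T i)) (hsym : ∀ i, ∀ v ∈ T i, -v ∈ T i)
    (h0T : ∀ i, (0:G3) ∈ T i)
    (hsubV : ∀ i, T i ⊆ (V : Set G3))
    (Kc : Set G3) (hKc : Kc = ⋂ i, closure (T i))
    (ρ : ℝ) (hρ : 0 < ρ) (hball : ∀ v ∈ (V : Set G3), ‖v‖ ≤ ρ → v ∈ Kc)
    (hbd2 : ∀ a ∈ Kc, ‖a‖ ≤ 2) :
    ∀ d : ℕ, ∀ W : Submodule ℝ G3, W ≤ V → Module.finrank ℝ ↥V ≤ Module.finrank ℝ ↥W + d →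
      ∀ (L : List I) (β : ℝ), 0 ≤ β → InvP T Kc W L β →
        ∃ (W' : Submodule ℝ G3) (L' : List I) (β' : ℝ),
          V ≤ W' ∧ 0 ≤ β' ∧ β' ≤ 3 ^ d * (β + 1) - 1 ∧
          L'.length ≤ L.length + d ∧ InvP T Kc W' L' β' := by
  classical
  -- basic properties of Kc
  have hKcV : Kc ⊆ (V : Set G3) := by
    rw [hKc]
    intro a ha
    obtain ⟨i⟩ := ‹Nonempty I›
    have h1 : closure (T i) ⊆ (V : Set G3) := by
      have := closure_mono (hsubV i)
      rwa [(Submodule.closed_of_finiteDimensional V).closure_eq] at this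
    exact h1 (Set.mem_iInter.1 ha i)
  have hKcClosed : IsClosed Kc := by rw [hKc]; exact isClosed_iInter (fun i => isClosed_closure)
  have hKcConv : Convex ℝ Kc := by rw [hKc]; exact convex_iInter (fun i => (hconv i).closure)
  have hKcSym : ∀ a ∈ Kc, -a ∈ Kc := by
    rw [hKc]
    intro a ha
    refine Set.mem_iInter.2 (fun i => ?_)
    have h1 : a ∈ closure (T i) := Set.mem_iInter.1 ha i
    have h3 : -(T i) ⊆ T i := by
      intro v hv
      rw [Set.mem_neg] at hv
      simpa using hsym i _ hv
    have h4 : -a ∈ -closure (T i) := by rw [Set.mem_neg, neg_neg]; exact h1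
    rw [neg_closure] at h4
    exact closure_mono h3 h4
  have hKc0 : (0:G3) ∈ Kc := by
    rw [hKc]; exact Set.mem_iInter.2 (fun i => subset_closure (h0T i))
  have hKcClos : ∀ i, Kc ⊆ closure (T i) := by
    intro i; rw [hKc]; exact Set.iInter_subset _ i
  -- polar bound extension to closures
  have hpol_clos : ∀ (p : G3) (i : I), (∀ a ∈ T i, |⟪p, a⟫| ≤ 1) → ∀ a ∈ closure (T i), |⟪p, a⟫| ≤ 1 := by
    intro p i hp a ha
    have hcl : IsClosed {a : G3 | |⟪p, a⟫| ≤ 1} := by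
      have hcont : Continuous fun a : G3 => |⟪p, a⟫| := (continuous_const.inner continuous_id).abs
      exact isClosed_le hcont continuous_const
    exact closure_minimal (fun b hb => hp b hb) hcl ha
  -- the set D and its bound
  set D : Set G3 := {f : G3 | f ∈ V ∧ ∀ a ∈ Kc, |⟪f, a⟫| ≤ 1} with hD
  have hD0 : (0:G3) ∈ D := ⟨V.zero_mem, by intro a _; simp⟩
  have hDnorm : ∀ f ∈ D, ‖f‖ ≤ ρ⁻¹ := by
    intro f hf
    by_cases hf0 : f = 0
    · rw [hf0]; simp; positivity
    · have hnf : 0 < ‖f‖ := norm_pos_iff.2 hf0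
      set a : G3 := (ρ / ‖f‖) • f with ha
      have haV : a ∈ V := V.smul_mem _ hf.1
      have hana : ‖a‖ = ρ := by
        rw [ha, norm_smul, Real.norm_eq_abs, abs_div, abs_of_pos hρ, abs_of_pos hnf]
        field_simp
      have haKc : a ∈ Kc := hball a haV (le_of_eq hana)
      have := hf.2 a haKc
      rw [ha, real_inner_smul_right, real_inner_self_eq_norm_sq] at this
      have h2 : ρ / ‖f‖ * ‖f‖ ^ 2 = ρ * ‖f‖ := by field_simp
      rw [h2] at this
      rw [abs_of_nonneg (by positivity)] at this
      calc ‖f‖ = ρ⁻¹ * (ρ * ‖f‖) := by field_simp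
        _ ≤ ρ⁻¹ * 1 := by
            refine mul_le_mul_of_nonneg_left this (by positivity)
        _ = ρ⁻¹ := mul_one _
  -- main induction on d
  intro d
  induction d with
  | zero =>
    intro W hWV hrk L β hβ hInv
    have hWeq : W = V := Submodule.eq_of_le_of_finrank_le hWV (by simpa using hrk)
    refine ⟨W, L, β, le_of_eq hWeq.symm, hβ, by norm_num, by omega, hInv⟩
  | succ d ih =>
    intro W hWV hrk L β hβ hInv
    by_cases hVW : V ≤ W
    · refine ⟨W, L, β, hVW, hβ, ?_, by omega, hInv⟩
      have h1 : (1:ℝ) ≤ 3 ^ (d+1) := one_le_pow₀ (by norm_num)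
      nlinarith
    · -- choose p
      obtain ⟨u, huV, huW⟩ := SetLike.not_le_iff_exists.1 hVW
      clear hVW
      set P := W.orthogonalProjectionOnto with hP
      set Lm : G3 →L[ℝ] G3 := ContinuousLinearMap.id ℝ G3 - W.subtypeL.comp P with hLm
      have hLm_apply : ∀ f : G3, Lm f = f - (P f : G3) := by
        intro f; simp [hLm]
      have hLmW : ∀ w ∈ W, Lm w = 0 := by
        intro w hw
        rw [hLm_apply]; exact sub_eq_zero.2 (Submodule.starProjection_eq_self_iff.2 hw).symm
      have hLmOrth : ∀ f : G3, Lm f ∈ Wᗮ := by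
        intro f; rw [hLm_apply]; exact Submodule.sub_starProjection_mem_orthogonal f
      have hLm_le : ∀ f : G3, ‖Lm f‖ ≤ ‖f‖ := by
        intro f
        have hdecomp : f = (P f : G3) + Lm f := by rw [hLm_apply]; abel
        have hinner : ⟪(P f : G3), Lm f⟫ = 0 :=
          Submodule.inner_right_of_mem_orthogonal (P f).2 (hLmOrth f)
        have hsq : ‖f‖ ^ 2 = ‖(P f : G3)‖ ^ 2 + ‖Lm f‖ ^ 2 := by
          conv_lhs => rw [hdecomp]
          rw [norm_add_sq_real, hinner]; ring
        nlinarith [norm_nonneg (Lm f), norm_nonneg f, norm_nonneg ((P f : G3))]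
      -- sup M
      set g : G3 → ℝ := fun f => ‖Lm f‖ with hg
      have hDne : (g '' D).Nonempty := ⟨g 0, 0, hD0, rfl⟩
      have hDbdd : BddAbove (g '' D) := by
        refine ⟨ρ⁻¹, ?_⟩
        rintro _ ⟨f, hf, rfl⟩
        exact le_trans (hLm_le f) (hDnorm f hf)
      set M := sSup (g '' D) with hM
      have hMD : ∀ f ∈ D, g f ≤ M := fun f hf => le_csSup hDbdd ⟨f, hf, rfl⟩
      -- the element e with g e = 1/2
      have hLmu : Lm u ≠ 0 := by
        intro hLmu0
        rw [hLm_apply] at hLmu0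
        have : u = (P u : G3) := by
          have := sub_eq_zero.1 hLmu0; exact this
        exact huW (this ▸ (P u).2)
      have hnLmu : 0 < ‖Lm u‖ := norm_pos_iff.2 hLmu
      set e : G3 := (2 * ‖Lm u‖)⁻¹ • Lm u with he
      have heW : e ∈ Wᗮ := Submodule.smul_mem _ _ (hLmOrth u)
      have henorm : ‖e‖ = 1/2 := by
        rw [he, norm_smul, Real.norm_eq_abs, abs_inv, abs_of_pos (by positivity)]
        field_simp
      have heV : e ∈ V := by
        rw [he]
        refine V.smul_mem _ ?_
        rw [hLm_apply]
        exact V.sub_mem huV (hWV (P u).2)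
      have heD : e ∈ D := by
        refine ⟨heV, fun a ha => ?_⟩
        calc |⟪e, a⟫| ≤ ‖e‖ * ‖a‖ := abs_real_inner_le_norm e a
          _ ≤ (1/2) * 2 := by
              refine mul_le_mul ?_ (hbd2 a ha) (norm_nonneg a) (by norm_num)
              rw [henorm]
          _ = 1 := by norm_num
      have hge : g e = 1/2 := by
        have hLme : Lm e = e := by
          rw [hLm_apply, Submodule.orthogonalProjectionOnto_apply_of_mem_orthogonal heW]
          simp
        rw [hg]; simp only []
        rw [hLme, henorm]
      have hM2 : 1/2 ≤ M := hge ▸ hMD e heD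
      -- existence of p
      have innerPV : ∀ (q a : G3), a ∈ V → ⟪((V.orthogonalProjectionOnto q) : G3), a⟫ = ⟪q, a⟫ := by
        intro q a haV
        rw [← Submodule.starProjection_apply, Submodule.inner_starProjection_left_eq_right, Submodule.starProjection_eq_self_iff.2 haV]
      have hex : ∃ (i₁ : I) (p : G3), p ∈ V ∧ (∀ a ∈ T i₁, |⟪p, a⟫| ≤ 1) ∧ M/2 ≤ g p := by
        by_contra hcon
        push_neg at hcon
        have hDA : ∀ f ∈ D, g f ≤ M/2 := by
          intro f hfD
          by_contra hfA
          push_neg at hfA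
          set A : Set G3 := {x : G3 | ‖Lm x‖ ≤ M/2} with hA
          have hAconv : Convex ℝ A := by
            intro x hx y hy a b ha hb hab
            have : ‖Lm (a • x + b • y)‖ ≤ a * ‖Lm x‖ + b * ‖Lm y‖ := by
              rw [map_add, map_smul, map_smul]
              refine le_trans (norm_add_le _ _) ?_
              rw [norm_smul, norm_smul, Real.norm_eq_abs, Real.norm_eq_abs,
                abs_of_nonneg ha, abs_of_nonneg hb]
            refine le_trans this ?_
            calc a * ‖Lm x‖ + b * ‖Lm y‖ ≤ a * (M/2) + b * (M/2) := by
                  refine add_le_add (mul_le_mul_of_nonneg_left hx ha)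
                    (mul_le_mul_of_nonneg_left hy hb)
              _ = M/2 := by rw [← add_mul, hab, one_mul]
          have hAclosed : IsClosed A := by
            have : A = (fun x => ‖Lm x‖) ⁻¹' (Set.Iic (M/2)) := rfl
            rw [this]
            exact IsClosed.preimage (Lm.continuous.norm) isClosed_Iic
          have hAsym : ∀ x ∈ A, -x ∈ A := by
            intro x hx
            have : ‖Lm (-x)‖ = ‖Lm x‖ := by rw [map_neg, norm_neg]
            simpa [hA, this] using hx
          have hA0 : (0:G3) ∈ A := by
            have : ‖Lm (0:G3)‖ = 0 := by rw [map_zero, norm_zero]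
            simp [hA, this]; linarith
          have hfnA : f ∉ A := by
            intro hmem
            exact absurd hmem (by simpa [hA, hg] using not_le.2 hfA)
          obtain ⟨w, hw1, hw2⟩ := sepLem hAconv hAclosed hAsym hA0 hfnA
          set w'' : G3 := ((V.orthogonalProjectionOnto w) : G3) with hw''
          have hwKc : w'' ∈ Kc := by
            rw [hKc]
            refine Set.mem_iInter.2 (fun i => ?_)
            by_contra hnot
            obtain ⟨q, hq1, hq2⟩ := sepLem ((hconv i).closure) isClosed_closure
              (fun a ha => by
                have h3 : -(T i) ⊆ T i := by
                  intro v hv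
                  rw [Set.mem_neg] at hv
                  simpa using hsym i _ hv
                have h4 : -a ∈ -closure (T i) := by rw [Set.mem_neg, neg_neg]; exact ha
                rw [neg_closure] at h4
                exact closure_mono h3 h4)
              (subset_closure (h0T i)) hnot
            set q' : G3 := ((V.orthogonalProjectionOnto q) : G3) with hq'
            have hq'pol : ∀ a ∈ T i, |⟪q', a⟫| ≤ 1 := by
              intro a haT
              rw [hq', innerPV q a (hsubV i haT)]
              exact hq1 a (subset_closure haT)
            have hq'V : q' ∈ V := (V.orthogonalProjectionOnto q).2
            have hgq' := hcon i q' hq'V hq'pol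
            have hq'A : q' ∈ A := le_of_lt hgq'
            have hwq' := hw1 q' hq'A
            have hqw'' : ⟪q, w''⟫ = ⟪w, q'⟫ := by
              rw [hw'', ← Submodule.starProjection_apply, ← Submodule.inner_starProjection_left_eq_right, Submodule.starProjection_apply, ← hq']
              exact real_inner_comm w q'
            rw [hqw''] at hq2
            have : ⟪w, q'⟫ ≤ 1 := le_trans (le_abs_self _) hwq'
            linarith
          have h1 := hfD.2 w'' hwKc
          have h2 : ⟪w, f⟫ = ⟪w'', f⟫ := by
            rw [hw'']
            rw [innerPV w f hfD.1]
          rw [h2] at hw2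
          have h1' : |⟪w'', f⟫| ≤ 1 := by rw [real_inner_comm]; exact h1
          have : ⟪w'', f⟫ ≤ 1 := le_trans (le_abs_self _) h1'
          linarith
        have : M ≤ M/2 := csSup_le hDne (by rintro _ ⟨f, hf, rfl⟩; exact hDA f hf)
        linarith
      obtain ⟨i₁, p, hpV, hppol, hpg⟩ := hex
      have hgp : 1/4 ≤ g p := by
        have : 1/4 ≤ M/2 := by linarith
        linarith
      have hgp0 : 0 < ‖Lm p‖ := by
        have : (0:ℝ) < 1/4 := by norm_num
        calc (0:ℝ) < 1/4 := this
          _ ≤ g p := hgp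
      have hpW : p ∉ W := by
        intro hmem
        have h0' := hLmW p hmem
        rw [h0', norm_zero] at hgp0
        exact lt_irrefl _ hgp0
      set W₁ : Submodule ℝ G3 := W ⊔ Submodule.span ℝ {p} with hW₁
      have hpW₁ : p ∈ W₁ := Submodule.mem_sup_right (Submodule.mem_span_singleton_self p)
      have hW₁V : W₁ ≤ V := by
        rw [hW₁]
        refine sup_le hWV ?_
        rw [Submodule.span_le, Set.singleton_subset_iff]
        exact hpV
      have hWlt : W < W₁ := by
        refine lt_of_le_of_ne le_sup_left ?_
        intro heq
        exact hpW (heq ▸ hpW₁)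
      have hrk₁ : Module.finrank ℝ ↥V ≤ Module.finrank ℝ ↥W₁ + d := by
        have := Submodule.finrank_lt_finrank_of_lt hWlt
        omega
      have hKcp : ∀ a ∈ Kc, |⟪p, a⟫| ≤ 1 := by
        intro a ha
        exact hpol_clos p i₁ hppol a (hKcClos i₁ ha)
      have hInv₁ : InvP T Kc W₁ (i₁ :: L) (3*β+2) := by
        intro t ht f hfW₁ hfK y hy
        rw [hW₁, Submodule.mem_sup] at hfW₁
        obtain ⟨w, hwW, q, hq, hfwq⟩ := hfW₁
        rw [Submodule.mem_span_singleton] at hq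
        obtain ⟨c, hc⟩ := hq
        -- bound on |c|
        have hfV : f ∈ V := by
          rw [← hfwq]
          exact V.add_mem (hWV hwW) (hc ▸ V.smul_mem c hpV)
        have hfD' : t⁻¹ • f ∈ D := by
          refine ⟨V.smul_mem _ hfV, fun a ha => ?_⟩
          rw [real_inner_smul_left, abs_mul, abs_inv, abs_of_pos ht]
          rw [inv_mul_le_iff₀ ht, mul_one]
          exact hfK a ha
        have hgf : ‖Lm f‖ ≤ 2 * t * ‖Lm p‖ := by
          have h1 : g (t⁻¹ • f) ≤ M := hMD _ hfD'
          have h2 : g (t⁻¹ • f) = t⁻¹ * ‖Lm f‖ := by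
            simp only [hg, map_smul, norm_smul, Real.norm_eq_abs, abs_inv, abs_of_pos ht]
          rw [h2] at h1
          have h3 : M ≤ 2 * ‖Lm p‖ := by
            have := hpg
            simp only [hg] at this
            linarith
          have h4 : t⁻¹ * ‖Lm f‖ ≤ 2 * ‖Lm p‖ := le_trans h1 h3
          calc ‖Lm f‖ = t * (t⁻¹ * ‖Lm f‖) := by field_simp
            _ ≤ t * (2 * ‖Lm p‖) := mul_le_mul_of_nonneg_left h4 (le_of_lt ht)
            _ = 2 * t * ‖Lm p‖ := by ring
        have hLmf : ‖Lm f‖ = |c| * ‖Lm p‖ := by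
          rw [← hfwq, map_add, hLmW w hwW, zero_add, ← hc, map_smul, norm_smul,
            Real.norm_eq_abs]
        have hcbound : |c| ≤ 2 * t := by
          rw [hLmf] at hgf
          have := mul_le_mul_of_nonneg_right (le_of_eq (rfl : |c| * ‖Lm p‖ = |c| * ‖Lm p‖)) (le_of_lt hgp0)
          nlinarith [hgp0]
        -- bound on w against Kc
        have hwbound : ∀ a ∈ Kc, |⟪w, a⟫| ≤ 3 * t := by
          intro a ha
          have h1 : w = f - c • p := by rw [← hfwq, ← hc]; abel
          rw [h1, inner_sub_left]
          refine le_trans (abs_sub _ _) ?_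
          rw [real_inner_smul_left, abs_mul]
          have h2 := hfK a ha
          have h3 := hKcp a ha
          have h4 : |c| * |⟪p, a⟫| ≤ 2 * t * 1 :=
            mul_le_mul hcbound h3 (abs_nonneg _) (by linarith)
          linarith
        have hwy := hInv (3*t) (by linarith) w hwW hwbound y
          (fun i hi => hy i (List.mem_cons_of_mem _ hi))
        have hpy : |⟪p, y⟫| ≤ 1 := by
          have hyT : y ∈ T i₁ := hy i₁ (List.mem_cons_self)
          exact hppol y hyT
        have : |⟪f, y⟫| ≤ |⟪w, y⟫| + |c| * |⟪p, y⟫| := by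
          rw [← hfwq, inner_add_left]
          refine le_trans (abs_add_le _ _) ?_
          rw [← hc, real_inner_smul_left, abs_mul]
        have h5 : |c| * |⟪p, y⟫| ≤ 2 * t * 1 :=
          mul_le_mul hcbound hpy (abs_nonneg _) (by linarith)
        calc |⟪f, y⟫| ≤ |⟪w, y⟫| + |c| * |⟪p, y⟫| := this
          _ ≤ β * (3 * t) + 2 * t * 1 := add_le_add hwy h5
          _ = (3*β+2) * t := by ring
      obtain ⟨W', L', β', hh1, hh3, hh4, hh5, hh6⟩ :=
        ih W₁ hW₁V hrk₁ (i₁ :: L) (3*β+2) (by linarith) hInv₁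
      refine ⟨W', L', β', hh1, hh3, ?_, ?_, hh6⟩
      · have heq : (3:ℝ) ^ d * (3*β+2 + 1) = 3 ^ (d+1) * (β + 1) := by
          rw [pow_succ]; ring
        calc β' ≤ 3 ^ d * (3*β+2 + 1) - 1 := hh4
          _ = 3 ^ (d+1) * (β + 1) - 1 := by rw [heq]
      · simp only [List.length_cons] at hh5
        omega

lemma innerPV (V : Submodule ℝ G3) (q a : G3) (ha : a ∈ V) :
    ⟪((V.orthogonalProjectionOnto q) : G3), a⟫ = ⟪q, a⟫ := by
  rw [← Submodule.starProjection_apply, Submodule.inner_starProjection_left_eq_right, Submodule.starProjection_eq_self_iff.2 ha]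

lemma cg (n : ℕ) : ∀ (V : Submodule ℝ G3), Module.finrank ℝ ↥V ≤ n →
    ∀ (I : Type) (_ : Finite I) (_ : Nonempty I) (T : I → Set G3),
      (∀ i, T i ⊆ (V : Set G3)) → (∀ i, Convex ℝ (T i)) → (∀ i, ∀ v ∈ T i, -v ∈ T i) →
      (∀ i, (0:G3) ∈ T i) → (∀ i, ∀ v ∈ T i, ‖v‖ ≤ 2) →
      ∃ L : List I, L ≠ [] ∧ L.length ≤ n + 1 ∧
        (⋂ i ∈ L, T i) ⊆ (56 : ℝ) • ⋂ i, T i := by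
  induction n with
  | zero =>
    intro V hV I hFin hNe T hsubV hconv hsym h0T hbd
    have hV0 : V = ⊥ := by
      have := Nat.le_zero.1 hV
      exact Submodule.finrank_eq_zero.1 this
    obtain ⟨i₀⟩ := hNe
    refine ⟨[i₀], by simp, by simp, ?_⟩
    intro y hy
    have hyT : y ∈ T i₀ := by
      simp only [Set.mem_iInter] at hy
      exact hy i₀ (List.mem_singleton_self i₀)
    have hy0 : y = 0 := by
      have := hsubV i₀ hyT
      rw [hV0] at this
      simpa using this
    refine ⟨0, ?_, by rw [hy0]; exact smul_zero _⟩
    exact Set.mem_iInter.2 (fun i => h0T i)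
  | succ n ih =>
    intro V hV I hFin hNe T hsubV hconv hsym h0T hbd
    by_cases hall : ∀ i, Submodule.span ℝ (T i) = V
    · -- Case B
      haveI := hFin
      haveI := hNe
      haveI : Fintype I := Fintype.ofFinite I
      choose ρf hρf hρball using fun i => span_ball (hconv i) (h0T i) (hsym i) (hall i)
      set ρ : ℝ := Finset.univ.inf' Finset.univ_nonempty ρf with hρdef
      have hρ : 0 < ρ := by
        rw [hρdef, Finset.lt_inf'_iff]
        exact fun i _ => hρf i
      set Kc : Set G3 := ⋂ i, closure (T i) with hKc
      have hKcClosed : IsClosed Kc := isClosed_iInter (fun i => isClosed_closure)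
      have hKcConv : Convex ℝ Kc := convex_iInter (fun i => (hconv i).closure)
      have hKcSym : ∀ a ∈ Kc, -a ∈ Kc := by
        intro a ha
        refine Set.mem_iInter.2 (fun i => ?_)
        have h1 : a ∈ closure (T i) := Set.mem_iInter.1 ha i
        have h3 : -(T i) ⊆ T i := by
          intro v hv
          rw [Set.mem_neg] at hv
          simpa using hsym i _ hv
        have h4 : -a ∈ -closure (T i) := by rw [Set.mem_neg, neg_neg]; exact h1
        rw [neg_closure] at h4
        exact closure_mono h3 h4
      have hKc0 : (0:G3) ∈ Kc := Set.mem_iInter.2 (fun i => subset_closure (h0T i))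
      have hball : ∀ v ∈ (V : Set G3), ‖v‖ ≤ ρ → v ∈ Kc := by
        intro v hvV hvn
        refine Set.mem_iInter.2 (fun i => ?_)
        refine subset_closure ?_
        refine hρball i v hvV (le_trans hvn ?_)
        rw [hρdef]
        exact Finset.inf'_le _ (Finset.mem_univ i)
      have hbd2 : ∀ a ∈ Kc, ‖a‖ ≤ 2 := by
        intro a ha
        obtain ⟨i₀⟩ := hNe
        have h1 : a ∈ closure (T i₀) := Set.mem_iInter.1 ha i₀
        have h2 : closure (T i₀) ⊆ Metric.closedBall (0:G3) 2 := by
          refine closure_minimal ?_ Metric.isClosed_closedBall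
          intro v hv
          rw [Metric.mem_closedBall, dist_zero_right]
          exact hbd i₀ v hv
        have := h2 h1
        rwa [Metric.mem_closedBall, dist_zero_right] at this
      have hInv0 : InvP T Kc ⊥ [] 0 := by
        intro t ht f hf _ y _
        rw [Submodule.mem_bot] at hf
        rw [hf]
        simp
      obtain ⟨W', L', β', hVW', hβ'0, hβ'le, hlen', hInv'⟩ :=
        bstep T V hconv hsym h0T hsubV Kc hKc ρ hρ hball hbd2
          (Module.finrank ℝ ↥V) ⊥ bot_le (by simp) [] 0 le_rfl hInv0
      have hβ26 : β' ≤ 26 := by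
        have h1 : Module.finrank ℝ ↥V ≤ 3 := by
          have := Submodule.finrank_le V
          simpa [finrank_euclideanSpace_fin] using this
        have h2 : (3:ℝ) ^ (Module.finrank ℝ ↥V) ≤ 3 ^ 3 := by
          exact pow_le_pow_right₀ (by norm_num) h1
        have : β' ≤ 3 ^ (Module.finrank ℝ ↥V) * (0 + 1) - 1 := hβ'le
        rw [zero_add, mul_one] at this
        norm_num at h2 this ⊢
        linarith
      obtain ⟨i₀⟩ := hNe
      refine ⟨i₀ :: L', by simp, ?_, ?_⟩
      · simp only [List.length_cons]
        simp only [List.length_nil, zero_add] at hlen'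
        have h1 : Module.finrank ℝ ↥V ≤ n + 1 := hV
        omega
      · intro y hy
        simp only [Set.mem_iInter] at hy
        have hyT : ∀ i ∈ i₀ :: L', y ∈ T i := fun i hi => hy i hi
        have hyV : y ∈ V := hsubV i₀ (hyT i₀ (List.mem_cons_self))
        have hKcV : Kc ⊆ (V : Set G3) := by
          intro a ha
          have h1 : closure (T i₀) ⊆ (V : Set G3) := by
            have := closure_mono (hsubV i₀)
            rwa [(Submodule.closed_of_finiteDimensional V).closure_eq] at this
          exact h1 (Set.mem_iInter.1 ha i₀)
        have h28 : (28:ℝ)⁻¹ • y ∈ Kc := by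
          by_contra hnot
          obtain ⟨w, hw1, hw2⟩ := sepLem hKcConv hKcClosed hKcSym hKc0 hnot
          rw [real_inner_smul_right] at hw2
          have hwy : 28 < ⟪w, y⟫ := by
            nlinarith
          set f : G3 := ((V.orthogonalProjectionOnto w) : G3) with hf
          have hfV : f ∈ V := (V.orthogonalProjectionOnto w).2
          have hfb : ∀ a ∈ Kc, |⟪f, a⟫| ≤ 1 := by
            intro a ha
            rw [hf, innerPV V w a (hKcV ha)]
            exact hw1 a ha
          have hfy := hInv' 1 one_pos f (hVW' hfV) (by simpa using hfb) y
            (fun i hi => hyT i (List.mem_cons_of_mem _ hi))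
          have hfy' : ⟪f, y⟫ = ⟪w, y⟫ := by rw [hf, innerPV V w y hyV]
          have hcontr : (28:ℝ) < β' * 1 := by
            calc (28:ℝ) < ⟪w, y⟫ := hwy
              _ = ⟪f, y⟫ := hfy'.symm
              _ ≤ |⟪f, y⟫| := le_abs_self _
              _ ≤ β' * 1 := hfy
          rw [mul_one] at hcontr
          linarith
        have h56 : (56:ℝ)⁻¹ • y ∈ ⋂ i, T i := by
          refine Set.mem_iInter.2 (fun i => ?_)
          have h1 : (28:ℝ)⁻¹ • y ∈ closure (T i) := Set.mem_iInter.1 h28 i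
          have h2 := closure_double (hconv i) (h0T i) (hsym i) (hall i) _ h1
          have h3 : (2:ℝ)⁻¹ • (28:ℝ)⁻¹ • y = (56:ℝ)⁻¹ • y := by
            rw [smul_smul]; norm_num
          rwa [h3] at h2
        refine ⟨(56:ℝ)⁻¹ • y, h56, ?_⟩
        show (56:ℝ) • (56:ℝ)⁻¹ • y = y
        rw [smul_smul]
        norm_num
    · -- Case A
      push_neg at hall
      obtain ⟨i₀, hne⟩ := hall
      set V' : Submodule ℝ G3 := Submodule.span ℝ (T i₀) with hV'
      have hV'le : V' ≤ V := by
        rw [hV', Submodule.span_le]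
        exact hsubV i₀
      have hV'lt : V' < V := lt_of_le_of_ne hV'le hne
      have hrk' : Module.finrank ℝ ↥V' ≤ n := by
        have := Submodule.finrank_lt_finrank_of_lt hV'lt
        omega
      obtain ⟨L, hLne, hLlen, hLsub⟩ := ih V' hrk' I hFin hNe
        (fun i => T i ∩ (V' : Set G3))
        (fun i => Set.inter_subset_right)
        (fun i => (hconv i).inter V'.convex)
        (fun i v hv => ⟨hsym i v hv.1, V'.neg_mem hv.2⟩)
        (fun i => ⟨h0T i, V'.zero_mem⟩)
        (fun i v hv => hbd i v hv.1)
      refine ⟨i₀ :: L, by simp, ?_, ?_⟩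
      · simp only [List.length_cons]; omega
      · intro y hy
        simp only [Set.mem_iInter] at hy
        have hyi₀ : y ∈ T i₀ := hy i₀ (List.mem_cons_self)
        have hyV' : y ∈ V' := by
          rw [hV']
          exact Submodule.subset_span hyi₀
        have hyL : y ∈ ⋂ i ∈ L, (T i ∩ (V' : Set G3)) := by
          refine Set.mem_iInter₂.2 (fun i hi => ?_)
          exact ⟨hy i (List.mem_cons_of_mem _ hi), hyV'⟩
        have := hLsub hyL
        obtain ⟨z, hz, hzy⟩ := this
        refine ⟨z, ?_, hzy⟩
        exact Set.mem_iInter.2 (fun i => (Set.mem_iInter.1 hz i).1)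


-- ===================== analytic part =====================

lemma pd_zero (i : Fin 2) : pd i (fun _ => (0:ℝ)) = fun _ => (0:ℝ) := by
  funext x
  simp [pd]

lemma pd_neg (i : Fin 2) (F : E2 → ℝ) :
    pd i (fun y => -F y) = fun y => -(pd i F y) := by
  funext x
  simp [pd, fderiv_neg]

lemma pd_comb (i : Fin 2) {F H : E2 → ℝ} (hF : Differentiable ℝ F) (hH : Differentiable ℝ H)
    (a b : ℝ) : pd i (fun y => a * F y + b * H y) = fun y => a * pd i F y + b * pd i H y := by
  funext x
  simp only [pd]
  rw [fderiv_fun_add ((hF x).const_mul a) ((hH x).const_mul b),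
    fderiv_const_mul (hF x) a, fderiv_const_mul (hH x) b]
  simp

lemma pd_contDiff_one {F : E2 → ℝ} (h : ContDiff ℝ 2 F) (i : Fin 2) :
    ContDiff ℝ 1 (pd i F) := by
  have h1 : ContDiff ℝ 1 (fderiv ℝ F) := h.fderiv_right (by norm_num)
  exact (ContinuousLinearMap.apply ℝ ℝ (EuclideanSpace.single i 1)).contDiff.comp h1

lemma pd_diff {F : E2 → ℝ} (h : ContDiff ℝ 2 F) (i : Fin 2) :
    Differentiable ℝ (pd i F) :=
  (pd_contDiff_one h i).differentiable (by norm_num)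

lemma multiIdx2_eq : multiIdx2 =
    ({(0,0),(1,0),(0,1),(2,0),(1,1),(0,2)} : Finset (ℕ × ℕ)) := by decide

lemma Dmul00 (F : E2 → ℝ) : Dmul (0,0) F = F := rfl
lemma Dmul10 (F : E2 → ℝ) : Dmul (1,0) F = pd 0 F := by
  simp [Dmul]
lemma Dmul01 (F : E2 → ℝ) : Dmul (0,1) F = pd 1 F := by
  simp [Dmul]
lemma Dmul20 (F : E2 → ℝ) : Dmul (2,0) F = pd 0 (pd 0 F) := by
  simp [Dmul, Function.iterate_succ, Function.iterate_zero]
lemma Dmul11 (F : E2 → ℝ) : Dmul (1,1) F = pd 0 (pd 1 F) := by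
  simp [Dmul]
lemma Dmul02 (F : E2 → ℝ) : Dmul (0,2) F = pd 1 (pd 1 F) := by
  simp [Dmul, Function.iterate_succ, Function.iterate_zero]

lemma C2sum_eq (F : E2 → ℝ) (x : E2) :
    C2sum F x = Real.sqrt ((F x)^2 + (pd 0 F x)^2 + (pd 1 F x)^2
      + (pd 0 (pd 0 F) x)^2 + (pd 0 (pd 1 F) x)^2 + (pd 1 (pd 1 F) x)^2) := by
  rw [C2sum, multiIdx2_eq]
  congr 1
  rw [show ({(0,0),(1,0),(0,1),(2,0),(1,1),(0,2)} : Finset (ℕ × ℕ))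
    = insert (0,0) (insert (1,0) (insert (0,1) (insert (2,0) (insert (1,1) {(0,2)})))) from rfl]
  rw [Finset.sum_insert (by decide), Finset.sum_insert (by decide),
    Finset.sum_insert (by decide), Finset.sum_insert (by decide),
    Finset.sum_insert (by decide), Finset.sum_singleton]
  rw [Dmul00, Dmul10, Dmul01, Dmul20, Dmul11, Dmul02]
  ring

lemma sq_le_of_sqrt_le {t A : ℝ} (ht : t^2 ≤ A) (hA : Real.sqrt A ≤ 1) : |t| ≤ 1 := by
  have h1 : Real.sqrt (t^2) ≤ Real.sqrt A := Real.sqrt_le_sqrt ht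
  rw [Real.sqrt_sq_eq_abs] at h1
  exact le_trans h1 hA

lemma comp_bounds {F : E2 → ℝ} (hC : C2NormLE F 1) (x : E2) :
    |F x| ≤ 1 ∧ |pd 0 F x| ≤ 1 ∧ |pd 1 F x| ≤ 1 := by
  have h := hC x
  rw [C2sum_eq] at h
  refine ⟨sq_le_of_sqrt_le ?_ h, sq_le_of_sqrt_le ?_ h, sq_le_of_sqrt_le ?_ h⟩ <;> nlinarith [sq_nonneg (F x), sq_nonneg (pd 0 F x), sq_nonneg (pd 1 F x), sq_nonneg (pd 0 (pd 0 F) x), sq_nonneg (pd 0 (pd 1 F) x), sq_nonneg (pd 1 (pd 1 F) x)]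

lemma C2NormLE_zero : C2NormLE (fun _ => (0:ℝ)) 1 := by
  intro x
  rw [C2sum_eq]
  rw [pd_zero, pd_zero]
  simp [pd_zero]

lemma C2NormLE_neg {F : E2 → ℝ} (h : C2NormLE F 1) : C2NormLE (fun y => -F y) 1 := by
  intro x
  have hx := h x
  rw [C2sum_eq] at hx ⊢
  rw [pd_neg, pd_neg]
  simp only [pd_neg, neg_sq]
  exact hx

lemma sqrt_six_comb (a b : ℝ) (ha : 0 ≤ a) (hb : 0 ≤ b) (u v : Fin 6 → ℝ) :
    Real.sqrt (∑ i, (a * u i + b * v i)^2) ≤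
      a * Real.sqrt (∑ i, (u i)^2) + b * Real.sqrt (∑ i, (v i)^2) := by
  set U : EuclideanSpace ℝ (Fin 6) := (WithLp.equiv 2 (Fin 6 → ℝ)).symm u with hU
  set V : EuclideanSpace ℝ (Fin 6) := (WithLp.equiv 2 (Fin 6 → ℝ)).symm v with hV
  have hnU : ‖U‖ = Real.sqrt (∑ i, (u i)^2) := by
    rw [EuclideanSpace.norm_eq]
    congr 1
    refine Finset.sum_congr rfl (fun i _ => ?_)
    rw [Real.norm_eq_abs, sq_abs]
    rfl
  have hnV : ‖V‖ = Real.sqrt (∑ i, (v i)^2) := by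
    rw [EuclideanSpace.norm_eq]
    congr 1
    refine Finset.sum_congr rfl (fun i _ => ?_)
    rw [Real.norm_eq_abs, sq_abs]
    rfl
  have hcomb : Real.sqrt (∑ i, (a * u i + b * v i)^2) = ‖a • U + b • V‖ := by
    rw [EuclideanSpace.norm_eq]
    congr 1
    refine Finset.sum_congr rfl (fun i _ => ?_)
    rw [Real.norm_eq_abs, sq_abs]
    rfl
  rw [hcomb]
  calc ‖a • U + b • V‖ ≤ ‖a • U‖ + ‖b • V‖ := norm_add_le _ _
    _ = a * ‖U‖ + b * ‖V‖ := by
        rw [norm_smul, norm_smul, Real.norm_eq_abs, Real.norm_eq_abs,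
          abs_of_nonneg ha, abs_of_nonneg hb]
    _ = a * Real.sqrt (∑ i, (u i)^2) + b * Real.sqrt (∑ i, (v i)^2) := by rw [hnU, hnV]

lemma C2NormLE_comb {F H : E2 → ℝ} (hF : ContDiff ℝ 2 F) (hH : ContDiff ℝ 2 H)
    (hCF : C2NormLE F 1) (hCH : C2NormLE H 1) {a b : ℝ} (ha : 0 ≤ a) (hb : 0 ≤ b)
    (hab : a + b = 1) : C2NormLE (fun y => a * F y + b * H y) 1 := by
  intro x
  have hdF := hF.differentiable (by norm_num)
  have hdH := hH.differentiable (by norm_num)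
  have h0 : pd 0 (fun y => a * F y + b * H y) = fun y => a * pd 0 F y + b * pd 0 H y :=
    pd_comb 0 hdF hdH a b
  have h1 : pd 1 (fun y => a * F y + b * H y) = fun y => a * pd 1 F y + b * pd 1 H y :=
    pd_comb 1 hdF hdH a b
  have h00 : pd 0 (pd 0 (fun y => a * F y + b * H y))
      = fun y => a * pd 0 (pd 0 F) y + b * pd 0 (pd 0 H) y := by
    rw [h0]; exact pd_comb 0 (pd_diff hF 0) (pd_diff hH 0) a b
  have h01 : pd 0 (pd 1 (fun y => a * F y + b * H y))
      = fun y => a * pd 0 (pd 1 F) y + b * pd 0 (pd 1 H) y := by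
    rw [h1]; exact pd_comb 0 (pd_diff hF 1) (pd_diff hH 1) a b
  have h11 : pd 1 (pd 1 (fun y => a * F y + b * H y))
      = fun y => a * pd 1 (pd 1 F) y + b * pd 1 (pd 1 H) y := by
    rw [h1]; exact pd_comb 1 (pd_diff hF 1) (pd_diff hH 1) a b
  rw [C2sum_eq, h00, h01, h11, h0, h1]
  have key := sqrt_six_comb a b ha hb
    ![F x, pd 0 F x, pd 1 F x, pd 0 (pd 0 F) x, pd 0 (pd 1 F) x, pd 1 (pd 1 F) x]
    ![H x, pd 0 H x, pd 1 H x, pd 0 (pd 0 H) x, pd 0 (pd 1 H) x, pd 1 (pd 1 H) x]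
  simp only [Fin.sum_univ_six, Matrix.cons_val_zero, Matrix.cons_val_one, Matrix.head_cons,
    Matrix.cons_val_two, Matrix.tail_cons, Matrix.cons_val_three, Matrix.cons_val_four,
    Matrix.cons_val_fin_one, Matrix.head_fin_const] at key
  have hF6 : Real.sqrt ((F x)^2 + (pd 0 F x)^2 + (pd 1 F x)^2 + (pd 0 (pd 0 F) x)^2
      + (pd 0 (pd 1 F) x)^2 + (pd 1 (pd 1 F) x)^2) ≤ 1 := by
    rw [← C2sum_eq]; exact hCF x
  have hH6 : Real.sqrt ((H x)^2 + (pd 0 H x)^2 + (pd 1 H x)^2 + (pd 0 (pd 0 H) x)^2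
      + (pd 0 (pd 1 H) x)^2 + (pd 1 (pd 1 H) x)^2) ≤ 1 := by
    rw [← C2sum_eq]; exact hCH x
  beta_reduce
  refine le_trans key ?_
  calc _ ≤ a * 1 + b * 1 := add_le_add (mul_le_mul_of_nonneg_left hF6 ha)
        (mul_le_mul_of_nonneg_left hH6 hb)
    _ = 1 := by rw [mul_one, mul_one, hab]

-- ===================== jets and T-sets =====================

noncomputable def jetOf (x : E2) (v : G3) : E2 → ℝ :=
  fun y => v 0 + v 1 * (y 0 - x 0) + v 2 * (y 1 - x 1)

noncomputable def theta (x : E2) (φ : E2 → ℝ) : G3 :=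
  (WithLp.equiv 2 (Fin 3 → ℝ)).symm ![φ x, pd 0 φ x, pd 1 φ x]

def TTset (x : E2) (S : Set E2) : Set G3 :=
  {v | ∃ φ : E2 → ℝ, ContDiff ℝ 2 φ ∧ (∀ z ∈ S, φ z = 0) ∧ C2NormLE φ 1 ∧ v = theta x φ}

lemma theta_coord (x : E2) (φ : E2 → ℝ) :
    theta x φ 0 = φ x ∧ theta x φ 1 = pd 0 φ x ∧ theta x φ 2 = pd 1 φ x := by
  refine ⟨?_, ?_, ?_⟩ <;> simp [theta]

lemma e2_single_smul (i : Fin 2) (c : ℝ) :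
    EuclideanSpace.single i c = c • EuclideanSpace.single i (1:ℝ) := by
  ext j
  by_cases h : j = i <;> simp [EuclideanSpace.single_apply, h]

lemma e2_decomp (w : E2) :
    w = EuclideanSpace.single 0 (w 0) + EuclideanSpace.single (1 : Fin 2) (w 1) := by
  ext j
  fin_cases j <;> simp [EuclideanSpace.single_apply]

lemma clm_apply_decomp (L : E2 →L[ℝ] ℝ) (w : E2) :
    L w = w 0 * L (EuclideanSpace.single 0 1) + w 1 * L (EuclideanSpace.single 1 1) := by
  conv_lhs => rw [e2_decomp w]
  rw [map_add, e2_single_smul 0 (w 0), e2_single_smul 1 (w 1), map_smul, map_smul]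
  simp

lemma e2_sub_apply (y x : E2) (i : Fin 2) : (y - x) i = y i - x i := rfl

lemma jet_eq (φ : E2 → ℝ) (x : E2) : jet φ x = jetOf x (theta x φ) := by
  funext y
  obtain ⟨h0, h1, h2⟩ := theta_coord x φ
  rw [jet, jetOf, h0, h1, h2]
  rw [clm_apply_decomp (fderiv ℝ φ x) (y - x)]
  rw [e2_sub_apply, e2_sub_apply]
  rw [pd, pd]
  ring

lemma jetOf_inj (x : E2) : Function.Injective (jetOf x) := by
  intro v w h
  have h0 := congrFun h x
  simp only [jetOf, sub_self, mul_zero, add_zero] at h0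
  have h1 := congrFun h (x + EuclideanSpace.single 0 1)
  have h2 := congrFun h (x + EuclideanSpace.single 1 1)
  simp only [jetOf, PiLp.add_apply, EuclideanSpace.single_apply] at h1 h2
  norm_num at h1 h2
  rw [h0] at h1 h2
  ext j
  fin_cases j
  · exact h0
  · simpa using h1
  · simpa using h2

lemma jetOf_smul (x : E2) (c : ℝ) (v : G3) : jetOf x (c • v) = c • jetOf x v := by
  funext y
  simp only [jetOf, Pi.smul_apply, PiLp.smul_apply, smul_eq_mul]
  ring

lemma sigmaSet_eq (x : E2) (S : Set E2) : sigmaSet x S = jetOf x '' TTset x S := by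
  ext P
  constructor
  · rintro ⟨φ, h1, h2, h3, h4⟩
    exact ⟨theta x φ, ⟨φ, h1, h2, h3, rfl⟩, (h4.trans (jet_eq φ x)).symm⟩
  · rintro ⟨v, ⟨φ, h1, h2, h3, hv⟩, hPv⟩
    exact ⟨φ, h1, h2, h3, by rw [← hPv, hv, jet_eq]⟩

lemma theta_zero (x : E2) : theta x (fun _ => (0:ℝ)) = 0 := by
  ext i
  fin_cases i <;> simp [theta, pd_zero]

lemma TT_zero (x : E2) (S : Set E2) : (0:G3) ∈ TTset x S :=
  ⟨fun _ => 0, contDiff_const, fun z _ => rfl, C2NormLE_zero, (theta_zero x).symm⟩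

lemma TT_neg (x : E2) (S : Set E2) : ∀ v ∈ TTset x S, -v ∈ TTset x S := by
  rintro v ⟨φ, h1, h2, h3, h4⟩
  refine ⟨fun y => -(φ y), h1.neg, fun z hz => by show -φ z = 0; rw [h2 z hz, neg_zero], C2NormLE_neg h3, ?_⟩
  ext i
  fin_cases i <;>
    simp [theta, pd_neg, h4]

lemma TT_convex (x : E2) (S : Set E2) : Convex ℝ (TTset x S) := by
  rintro v ⟨φ, h1, h2, h3, h4⟩ w ⟨ψ, g1, g2, g3, g4⟩ a b ha hb hab
  refine ⟨fun y => a * φ y + b * ψ y,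
    (contDiff_const.mul h1).add (contDiff_const.mul g1),
    fun z hz => by show a * φ z + b * ψ z = 0; rw [h2 z hz, g2 z hz]; ring,
    C2NormLE_comb h1 g1 h3 g3 ha hb hab, ?_⟩
  have hdφ := h1.differentiable (by norm_num)
  have hdψ := g1.differentiable (by norm_num)
  ext i
  fin_cases i <;>
    simp [theta, pd_comb 0 hdφ hdψ a b, pd_comb 1 hdφ hdψ a b, h4, g4]

lemma TT_bdd (x : E2) (S : Set E2) : ∀ v ∈ TTset x S, ‖v‖ ≤ 2 := by
  rintro v ⟨φ, h1, h2, h3, h4⟩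
  obtain ⟨b0, b1, b2⟩ := comp_bounds h3 x
  obtain ⟨c0, c1, c2⟩ := theta_coord x φ
  have hv0 : |v 0| ≤ 1 := by rw [h4, c0]; exact b0
  have hv1 : |v 1| ≤ 1 := by rw [h4, c1]; exact b1
  have hv2 : |v 2| ≤ 1 := by rw [h4, c2]; exact b2
  have hnorm : ‖v‖ = Real.sqrt (‖v 0‖^2 + ‖v 1‖^2 + ‖v 2‖^2) := by
    rw [EuclideanSpace.norm_eq, Fin.sum_univ_three]
  rw [hnorm]
  have hle : ‖v 0‖^2 + ‖v 1‖^2 + ‖v 2‖^2 ≤ 4 := by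
    simp only [Real.norm_eq_abs]
    nlinarith [abs_nonneg (v 0), abs_nonneg (v 1), abs_nonneg (v 2)]
  calc Real.sqrt (‖v 0‖^2 + ‖v 1‖^2 + ‖v 2‖^2) ≤ Real.sqrt 4 := Real.sqrt_le_sqrt hle
    _ = 2 := by
        rw [show (4:ℝ) = 2^2 by norm_num, Real.sqrt_sq (by norm_num : (0:ℝ) ≤ 2)]


/-- (Lemma 4.5 of [JL20].) Twelve sets `S₁, …, S₁₂ ⊆ E` of cardinality
at most `k` suffice: `∩ν σ(x, Sν) ⊆ C·σ^♯(x, k)`. -/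
theorem sigma_sharp_local :
    ∃ C : ℝ, 0 < C ∧
      ∀ E : Set E2, E.Finite →
        ∀ (x : E2) (k : ℕ),
          ∃ S : Fin 12 → Set E2,
            (∀ ν, S ν ⊆ E ∧ (S ν).ncard ≤ k) ∧
            (⋂ ν, sigmaSet x (S ν)) ⊆ C • sigmaSharp E x k := by
  refine ⟨56, by norm_num, ?_⟩
  intro E hE x k
  -- index type of admissible subsets
  set Idx := {S : Set E2 // S ⊆ E ∧ S.ncard ≤ k} with hIdx
  have hfinset : {S : Set E2 | S ⊆ E ∧ S.ncard ≤ k}.Finite :=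
    (hE.finite_subsets).subset (fun S hS => hS.1)
  haveI hFin : Finite Idx := hfinset.to_subtype
  haveI hNe : Nonempty Idx := ⟨⟨∅, Set.empty_subset E, by simp⟩⟩
  set TT : Idx → Set G3 := fun i => TTset x i.1 with hTT
  have hrk : Module.finrank ℝ ↥(⊤ : Submodule ℝ G3) ≤ 3 := by
    rw [finrank_top]
    simp [finrank_euclideanSpace_fin]
  obtain ⟨L, hLne, hLlen, hLsub⟩ := cg 3 ⊤ hrk Idx hFin hNe TT
    (fun i v _ => Submodule.mem_top)
    (fun i => TT_convex x i.1)
    (fun i => TT_neg x i.1)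
    (fun i => TT_zero x i.1)
    (fun i => TT_bdd x i.1)
  set i₀ : Idx := L.head hLne with hi₀
  set Sf : Fin 12 → Set E2 := fun ν => (L.getD ν.1 i₀).1 with hSf
  have hcover : ∀ i ∈ L, ∃ ν : Fin 12, L.getD ν.1 i₀ = i := by
    intro i hi
    obtain ⟨n, hn, hval⟩ := List.getElem_of_mem hi
    have hn12 : n < 12 := by omega
    exact ⟨⟨n, hn12⟩, by rw [List.getD_eq_getElem L i₀ hn]; exact hval⟩
  refine ⟨Sf, ?_, ?_⟩
  · intro ν
    exact (L.getD ν.1 i₀).2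
  · intro P hP
    simp only [Set.mem_iInter] at hP
    obtain ⟨v₀, hv₀TT, hv₀P⟩ := by
      have := hP 0
      rw [sigmaSet_eq] at this
      exact this
    have hvL : v₀ ∈ ⋂ i ∈ L, TT i := by
      refine Set.mem_iInter₂.2 (fun i hi => ?_)
      obtain ⟨ν, hν⟩ := hcover i hi
      have hPν := hP ν
      rw [sigmaSet_eq] at hPν
      obtain ⟨v', hv'TT, hv'P⟩ := hPν
      have : v' = v₀ := jetOf_inj x (hv'P.trans hv₀P.symm)
      rw [← this]
      show v' ∈ TTset x i.1
      have hSfν : Sf ν = i.1 := by rw [hSf]; simp only []; rw [hν]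
      rw [← hSfν]
      exact hv'TT
    obtain ⟨w, hw, hwv⟩ := hLsub hvL
    have hPsmul : P = (56:ℝ) • jetOf x w := by
      rw [← hv₀P, ← hwv, jetOf_smul]
    have hsharp : jetOf x w ∈ sigmaSharp E x k := by
      intro S hSE hSk
      rw [sigmaSet_eq]
      exact ⟨w, Set.mem_iInter.1 hw ⟨S, hSE, hSk⟩, rfl⟩
    rw [hPsmul]
    exact Set.smul_mem_smul_set hsharp

end
end

section
/- Fix constants k₀ ≥ 4 and C₀ ≥ 1000, let E ⊂ ℝ² be finite, and let Λ₀ be the associated collection of Calderón–Zygmund squares and Λ^♯ := {Q ∈ Λ₀ : E ∩ 2Q ≠ ∅}. Then: (1) if Q, Q' ∈ Λ₀ and closure(Q) ∩ closure(Q') ≠ ∅, then (1/4)δ_Q ≤ δ_{Q'} ≤ 4δ_Q; (2) there is a universal constant C such that for each Q ∈ Λ₀, #{Q' ∈ Λ₀ : (9/8)Q' ∩ (9/8)Q ≠ ∅} ≤ C; and (3) #(Λ^♯) ≤ C·#(E). -/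
open Set Real Pointwise

noncomputable section

namespace CZaux

/-- The `i`-th index of a dyadic square. -/
def cind (q : ℤ × ℤ × ℤ) (i : Fin 2) : ℤ := if i = 0 then q.1 else q.2.1

/-- The `i`-th coordinate of the center. -/
noncomputable def cc (q : ℤ × ℤ × ℤ) (i : Fin 2) : ℝ :=
  (2:ℝ) ^ q.2.2 * ((cind q i : ℝ) + 1/2)

lemma dyadicCenter_apply (q : ℤ × ℤ × ℤ) (i : Fin 2) : dyadicCenter q i = cc q i := by
  fin_cases i <;> simp [dyadicCenter, cc, cind, vec2, dyadicLen] <;> rfl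

lemma len_pos (q : ℤ × ℤ × ℤ) : 0 < dyadicLen q := by
  unfold dyadicLen; positivity

lemma mem_dilate {q : ℤ × ℤ × ℤ} {lam : ℝ} {x : E2} :
    x ∈ dilate q lam ↔ ∀ i : Fin 2,
      cc q i - lam * dyadicLen q / 2 ≤ x i ∧ x i < cc q i + lam * dyadicLen q / 2 := by
  unfold dilate sqC
  simp only [Set.mem_setOf_eq, dyadicCenter_apply]

lemma len_parent (q : ℤ × ℤ × ℤ) : dyadicLen (dyadicParent q) = 2 * dyadicLen q := by
  show (2:ℝ) ^ (q.2.2 + 1) = 2 * 2 ^ q.2.2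
  rw [zpow_add_one₀ (by norm_num : (2:ℝ) ≠ 0)]; ring

lemma cind_parent (q : ℤ × ℤ × ℤ) (i : Fin 2) :
    cind (dyadicParent q) i = (cind q i).fdiv 2 := by
  fin_cases i <;> rfl

lemma parent_cc (q : ℤ × ℤ × ℤ) (i : Fin 2) :
    |cc (dyadicParent q) i - cc q i| ≤ dyadicLen q / 2 := by
  have h2 : (2:ℝ) ^ (q.2.2 + 1) = 2 * 2 ^ q.2.2 := by
    rw [zpow_add_one₀ (by norm_num : (2:ℝ) ≠ 0)]; ring
  have hsplit : cind q i = 2 * ((cind q i).fdiv 2) ∨ cind q i = 2 * ((cind q i).fdiv 2) + 1 := by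
    have h1 := Int.fmod_add_mul_fdiv (cind q i) 2
    have hm : (cind q i).fmod 2 = (cind q i) % 2 := Int.fmod_eq_emod_of_nonneg _ (by norm_num)
    omega
  have hD : (0:ℝ) < 2 ^ q.2.2 := by positivity
  unfold cc dyadicLen
  rw [cind_parent]
  show |(2:ℝ) ^ (q.2.2 + 1) * (((cind q i).fdiv 2 : ℝ) + 1/2) - _| ≤ _
  rw [h2]
  set m := (cind q i).fdiv 2 with hm
  have hcast : ((cind q i : ℤ):ℝ) = 2*(m:ℝ) ∨ ((cind q i : ℤ):ℝ) = 2*(m:ℝ) + 1 := by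
    rcases hsplit with h | h <;> [left; right] <;> exact_mod_cast congrArg (Int.cast : ℤ → ℝ) h
  rcases hcast with h | h <;>
    · rw [abs_le]; constructor <;> · rw [h]; linarith [hD]

end CZaux
namespace CZaux

lemma parent_double_subset {q q' : ℤ × ℤ × ℤ} {β : ℝ}
    (hc : ∀ i : Fin 2, |cc q' i - cc q i| ≤ β)
    (hβ : β + (5/2) * dyadicLen q' ≤ dyadicLen q) :
    dilate (dyadicParent q') 2 ⊆ dilate q 2 := by
  intro x hx
  rw [mem_dilate] at hx ⊢
  intro i
  obtain ⟨h1, h2⟩ := hx i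
  have hp := parent_cc q' i
  have hci := hc i
  rw [len_parent] at h1 h2
  rw [abs_le] at hp hci
  have := len_pos q'
  constructor <;> linarith

lemma key {E : Set E2} {k₀ : ℕ} {C₀ : ℝ} (hC₀ : 1000 ≤ C₀) {q q' : ℤ × ℤ × ℤ}
    (hq : memLambda0 E k₀ C₀ q) (hq' : memLambda0 E k₀ C₀ q')
    (hsub : dilate (dyadicParent q') 2 ⊆ dilate q 2)
    (hlen : dyadicLen q' ≤ dyadicLen q / 8) : False := by
  obtain ⟨-, -, y, hy, hDy⟩ := hq'
  have h2 := hq.2.1 y (hsub hy)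
  have hδ : 0 < dyadicLen q := len_pos q
  nlinarith [mul_pos (show (0:ℝ) < C₀ by linarith) hδ,
    mul_nonneg (show (0:ℝ) ≤ C₀ by linarith) (show (0:ℝ) ≤ dyadicLen q / 8 - dyadicLen q' by linarith)]

lemma not_small {E : Set E2} {k₀ : ℕ} {C₀ : ℝ} (hC₀ : 1000 ≤ C₀) {q q' : ℤ × ℤ × ℤ}
    (hq : memLambda0 E k₀ C₀ q) (hq' : memLambda0 E k₀ C₀ q')
    (hc : ∀ i : Fin 2, |cc q' i - cc q i| ≤ (9/16) * (dyadicLen q + dyadicLen q')) :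
    dyadicLen q / 8 < dyadicLen q' := by
  by_contra h
  push_neg at h
  refine key hC₀ hq hq' (parent_double_subset hc ?_) h
  linarith [len_pos q, len_pos q']

lemma len_le_of_lt {q q' : ℤ × ℤ × ℤ} (h : dyadicLen q / 8 < dyadicLen q') :
    dyadicLen q ≤ 4 * dyadicLen q' := by
  unfold dyadicLen at *
  have hk : q.2.2 - 3 < q'.2.2 := by
    refine (zpow_lt_zpow_iff_right₀ (by norm_num : (1:ℝ) < 2)).mp ?_
    calc (2:ℝ) ^ (q.2.2 - 3) = 2 ^ q.2.2 / 8 := by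
          rw [zpow_sub₀ (by norm_num : (2:ℝ) ≠ 0)]; norm_num
      _ < 2 ^ q'.2.2 := h
  have h4 : (2:ℝ) ^ (q.2.2 - 2) ≤ 2 ^ q'.2.2 :=
    (zpow_le_zpow_iff_right₀ (by norm_num : (1:ℝ) < 2)).mpr (by omega)
  have he : (2:ℝ) ^ (q.2.2 - 2) = 2 ^ q.2.2 / 4 := by
    rw [zpow_sub₀ (by norm_num : (2:ℝ) ≠ 0)]; norm_num
  rw [he] at h4
  linarith

lemma closure_sq_subset (q : ℤ × ℤ × ℤ) :
    closure (dyadicSq q) ⊆ {x : E2 | ∀ i : Fin 2, |x i - cc q i| ≤ dyadicLen q / 2} := by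
  apply closure_minimal
  · intro x hx i
    obtain ⟨h1, h2⟩ := hx i
    rw [dyadicCenter_apply] at h1 h2
    rw [abs_le]; constructor <;> linarith
  · have : {x : E2 | ∀ i : Fin 2, |x i - cc q i| ≤ dyadicLen q / 2} =
        ⋂ i : Fin 2, {x : E2 | |x i - cc q i| ≤ dyadicLen q / 2} := by
      ext x; simp [Set.mem_iInter]
    rw [this]
    refine isClosed_iInter fun i => ?_
    have hcont : Continuous fun x : E2 => |x i - cc q i| :=
      (((EuclideanSpace.proj i : E2 →L[ℝ] ℝ).continuous).sub continuous_const).abs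
    exact isClosed_le hcont continuous_const

lemma edge_odd (q : ℤ × ℤ × ℤ) (i : Fin 2) {s : ℝ}
    (hs : s = cc q i - dyadicLen q ∨ s = cc q i + dyadicLen q) :
    ∃ o : ℤ, Odd o ∧ s = 2 ^ (q.2.2 - 1) * (o:ℝ) := by
  have h2 : (2:ℝ) ^ (q.2.2 - 1) = 2 ^ q.2.2 / 2 := by
    rw [zpow_sub_one₀ (by norm_num : (2:ℝ) ≠ 0)]; ring
  rcases hs with h | h
  · exact ⟨2 * cind q i - 1, ⟨cind q i - 1, by ring⟩, by
      rw [h, h2]; unfold cc dyadicLen; push_cast; ring⟩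
  · exact ⟨2 * cind q i + 3, ⟨cind q i + 1, by ring⟩, by
      rw [h, h2]; unfold cc dyadicLen; push_cast; ring⟩

lemma grid_sep {k k' m : ℤ} {o o' : ℤ} (ho : Odd o) (ho' : Odd o') (hne : k ≠ k')
    (hk : m ≤ k) (hk' : m ≤ k') :
    (2:ℝ) ^ (m - 1) ≤ |2 ^ (k - 1) * (o:ℝ) - 2 ^ (k' - 1) * (o':ℝ)| := by
  wlog h : k' < k generalizing k k' o o'
  · rw [abs_sub_comm]
    exact this ho' ho hne.symm hk' hk (by omega)
  set d := (k - k').toNat with hd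
  have hd1 : 1 ≤ d := by omega
  have hdk : k - 1 = (k' - 1) + (d:ℤ) := by omega
  have hsplit : (2:ℝ) ^ (k - 1) = 2 ^ (k' - 1) * 2 ^ (d:ℕ) := by
    rw [hdk, zpow_add₀ (by norm_num : (2:ℝ) ≠ 0), zpow_natCast]
  set N : ℤ := 2 ^ d * o - o' with hN
  have hNodd : Odd N := by
    obtain ⟨t, ht⟩ := ho'
    have : (2:ℤ)^d = 2 * 2^(d-1) := by
      rw [← pow_succ']
      congr 1; omega
    exact ⟨2^(d-1) * o - t - 1, by rw [hN, this, ht]; ring⟩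
  have hN1 : 1 ≤ |N| := by
    refine Int.one_le_abs ?_
    rcases hNodd with ⟨t, ht⟩
    omega
  have hfac : 2 ^ (k - 1) * (o:ℝ) - 2 ^ (k' - 1) * (o':ℝ) = 2 ^ (k' - 1) * (N:ℝ) := by
    rw [hsplit, hN]
    push_cast
    ring
  rw [hfac, abs_mul, abs_of_pos (show (0:ℝ) < 2 ^ (k'-1) by positivity)]
  have h1 : (1:ℝ) ≤ |(N:ℝ)| := by exact_mod_cast (by exact_mod_cast hN1 : (1:ℤ) ≤ |N|)
  have h2 : (2:ℝ) ^ (m - 1) ≤ 2 ^ (k' - 1) :=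
    (zpow_le_zpow_iff_right₀ (by norm_num : (1:ℝ) < 2)).mpr (by omega)
  nlinarith [show (0:ℝ) < 2 ^ (k'-1) by positivity]

end CZaux
namespace CZaux

lemma dyadicLen_def (q : ℤ × ℤ × ℤ) : dyadicLen q = (2:ℝ) ^ q.2.2 := rfl

lemma witness_near {q : ℤ × ℤ × ℤ} {z y : E2} (hz : z ∈ dilate q 2)
    (hy : y ∈ dilate (dyadicParent q) 2) (i : Fin 2) :
    |y i - z i| < (7/2) * dyadicLen q := by
  rw [mem_dilate] at hz hy
  obtain ⟨hz1, hz2⟩ := hz i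
  obtain ⟨hy1, hy2⟩ := hy i
  have hp := parent_cc q i
  rw [len_parent] at hy1 hy2
  rw [abs_le] at hp
  rw [abs_lt]
  have := len_pos q
  constructor <;> linarith

lemma zpow_le_zpow_two {a b : ℤ} (h : a ≤ b) : (2:ℝ) ^ a ≤ 2 ^ b :=
  (zpow_le_zpow_iff_right₀ (by norm_num : (1:ℝ) < 2)).mpr h

lemma no_four {E : Set E2} {k₀ : ℕ} {C₀ : ℝ} (hC₀ : 1000 ≤ C₀) {z : E2}
    {q₁ q₂ q₃ q₄ : ℤ × ℤ × ℤ}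
    (h₁ : memLambda0 E k₀ C₀ q₁) (h₂ : memLambda0 E k₀ C₀ q₂)
    (h₃ : memLambda0 E k₀ C₀ q₃) (h₄ : memLambda0 E k₀ C₀ q₄)
    (hz₁ : z ∈ dilate q₁ 2) (hz₂ : z ∈ dilate q₂ 2)
    (hz₃ : z ∈ dilate q₃ 2) (hz₄ : z ∈ dilate q₄ 2)
    (h12 : q₂.2.2 < q₁.2.2) (h23 : q₃.2.2 < q₂.2.2) (h34 : q₄.2.2 + 4 ≤ q₃.2.2) : False := by
  obtain ⟨-, -, y, hy, hDy⟩ := h₄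
  have hyz : ∀ i : Fin 2, |y i - z i| < (7/2) * dyadicLen q₄ := witness_near hz₄ hy
  have hδ₄ : 0 < dyadicLen q₄ := len_pos q₄
  -- the important points are near an edge of each larger square
  have H : ∀ q' : ℤ × ℤ × ℤ, memLambda0 E k₀ C₀ q' → z ∈ dilate q' 2 →
      q₄.2.2 + 2 ≤ q'.2.2 →
      ∃ i : Fin 2, ∃ o : ℤ, Odd o ∧
        |z i - 2 ^ (q'.2.2 - 1) * (o:ℝ)| < (7/2) * dyadicLen q₄ := by
    intro q' hq' hzq' hkq'
    have hynot : y ∉ dilate q' 2 := by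
      intro hmem
      have hD := hq'.2.1 y hmem
      have hlen : 4 * dyadicLen q₄ ≤ dyadicLen q' := by
        have : (2:ℝ) ^ (q₄.2.2 + 2) ≤ 2 ^ q'.2.2 := zpow_le_zpow_two hkq'
        rw [zpow_add₀ (by norm_num : (2:ℝ) ≠ 0)] at this
        rw [dyadicLen_def, dyadicLen_def]
        norm_num at this
        linarith
      have hq'pos : 0 < dyadicLen q' := len_pos q'
      nlinarith [mul_pos (show (0:ℝ) < C₀ by linarith) hq'pos,
        mul_nonneg (show (0:ℝ) ≤ C₀ by linarith)
          (show (0:ℝ) ≤ dyadicLen q' / 4 - dyadicLen q₄ by linarith)]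
    rw [mem_dilate] at hynot
    push_neg at hynot
    obtain ⟨i, hni⟩ := hynot
    rw [mem_dilate] at hzq'
    obtain ⟨hzl, hzr⟩ := hzq' i
    have hyzi := hyz i
    rw [abs_lt] at hyzi
    rcases lt_or_ge (y i) (cc q' i - 2 * dyadicLen q' / 2) with hcase | hcase
    · obtain ⟨o, ho, hoe⟩ := edge_odd q' i (Or.inl rfl : cc q' i - dyadicLen q' = _ ∨ _)
      refine ⟨i, o, ho, ?_⟩
      rw [← hoe, abs_lt]
      constructor <;> linarith
    · have hge := hni hcase
      obtain ⟨o, ho, hoe⟩ := edge_odd q' i (Or.inr rfl : _ ∨ cc q' i + dyadicLen q' = _)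
      refine ⟨i, o, ho, ?_⟩
      rw [← hoe, abs_lt]
      constructor <;> linarith
  obtain ⟨i₁, o₁, ho₁, hv₁⟩ := H q₁ h₁ hz₁ (by omega)
  obtain ⟨i₂, o₂, ho₂, hv₂⟩ := H q₂ h₂ hz₂ (by omega)
  obtain ⟨i₃, o₃, ho₃, hv₃⟩ := H q₃ h₃ hz₃ (by omega)
  have final : ∀ (ka kb oa ob : ℤ), Odd oa → Odd ob → ka ≠ kb →
      q₃.2.2 ≤ ka → q₃.2.2 ≤ kb → ∀ i : Fin 2,
      |z i - 2 ^ (ka - 1) * (oa:ℝ)| < (7/2) * dyadicLen q₄ →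
      |z i - 2 ^ (kb - 1) * (ob:ℝ)| < (7/2) * dyadicLen q₄ → False := by
    intro ka kb oa ob hoa hob hne hka hkb i ha hb
    have hg := grid_sep (m := q₃.2.2) hoa hob hne hka hkb
    have htri : |2 ^ (ka - 1) * (oa:ℝ) - 2 ^ (kb - 1) * (ob:ℝ)| ≤
        |z i - 2 ^ (ka - 1) * (oa:ℝ)| + |z i - 2 ^ (kb - 1) * (ob:ℝ)| := by
      rw [abs_sub_comm (z i)]
      exact abs_sub_le _ _ _
    have hbig : 8 * dyadicLen q₄ ≤ (2:ℝ) ^ (q₃.2.2 - 1) := by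
      have : (2:ℝ) ^ (q₄.2.2 + 3) ≤ 2 ^ (q₃.2.2 - 1) := zpow_le_zpow_two (by omega)
      rw [zpow_add₀ (by norm_num : (2:ℝ) ≠ 0)] at this
      rw [dyadicLen_def]
      norm_num at this
      linarith
    linarith
  have hii : i₁ = i₂ ∨ i₁ = i₃ ∨ i₂ = i₃ := by
    have a1 := i₁.isLt
    have a2 := i₂.isLt
    have a3 := i₃.isLt
    have : i₁.val = i₂.val ∨ i₁.val = i₃.val ∨ i₂.val = i₃.val := by omega
    rcases this with h | h | h
    · exact Or.inl (Fin.ext h)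
    · exact Or.inr (Or.inl (Fin.ext h))
    · exact Or.inr (Or.inr (Fin.ext h))
  rcases hii with h | h | h
  · exact final q₁.2.2 q₂.2.2 o₁ o₂ ho₁ ho₂ (by omega) (by omega) (by omega) i₂ (h ▸ hv₁) hv₂
  · exact final q₁.2.2 q₃.2.2 o₁ o₃ ho₁ ho₃ (by omega) (by omega) (by omega) i₃ (h ▸ hv₁) hv₃
  · exact final q₂.2.2 q₃.2.2 o₂ o₃ ho₂ ho₃ (by omega) (by omega) (by omega) i₃ (h ▸ hv₂) hv₃

end CZaux
namespace CZaux

lemma int_in_Icc {n k : ℤ} {r : ℝ} (h1 : (2:ℝ)^k * ((n:ℝ) - 1/2) ≤ r)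
    (h2 : r < (2:ℝ)^k * ((n:ℝ) + 3/2)) :
    n ∈ Finset.Icc (⌊r / 2^k + 1/2⌋ - 1) ⌊r / 2^k + 1/2⌋ := by
  have hp : (0:ℝ) < 2^k := by positivity
  have ht1 : (n:ℝ) - 1/2 ≤ r / 2^k := (le_div_iff₀ hp).mpr (by linarith [h1, mul_comm ((2:ℝ)^k) ((n:ℝ) - 1/2)])
  have ht2 : r / 2^k < (n:ℝ) + 3/2 := (div_lt_iff₀ hp).mpr (by linarith [mul_comm ((2:ℝ)^k) ((n:ℝ) + 3/2)])
  rw [Finset.mem_Icc]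
  constructor
  · have hfl : (⌊r / 2^k + 1/2⌋ : ℝ) ≤ r / 2^k + 1/2 := Int.floor_le _
    have : (⌊r / 2^k + 1/2⌋ : ℝ) < ((n:ℤ) : ℝ) + 2 := by push_cast; linarith
    have : ⌊r / 2^k + 1/2⌋ < n + 2 := by exact_mod_cast this
    omega
  · exact Int.le_floor.mpr (by push_cast; linarith)

lemma point_finset {E : Set E2} {k₀ : ℕ} {C₀ : ℝ} (hC₀ : 1000 ≤ C₀) (z : E2) :
    ∃ T : Finset (ℤ × ℤ × ℤ), T.card ≤ 24 ∧
      {q : ℤ × ℤ × ℤ | memLambda0 E k₀ C₀ q ∧ z ∈ dilate q 2} ⊆ ↑T := by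
  set A := {q : ℤ × ℤ × ℤ | memLambda0 E k₀ C₀ q ∧ z ∈ dilate q 2} with hA
  set K := (fun q : ℤ × ℤ × ℤ => q.2.2) '' A with hK
  have hK7 : ∀ S : Finset ℤ, ↑S ⊆ K → S.card ≤ 6 := by
    intro S hS
    by_contra hcard
    push_neg at hcard
    obtain ⟨S', hS'sub, hS'card⟩ := Finset.exists_subset_card_eq (by omega : 7 ≤ S.card)
    set f := S'.orderEmbOfFin hS'card with hf
    have hmem : ∀ j : Fin 7, ∃ q ∈ A, q.2.2 = f j := by
      intro j
      have : (f j : ℤ) ∈ K := hS (hS'sub (S'.orderEmbOfFin_mem hS'card j))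
      obtain ⟨q, hq, hqe⟩ := this
      exact ⟨q, hq, hqe⟩
    obtain ⟨q₁, hq₁, he₁⟩ := hmem 6
    obtain ⟨q₂, hq₂, he₂⟩ := hmem 5
    obtain ⟨q₃, hq₃, he₃⟩ := hmem 4
    obtain ⟨q₄, hq₄, he₄⟩ := hmem 0
    have hm : ∀ i j : Fin 7, i < j → f i < f j := fun i j hij => f.strictMono hij
    have g01 : f 0 < f 1 := hm 0 1 (by decide)
    have g12 : f 1 < f 2 := hm 1 2 (by decide)
    have g23 : f 2 < f 3 := hm 2 3 (by decide)
    have g34 : f 3 < f 4 := hm 3 4 (by decide)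
    have g45 : f 4 < f 5 := hm 4 5 (by decide)
    have g56 : f 5 < f 6 := hm 5 6 (by decide)
    exact no_four hC₀ hq₁.1 hq₂.1 hq₃.1 hq₄.1 hq₁.2 hq₂.2 hq₃.2 hq₄.2
      (by omega) (by omega) (by omega)
  have hKfin : K.Finite := by
    by_contra hinf
    obtain ⟨S, hSsub, hScard⟩ := (show K.Infinite from hinf).exists_subset_card_eq 7
    have := hK7 S hSsub
    omega
  have hKcard : hKfin.toFinset.card ≤ 6 := hK7 _ (by simp)
  refine ⟨hKfin.toFinset.biUnion (fun k =>
    ((Finset.Icc (⌊z 0 / 2^k + 1/2⌋ - 1) ⌊z 0 / 2^k + 1/2⌋) ×ˢ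
     (Finset.Icc (⌊z 1 / 2^k + 1/2⌋ - 1) ⌊z 1 / 2^k + 1/2⌋)).image
      (fun p => (p.1, p.2, k))), ?_, ?_⟩
  · refine le_trans (Finset.card_biUnion_le) ?_
    have hterm : ∀ k ∈ hKfin.toFinset,
        (((Finset.Icc (⌊z 0 / 2^k + 1/2⌋ - 1) ⌊z 0 / 2^k + 1/2⌋) ×ˢ
          (Finset.Icc (⌊z 1 / 2^k + 1/2⌋ - 1) ⌊z 1 / 2^k + 1/2⌋)).image
           (fun p => ((p.1, p.2, k) : ℤ × ℤ × ℤ))).card ≤ 4 := by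
      intro k _
      refine le_trans Finset.card_image_le ?_
      rw [Finset.card_product, Int.card_Icc, Int.card_Icc]
      have : (⌊z 0 / 2^k + 1/2⌋ + 1 - (⌊z 0 / 2^k + 1/2⌋ - 1)).toNat = 2 := by omega
      rw [this]
      have : (⌊z 1 / 2^k + 1/2⌋ + 1 - (⌊z 1 / 2^k + 1/2⌋ - 1)).toNat = 2 := by omega
      rw [this]
    calc _ ≤ hKfin.toFinset.card * 4 := by
          refine le_trans (Finset.sum_le_card_nsmul _ _ 4 hterm) (by simp [mul_comm])
      _ ≤ 24 := by omega
  · rintro ⟨n₁, n₂, k⟩ ⟨hmem, hz⟩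
    rw [Finset.mem_coe, Finset.mem_biUnion]
    refine ⟨k, hKfin.mem_toFinset.mpr ⟨(n₁, n₂, k), ⟨hmem, hz⟩, rfl⟩, ?_⟩
    rw [Finset.mem_image]
    refine ⟨(n₁, n₂), ?_, rfl⟩
    rw [mem_dilate] at hz
    obtain ⟨ha0, hb0⟩ := hz 0
    obtain ⟨ha1, hb1⟩ := hz 1
    have hc0 : cc (n₁, n₂, k) 0 = (2:ℝ)^k * ((n₁:ℝ) + 1/2) := by simp [cc, cind]
    have hc1 : cc (n₁, n₂, k) 1 = (2:ℝ)^k * ((n₂:ℝ) + 1/2) := by simp [cc, cind]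
    have hlen : dyadicLen (n₁, n₂, k) = (2:ℝ)^k := rfl
    rw [Finset.mem_product]
    constructor
    · exact int_in_Icc (by rw [hc0, hlen] at ha0; linarith [ha0]; ) (by rw [hc0, hlen] at hb0; linarith)
    · exact int_in_Icc (by rw [hc1, hlen] at ha1; linarith) (by rw [hc1, hlen] at hb1; linarith)

end CZaux
namespace CZaux

lemma k_lb {q q' : ℤ × ℤ × ℤ} (h : dyadicLen q / 8 < dyadicLen q') :
    q.2.2 - 2 ≤ q'.2.2 := by
  have hk : q.2.2 - 3 < q'.2.2 := by
    refine (zpow_lt_zpow_iff_right₀ (by norm_num : (1:ℝ) < 2)).mp ?_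
    calc (2:ℝ) ^ (q.2.2 - 3) = 2 ^ q.2.2 / 8 := by
          rw [zpow_sub₀ (by norm_num : (2:ℝ) ≠ 0)]; norm_num
      _ < 2 ^ q'.2.2 := h
  omega

lemma coord_bound {k k' n n' : ℤ} (hk1 : k - 2 ≤ k') (hk2 : k' ≤ k + 2)
    (h : |(2:ℝ)^k' * ((n':ℝ) + 1/2) - 2^k * ((n:ℝ) + 1/2)| ≤ (9/16) * (2^k + 2^k')) :
    |(2:ℤ)^((k' - k + 2).toNat) * (2*n' + 1) - 4*(2*n + 1)| ≤ 23 := by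
  set u := (k' - k + 2).toNat with hu
  have huz : (u:ℤ) = k' - k + 2 := Int.toNat_of_nonneg (by omega)
  have hu4 : u ≤ 4 := by omega
  have hp : (0:ℝ) < 2^((3:ℤ)-k) := by positivity
  have hmul : |((2:ℝ)^k' * ((n':ℝ) + 1/2) - 2^k * ((n:ℝ) + 1/2)) * 2^((3:ℤ)-k)|
      ≤ (9/16) * ((2:ℝ)^k + 2^k') * 2^((3:ℤ)-k) := by
    rw [abs_mul, abs_of_pos hp]
    exact mul_le_mul_of_nonneg_right h (le_of_lt hp)
  have e1 : (2:ℝ)^k' * (2:ℝ)^((3:ℤ)-k) = 2 * (2:ℝ)^u := by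
    rw [← zpow_add₀ (by norm_num : (2:ℝ) ≠ 0)]
    rw [show k' + ((3:ℤ)-k) = (u:ℤ) + 1 by omega]
    rw [zpow_add_one₀ (by norm_num : (2:ℝ) ≠ 0), zpow_natCast]
    ring
  have e2 : (2:ℝ)^k * (2:ℝ)^((3:ℤ)-k) = 8 := by
    rw [← zpow_add₀ (by norm_num : (2:ℝ) ≠ 0)]
    rw [show k + ((3:ℤ)-k) = (3:ℤ) by ring]
    norm_num
  have hL : ((2:ℝ)^k' * ((n':ℝ) + 1/2) - 2^k * ((n:ℝ) + 1/2)) * 2^((3:ℤ)-k)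
      = (((2:ℤ)^u * (2*n' + 1) - 4*(2*n + 1) : ℤ) : ℝ) := by
    calc ((2:ℝ)^k' * ((n':ℝ) + 1/2) - 2^k * ((n:ℝ) + 1/2)) * 2^((3:ℤ)-k)
        = ((2:ℝ)^k' * 2^((3:ℤ)-k)) * ((n':ℝ) + 1/2)
          - ((2:ℝ)^k * 2^((3:ℤ)-k)) * ((n:ℝ) + 1/2) := by ring
      _ = 2 * (2:ℝ)^u * ((n':ℝ) + 1/2) - 8 * ((n:ℝ) + 1/2) := by rw [e1, e2]
      _ = _ := by push_cast; ring
  have hR : (9/16) * ((2:ℝ)^k + 2^k') * 2^((3:ℤ)-k) ≤ 23 := by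
    have e3 : ((2:ℝ)^k + 2^k') * 2^((3:ℤ)-k) = 8 + 2 * (2:ℝ)^u := by
      rw [add_mul, e1, e2]
    have h16 : (2:ℝ)^u ≤ 16 := by
      calc (2:ℝ)^u ≤ 2^4 := pow_le_pow_right₀ (by norm_num) hu4
        _ = 16 := by norm_num
    calc (9/16) * ((2:ℝ)^k + 2^k') * 2^((3:ℤ)-k) = (9/16) * (8 + 2 * (2:ℝ)^u) := by
          rw [mul_assoc, e3]
      _ ≤ 23 := by linarith
  rw [hL] at hmul
  have hfin : |(((2:ℤ)^u * (2*n' + 1) - 4*(2*n + 1) : ℤ) : ℝ)| ≤ 23 := le_trans hmul hR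
  rw [← Int.cast_abs] at hfin
  exact_mod_cast hfin

lemma centers_close_of_dilate {q q' : ℤ × ℤ × ℤ}
    (hint : (dilate q' (9/8) ∩ dilate q (9/8)).Nonempty) :
    ∀ i : Fin 2, |cc q' i - cc q i| ≤ (9/16) * (dyadicLen q + dyadicLen q') := by
  obtain ⟨p, hp', hp⟩ := hint
  rw [mem_dilate] at hp hp'
  intro i
  obtain ⟨h1, h2⟩ := hp i
  obtain ⟨h3, h4⟩ := hp' i
  rw [abs_le]
  constructor <;> linarith

lemma neighbor_count {E : Set E2} {k₀ : ℕ} {C₀ : ℝ} (hC₀ : 1000 ≤ C₀)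
    (q : ℤ × ℤ × ℤ) (hq : q ∈ Lambda0 E k₀ C₀) :
    {q' | q' ∈ Lambda0 E k₀ C₀ ∧ (dilate q' (9/8) ∩ dilate q (9/8)).Nonempty}.ncard ≤ 11045 := by
  set S := {q' | q' ∈ Lambda0 E k₀ C₀ ∧ (dilate q' (9/8) ∩ dilate q (9/8)).Nonempty} with hS
  set ψ : ℤ × ℤ × ℤ → ℤ × ℤ × ℤ := fun q' =>
    (q'.2.2 - q.2.2,
     (2:ℤ)^((q'.2.2 - q.2.2 + 2).toNat) * (2*q'.1 + 1) - 4*(2*q.1 + 1),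
     (2:ℤ)^((q'.2.2 - q.2.2 + 2).toNat) * (2*q'.2.1 + 1) - 4*(2*q.2.1 + 1)) with hψ
  set T : Finset (ℤ × ℤ × ℤ) :=
    (Finset.Icc (-2:ℤ) 2) ×ˢ ((Finset.Icc (-23:ℤ) 23) ×ˢ (Finset.Icc (-23:ℤ) 23)) with hT
  have hmaps : ∀ q' ∈ S, ψ q' ∈ (↑T : Set (ℤ × ℤ × ℤ)) := by
    rintro q' ⟨hq', hint⟩
    have hc := centers_close_of_dilate hint
    have hc' : ∀ i : Fin 2, |cc q i - cc q' i| ≤ (9/16) * (dyadicLen q' + dyadicLen q) := by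
      intro i
      rw [abs_sub_comm, add_comm (dyadicLen q')]
      exact hc i
    have h1 : dyadicLen q / 8 < dyadicLen q' := not_small hC₀ hq hq' hc
    have h2 : dyadicLen q' / 8 < dyadicLen q := not_small hC₀ hq' hq hc'
    have hk1 : q.2.2 - 2 ≤ q'.2.2 := k_lb h1
    have hk2 : q'.2.2 - 2 ≤ q.2.2 := k_lb h2
    have hb0 := hc 0
    have hb1 := hc 1
    have hcc0 : cc q' 0 = (2:ℝ)^q'.2.2 * ((q'.1:ℝ) + 1/2) := by simp [cc, cind]
    have hcc0' : cc q 0 = (2:ℝ)^q.2.2 * ((q.1:ℝ) + 1/2) := by simp [cc, cind]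
    have hcc1 : cc q' 1 = (2:ℝ)^q'.2.2 * ((q'.2.1:ℝ) + 1/2) := by simp [cc, cind]
    have hcc1' : cc q 1 = (2:ℝ)^q.2.2 * ((q.2.1:ℝ) + 1/2) := by simp [cc, cind]
    rw [hcc0, hcc0', dyadicLen_def, dyadicLen_def] at hb0
    rw [hcc1, hcc1', dyadicLen_def, dyadicLen_def] at hb1
    have hA := coord_bound (by omega) (by omega) hb0
    have hB := coord_bound (by omega) (by omega) hb1
    rw [abs_le] at hA hB
    rw [Finset.mem_coe, hT, Finset.mem_product, Finset.mem_product]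
    simp only [hψ]
    refine ⟨Finset.mem_Icc.mpr (by omega), Finset.mem_Icc.mpr (by omega),
      Finset.mem_Icc.mpr (by omega)⟩
  have hinj : Set.InjOn ψ S := by
    rintro ⟨a₁, b₁, k₁⟩ - ⟨a₂, b₂, k₂⟩ - h
    simp only [hψ, Prod.mk.injEq] at h
    obtain ⟨e1, e2, e3⟩ := h
    have hk : k₁ = k₂ := by omega
    subst hk
    have hpow : (0:ℤ) < 2^((k₁ - q.2.2 + 2).toNat) := by positivity
    have ha : a₁ = a₂ := by
      have : (2:ℤ)^((k₁ - q.2.2 + 2).toNat) * (2*a₁ + 1) =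
             (2:ℤ)^((k₁ - q.2.2 + 2).toNat) * (2*a₂ + 1) := by omega
      have := mul_left_cancel₀ (ne_of_gt hpow) this
      omega
    have hb : b₁ = b₂ := by
      have : (2:ℤ)^((k₁ - q.2.2 + 2).toNat) * (2*b₁ + 1) =
             (2:ℤ)^((k₁ - q.2.2 + 2).toNat) * (2*b₂ + 1) := by omega
      have := mul_left_cancel₀ (ne_of_gt hpow) this
      omega
    simp [ha, hb]
  have := Set.ncard_le_ncard_of_injOn ψ hmaps hinj T.finite_toSet
  rw [Set.ncard_coe_finset] at this
  refine le_trans this ?_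
  rw [hT]
  simp [Finset.card_product, Int.card_Icc]

lemma part1 {E : Set E2} {k₀ : ℕ} {C₀ : ℝ} (hC₀ : 1000 ≤ C₀) {q q' : ℤ × ℤ × ℤ}
    (hq : q ∈ Lambda0 E k₀ C₀) (hq' : q' ∈ Lambda0 E k₀ C₀)
    (hint : (closure (dyadicSq q) ∩ closure (dyadicSq q')).Nonempty) :
    dyadicLen q / 4 ≤ dyadicLen q' ∧ dyadicLen q' ≤ 4 * dyadicLen q := by
  obtain ⟨p, hp, hp'⟩ := hint
  have hb := closure_sq_subset q hp
  have hb' := closure_sq_subset q' hp'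
  have hc : ∀ i : Fin 2, |cc q' i - cc q i| ≤ (9/16) * (dyadicLen q + dyadicLen q') := by
    intro i
    have h1 := hb i
    have h2 := hb' i
    rw [abs_le] at h1 h2 ⊢
    have := len_pos q
    have := len_pos q'
    constructor <;> linarith
  have hc' : ∀ i : Fin 2, |cc q i - cc q' i| ≤ (9/16) * (dyadicLen q' + dyadicLen q) := by
    intro i
    rw [abs_sub_comm, add_comm (dyadicLen q')]
    exact hc i
  have h1 : dyadicLen q / 8 < dyadicLen q' := not_small hC₀ hq hq' hc
  have h2 : dyadicLen q' / 8 < dyadicLen q := not_small hC₀ hq' hq hc'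
  have g1 := len_le_of_lt h1
  have g2 := len_le_of_lt h2
  constructor <;> linarith

end CZaux
/-- Basic properties of the Calderón–Zygmund squares:
good geometry of neighbours, bounded intersection, and `#(Λ^♯) ≤ C·#(E)`. -/
theorem CZ_squares_properties :
    ∀ (k₀ : ℕ) (C₀ : ℝ), 4 ≤ k₀ → 1000 ≤ C₀ →
      ∃ C : ℕ,
        ∀ E : Set E2, E.Finite →
          (∀ q ∈ Lambda0 E k₀ C₀, ∀ q' ∈ Lambda0 E k₀ C₀,
            (closure (dyadicSq q) ∩ closure (dyadicSq q')).Nonempty →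
              dyadicLen q / 4 ≤ dyadicLen q' ∧ dyadicLen q' ≤ 4 * dyadicLen q) ∧
          (∀ q ∈ Lambda0 E k₀ C₀,
            {q' | q' ∈ Lambda0 E k₀ C₀ ∧
              (dilate q' (9 / 8) ∩ dilate q (9 / 8)).Nonempty}.ncard ≤ C) ∧
          (LambdaSharp E k₀ C₀).ncard ≤ C * E.ncard := by
  intro k₀ C₀ hk₀ hC₀
  refine ⟨20000, fun E hE => ⟨?_, ?_, ?_⟩⟩
  · intro q hq q' hq' hint
    exact CZaux.part1 hC₀ hq hq' hint
  · intro q hq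
    exact le_trans (CZaux.neighbor_count hC₀ q hq) (by norm_num)
  · choose T hTcard hTsub using fun z : E2 => CZaux.point_finset (E := E) (k₀ := k₀) hC₀ z
    set U : Finset (ℤ × ℤ × ℤ) := hE.toFinset.biUnion T with hU
    have hsub : LambdaSharp E k₀ C₀ ⊆ ↑U := by
      rintro q ⟨hq0, z, hzE, hzq⟩
      rw [Finset.mem_coe, hU, Finset.mem_biUnion]
      exact ⟨z, hE.mem_toFinset.mpr hzE, hTsub z ⟨hq0, hzq⟩⟩
    have h1 : (LambdaSharp E k₀ C₀).ncard ≤ U.card := by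
      have := Set.ncard_le_ncard hsub U.finite_toSet
      rwa [Set.ncard_coe_finset] at this
    have h2 : U.card ≤ hE.toFinset.card * 24 := by
      refine le_trans (Finset.card_biUnion_le) ?_
      refine le_trans (Finset.sum_le_card_nsmul _ _ 24 fun z _ => hTcard z) (by simp [mul_comm])
    have h3 : hE.toFinset.card = E.ncard := (Set.ncard_eq_toFinset_card _ hE).symm
    rw [h3] at h2
    calc (LambdaSharp E k₀ C₀).ncard ≤ E.ncard * 24 := le_trans h1 h2
      _ ≤ 20000 * E.ncard := by omega

end
end

section
/- Fix constants k₀ ≥ 4 and C₀ ≥ 1000 and let E ⊂ ℝ² be finite. There is a universal constant c₀ > 0 such that for every Q ∈ Λ₀ there exists a point x_Q^♯ ∈ Q with dist(x_Q^♯, E) ≥ c₀δ_Q. -/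
open Set Real Pointwise

noncomputable section

namespace CZaux

lemma decomp (v : E2) :
    v = v 0 • EuclideanSpace.single 0 1 + v 1 • EuclideanSpace.single 1 1 := by
  ext i
  fin_cases i <;> simp [EuclideanSpace.single_apply]

lemma abs_coord_le (v : E2) (i : Fin 2) : |v i| ≤ ‖v‖ := by
  rw [EuclideanSpace.norm_eq]
  have h1 : |v i| = Real.sqrt (‖v i‖ ^ 2) := by
    rw [Real.sqrt_sq_eq_abs]; simp
  rw [h1]
  apply Real.sqrt_le_sqrt
  exact Finset.single_le_sum (f := fun j => ‖v j‖ ^ 2) (fun j _ => by positivity)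
    (Finset.mem_univ i)

lemma opnorm_le (L : E2 →L[ℝ] ℝ) :
    ‖L‖ ≤ |L (EuclideanSpace.single 0 1)| + |L (EuclideanSpace.single 1 1)| := by
  apply ContinuousLinearMap.opNorm_le_bound _ (by positivity)
  intro v
  have := decomp v
  calc ‖L v‖ = |v 0 * L (EuclideanSpace.single 0 1) + v 1 * L (EuclideanSpace.single 1 1)| := by
        conv_lhs => rw [this]
        simp [Real.norm_eq_abs, smul_eq_mul]
    _ ≤ |v 0| * |L (EuclideanSpace.single 0 1)| + |v 1| * |L (EuclideanSpace.single 1 1)| := by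
        refine (abs_add_le _ _).trans ?_; rw [abs_mul, abs_mul]
    _ ≤ ‖v‖ * |L (EuclideanSpace.single 0 1)| + ‖v‖ * |L (EuclideanSpace.single 1 1)| := by
        gcongr <;> [exact abs_coord_le v 0; exact abs_coord_le v 1]
    _ = (|L (EuclideanSpace.single 0 1)| + |L (EuclideanSpace.single 1 1)|) * ‖v‖ := by ring

lemma apply_eq (L : E2 →L[ℝ] ℝ) (v : E2) :
    L v = v 0 * L (EuclideanSpace.single 0 1) + v 1 * L (EuclideanSpace.single 1 1) := by
  conv_lhs => rw [decomp v]
  simp [smul_eq_mul]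

lemma diff_fderiv {ψ : E2 → ℝ} (hψ : ContDiff ℝ 2 ψ) : Differentiable ℝ (fderiv ℝ ψ) :=
  (hψ.fderiv_right (m := 1) (by norm_num)).differentiable one_ne_zero

lemma pd_eq {ψ : E2 → ℝ} (i : Fin 2) :
    pd i ψ = fun y => (ContinuousLinearMap.apply ℝ ℝ (EuclideanSpace.single i 1))
      (fderiv ℝ ψ y) := rfl

lemma diff_pd {ψ : E2 → ℝ} (hψ : ContDiff ℝ 2 ψ) (i : Fin 2) : Differentiable ℝ (pd i ψ) := by
  rw [pd_eq]
  exact (ContinuousLinearMap.apply ℝ ℝ (EuclideanSpace.single i 1)).differentiable.comp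
    (diff_fderiv hψ)

lemma fderiv_pd {ψ : E2 → ℝ} (hψ : ContDiff ℝ 2 ψ) (i : Fin 2) (x : E2) (w : E2) :
    fderiv ℝ (pd i ψ) x w
      = (fderiv ℝ (fderiv ℝ ψ) x w) (EuclideanSpace.single i 1) := by
  have h : HasFDerivAt (pd i ψ)
      ((ContinuousLinearMap.apply ℝ ℝ (EuclideanSpace.single i 1)).comp
        (fderiv ℝ (fderiv ℝ ψ) x)) x := by
    rw [pd_eq]
    exact (ContinuousLinearMap.apply ℝ ℝ (EuclideanSpace.single i 1)).hasFDerivAt.comp x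
      ((diff_fderiv hψ x).hasFDerivAt)
  rw [h.fderiv]; rfl

lemma snd_symm {ψ : E2 → ℝ} (hψ : ContDiff ℝ 2 ψ) (x v w : E2) :
    fderiv ℝ (fderiv ℝ ψ) x v w = fderiv ℝ (fderiv ℝ ψ) x w v :=
  second_derivative_symmetric
    (fun y => ((hψ.differentiable two_ne_zero) y).hasFDerivAt)
    ((diff_fderiv hψ x).hasFDerivAt) v w

lemma dmul_le {ψ : E2 → ℝ} (hn : C2NormLE ψ 1) (α : ℕ × ℕ) (hα : α ∈ multiIdx2) (x : E2) :
    |Dmul α ψ x| ≤ 1 := by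
  have h := hn x
  unfold C2sum at h
  set S := ∑ α ∈ multiIdx2, (Dmul α ψ x) ^ 2 with hS
  have hS0 : 0 ≤ S := Finset.sum_nonneg fun _ _ => sq_nonneg _
  have hS1 : S ≤ 1 := by
    have := Real.sq_sqrt hS0
    nlinarith [Real.sqrt_nonneg S]
  have hterm : (Dmul α ψ x) ^ 2 ≤ S :=
    Finset.single_le_sum (f := fun β => (Dmul β ψ x) ^ 2) (fun _ _ => sq_nonneg _) hα
  nlinarith [abs_nonneg (Dmul α ψ x), sq_abs (Dmul α ψ x)]

lemma dmul20 (ψ : E2 → ℝ) (x : E2) :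
    Dmul (2,0) ψ x = fderiv ℝ (pd 0 ψ) x (EuclideanSpace.single 0 1) := by
  show ((pd 0)^[2] ((pd 1)^[0] ψ)) x = _
  simp [Function.iterate_succ, Function.iterate_zero, pd]

lemma dmul11 (ψ : E2 → ℝ) (x : E2) :
    Dmul (1,1) ψ x = fderiv ℝ (pd 1 ψ) x (EuclideanSpace.single 0 1) := by
  show ((pd 0)^[1] ((pd 1)^[1] ψ)) x = _
  simp [pd]

lemma dmul02 (ψ : E2 → ℝ) (x : E2) :
    Dmul (0,2) ψ x = fderiv ℝ (pd 1 ψ) x (EuclideanSpace.single 1 1) := by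
  show ((pd 0)^[0] ((pd 1)^[2] ψ)) x = _
  simp [Function.iterate_succ, pd]

lemma hsecond {ψ : E2 → ℝ} (hψ : ContDiff ℝ 2 ψ) (hn : C2NormLE ψ 1) (x : E2) (i j : Fin 2) :
    |fderiv ℝ (pd i ψ) x (EuclideanSpace.single j 1)| ≤ 1 := by
  have hsec20 : |fderiv ℝ (pd 0 ψ) x (EuclideanSpace.single 0 1)| ≤ 1 := by
    rw [← dmul20]; exact dmul_le hn _ (by decide) x
  have hsec11 : |fderiv ℝ (pd 1 ψ) x (EuclideanSpace.single 0 1)| ≤ 1 := by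
    rw [← dmul11]; exact dmul_le hn _ (by decide) x
  have hsec02 : |fderiv ℝ (pd 1 ψ) x (EuclideanSpace.single 1 1)| ≤ 1 := by
    rw [← dmul02]; exact dmul_le hn _ (by decide) x
  fin_cases i <;> fin_cases j
  · exact hsec20
  · show |fderiv ℝ (pd 0 ψ) x (EuclideanSpace.single 1 1)| ≤ 1
    have h : fderiv ℝ (pd 0 ψ) x (EuclideanSpace.single 1 1)
        = fderiv ℝ (pd 1 ψ) x (EuclideanSpace.single 0 1) := by
      rw [fderiv_pd hψ, fderiv_pd hψ, snd_symm hψ]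
    rw [h]; exact hsec11
  · exact hsec11
  · exact hsec02

lemma pd_norm_le {ψ : E2 → ℝ} (hψ : ContDiff ℝ 2 ψ) (hn : C2NormLE ψ 1) (x : E2) (i : Fin 2) :
    ‖fderiv ℝ (pd i ψ) x‖ ≤ 2 := by
  refine (opnorm_le _).trans ?_
  have h0 := hsecond hψ hn x i 0
  have h1 := hsecond hψ hn x i 1
  linarith

lemma pd_lip {ψ : E2 → ℝ} (hψ : ContDiff ℝ 2 ψ) (hn : C2NormLE ψ 1) (i : Fin 2) (a b : E2) :
    |pd i ψ b - pd i ψ a| ≤ 2 * ‖b - a‖ := by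
  have := convex_univ.norm_image_sub_le_of_norm_fderiv_le
    (f := pd i ψ) (C := 2) (fun x _ => diff_pd hψ i x)
    (fun x _ => pd_norm_le hψ hn x i) (mem_univ a) (mem_univ b)
  simpa [Real.norm_eq_abs] using this

lemma grad_lip {ψ : E2 → ℝ} (hψ : ContDiff ℝ 2 ψ) (hn : C2NormLE ψ 1) (a b : E2) :
    ‖fderiv ℝ ψ b - fderiv ℝ ψ a‖ ≤ 4 * ‖b - a‖ := by
  refine (opnorm_le _).trans ?_
  have h0 : (fderiv ℝ ψ b - fderiv ℝ ψ a) (EuclideanSpace.single 0 1)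
      = pd 0 ψ b - pd 0 ψ a := rfl
  have h1 : (fderiv ℝ ψ b - fderiv ℝ ψ a) (EuclideanSpace.single 1 1)
      = pd 1 ψ b - pd 1 ψ a := rfl
  rw [h0, h1]
  have := pd_lip hψ hn 0 a b
  have := pd_lip hψ hn 1 a b
  linarith

lemma taylor1 {ψ : E2 → ℝ} (hψ : ContDiff ℝ 2 ψ) (hn : C2NormLE ψ 1) (a b : E2) :
    |ψ b - ψ a - fderiv ℝ ψ a (b - a)| ≤ 4 * ‖b - a‖ * ‖b - a‖ := by
  have hconv : Convex ℝ (Metric.closedBall a ‖b - a‖) := convex_closedBall _ _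
  have hmem_a : a ∈ Metric.closedBall a ‖b - a‖ := Metric.mem_closedBall_self (norm_nonneg _)
  have hmem_b : b ∈ Metric.closedBall a ‖b - a‖ := by
    simp [Metric.mem_closedBall, dist_eq_norm]
  have := hconv.norm_image_sub_le_of_norm_fderiv_le' (f := ψ) (φ := fderiv ℝ ψ a)
    (C := 4 * ‖b - a‖)
    (fun x _ => (hψ.differentiable two_ne_zero) x)
    (fun x hx => by
      refine (grad_lip hψ hn a x).trans ?_
      have : ‖x - a‖ ≤ ‖b - a‖ := by simpa [Metric.mem_closedBall, dist_eq_norm] using hx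
      nlinarith [norm_nonneg (x - a)])
    hmem_a hmem_b
  simpa [Real.norm_eq_abs] using this

set_option maxHeartbeats 2000000 in
lemma key_s14 {ψ : E2 → ℝ} (δ : ℝ) (hδ : 0 < δ) (hδ1 : δ ≤ 1) (c z₁ z₂ z₃ : E2)
    (hz1 : ‖c - z₁‖ ≤ δ / 100)
    (hz2 : ‖c + (δ / 4) • EuclideanSpace.single 0 1 - z₂‖ ≤ δ / 100)
    (hz3 : ‖c + (δ / 4) • EuclideanSpace.single 1 1 - z₃‖ ≤ δ / 100)
    (hψ : ContDiff ℝ 2 ψ) (hn : C2NormLE ψ 1)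
    (hv1 : ψ z₁ = 0) (hv2 : ψ z₂ = 0) (hv3 : ψ z₃ = 0) :
    |ψ c| ≤ δ ∧ ‖fderiv ℝ ψ c‖ ≤ 3 * δ := by
  have hone : ‖(EuclideanSpace.single (0 : Fin 2) (1:ℝ) : E2)‖ = 1 := by
    rw [EuclideanSpace.norm_single]; norm_num
  have hone' : ‖(EuclideanSpace.single (1 : Fin 2) (1:ℝ) : E2)‖ = 1 := by
    rw [EuclideanSpace.norm_single]; norm_num
  set a0 : ℝ := pd 0 ψ z₁ with ha0
  set a1 : ℝ := pd 1 ψ z₁ with ha1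
  -- coordinate bounds
  have hc0 : |c 0 - z₁ 0| ≤ δ / 100 := by
    have := (abs_coord_le (c - z₁) 0).trans hz1
    simpa using this
  have hc1 : |c 1 - z₁ 1| ≤ δ / 100 := by
    have := (abs_coord_le (c - z₁) 1).trans hz1
    simpa using this
  have hp2_0 : |c 0 + δ / 4 - z₂ 0| ≤ δ / 100 := by
    have := (abs_coord_le (c + (δ / 4) • EuclideanSpace.single 0 1 - z₂) 0).trans hz2
    simpa [EuclideanSpace.single_apply] using this
  have hp2_1 : |c 1 - z₂ 1| ≤ δ / 100 := by
    have := (abs_coord_le (c + (δ / 4) • EuclideanSpace.single 0 1 - z₂) 1).trans hz2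
    simpa [EuclideanSpace.single_apply] using this
  have hp3_1 : |c 1 + δ / 4 - z₃ 1| ≤ δ / 100 := by
    have := (abs_coord_le (c + (δ / 4) • EuclideanSpace.single 1 1 - z₃) 1).trans hz3
    simpa [EuclideanSpace.single_apply] using this
  have hp3_0 : |c 0 - z₃ 0| ≤ δ / 100 := by
    have := (abs_coord_le (c + (δ / 4) • EuclideanSpace.single 1 1 - z₃) 0).trans hz3
    simpa [EuclideanSpace.single_apply] using this
  -- scalar coordinates
  have hco_u0 : (z₂ - z₁) 0 = z₂ 0 - z₁ 0 := by simp
  have hco_u1 : (z₂ - z₁) 1 = z₂ 1 - z₁ 1 := by simp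
  have hco_w0 : (z₃ - z₁) 0 = z₃ 0 - z₁ 0 := by simp
  have hco_w1 : (z₃ - z₁) 1 = z₃ 1 - z₁ 1 := by simp
  have hu0 : (23 / 100) * δ ≤ z₂ 0 - z₁ 0 := by
    rw [abs_le] at hc0 hp2_0; linarith
  have hu1 : |z₂ 1 - z₁ 1| ≤ δ / 50 := by
    rw [abs_le] at hc1 hp2_1; rw [abs_le]; constructor <;> linarith
  have hw1 : (23 / 100) * δ ≤ z₃ 1 - z₁ 1 := by
    rw [abs_le] at hc1 hp3_1; linarith
  have hw0 : |z₃ 0 - z₁ 0| ≤ δ / 50 := by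
    rw [abs_le] at hc0 hp3_0; rw [abs_le]; constructor <;> linarith
  -- norm bounds
  have hnu : ‖z₂ - z₁‖ ≤ (27 / 100) * δ := by
    have heq : z₂ - z₁ = (δ / 4) • (EuclideanSpace.single 0 1 : E2)
        + ((c - z₁) - (c + (δ / 4) • EuclideanSpace.single 0 1 - z₂)) := by abel
    calc ‖z₂ - z₁‖ = ‖(δ / 4) • (EuclideanSpace.single 0 1 : E2)
          + ((c - z₁) - (c + (δ / 4) • EuclideanSpace.single 0 1 - z₂))‖ := by rw [← heq]
      _ ≤ ‖(δ / 4) • (EuclideanSpace.single 0 1 : E2)‖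
          + ‖(c - z₁) - (c + (δ / 4) • EuclideanSpace.single 0 1 - z₂)‖ := norm_add_le _ _
      _ ≤ δ / 4 + (δ / 100 + δ / 100) := by
          refine add_le_add ?_ ((norm_sub_le _ _).trans (add_le_add hz1 hz2))
          rw [norm_smul, hone, Real.norm_eq_abs, abs_of_pos (by linarith)]
          linarith
      _ ≤ (27 / 100) * δ := by linarith
  have hnw : ‖z₃ - z₁‖ ≤ (27 / 100) * δ := by
    have heq : z₃ - z₁ = (δ / 4) • (EuclideanSpace.single 1 1 : E2)
        + ((c - z₁) - (c + (δ / 4) • EuclideanSpace.single 1 1 - z₃)) := by abel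
    calc ‖z₃ - z₁‖ = ‖(δ / 4) • (EuclideanSpace.single 1 1 : E2)
          + ((c - z₁) - (c + (δ / 4) • EuclideanSpace.single 1 1 - z₃))‖ := by rw [← heq]
      _ ≤ ‖(δ / 4) • (EuclideanSpace.single 1 1 : E2)‖
          + ‖(c - z₁) - (c + (δ / 4) • EuclideanSpace.single 1 1 - z₃)‖ := norm_add_le _ _
      _ ≤ δ / 4 + (δ / 100 + δ / 100) := by
          refine add_le_add ?_ ((norm_sub_le _ _).trans (add_le_add hz1 hz3))
          rw [norm_smul, hone', Real.norm_eq_abs, abs_of_pos (by linarith)]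
          linarith
      _ ≤ (27 / 100) * δ := by linarith
  -- Taylor estimates
  have hTu : |(z₂ 0 - z₁ 0) * a0 + (z₂ 1 - z₁ 1) * a1| ≤ (3 / 10) * δ ^ 2 := by
    have h := taylor1 hψ hn z₁ z₂
    rw [hv1, hv2] at h
    have hrw : (0:ℝ) - 0 - fderiv ℝ ψ z₁ (z₂ - z₁) = -(fderiv ℝ ψ z₁ (z₂ - z₁)) := by ring
    rw [hrw, abs_neg] at h
    have heq2 : fderiv ℝ ψ z₁ (z₂ - z₁) = (z₂ 0 - z₁ 0) * a0 + (z₂ 1 - z₁ 1) * a1 := by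
      rw [apply_eq, hco_u0, hco_u1]; rfl
    rw [heq2] at h
    refine h.trans ?_
    nlinarith [norm_nonneg (z₂ - z₁)]
  have hTw : |(z₃ 0 - z₁ 0) * a0 + (z₃ 1 - z₁ 1) * a1| ≤ (3 / 10) * δ ^ 2 := by
    have h := taylor1 hψ hn z₁ z₃
    rw [hv1, hv3] at h
    have hrw : (0:ℝ) - 0 - fderiv ℝ ψ z₁ (z₃ - z₁) = -(fderiv ℝ ψ z₁ (z₃ - z₁)) := by ring
    rw [hrw, abs_neg] at h
    have heq2 : fderiv ℝ ψ z₁ (z₃ - z₁) = (z₃ 0 - z₁ 0) * a0 + (z₃ 1 - z₁ 1) * a1 := by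
      rw [apply_eq, hco_w0, hco_w1]; rfl
    rw [heq2] at h
    refine h.trans ?_
    nlinarith [norm_nonneg (z₃ - z₁)]
  -- solve for |a0| + |a1|
  have ea : (23 / 100) * δ * |a0| ≤ (3 / 10) * δ ^ 2 + (δ / 50) * |a1| := by
    have e1 : |(z₂ 0 - z₁ 0) * a0| ≤ |(z₂ 0 - z₁ 0) * a0 + (z₂ 1 - z₁ 1) * a1|
        + |(z₂ 1 - z₁ 1) * a1| := by
      calc |(z₂ 0 - z₁ 0) * a0|
          = |((z₂ 0 - z₁ 0) * a0 + (z₂ 1 - z₁ 1) * a1) - (z₂ 1 - z₁ 1) * a1| := by ring_nf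
        _ ≤ _ := abs_sub _ _
    rw [abs_mul, abs_mul] at e1
    have l1 : (23 / 100) * δ * |a0| ≤ |z₂ 0 - z₁ 0| * |a0| :=
      mul_le_mul_of_nonneg_right (hu0.trans (le_abs_self _)) (abs_nonneg _)
    have l2 : |z₂ 1 - z₁ 1| * |a1| ≤ (δ / 50) * |a1| :=
      mul_le_mul_of_nonneg_right hu1 (abs_nonneg _)
    linarith
  have eb : (23 / 100) * δ * |a1| ≤ (3 / 10) * δ ^ 2 + (δ / 50) * |a0| := by
    have e1 : |(z₃ 1 - z₁ 1) * a1| ≤ |(z₃ 0 - z₁ 0) * a0 + (z₃ 1 - z₁ 1) * a1|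
        + |(z₃ 0 - z₁ 0) * a0| := by
      calc |(z₃ 1 - z₁ 1) * a1|
          = |((z₃ 0 - z₁ 0) * a0 + (z₃ 1 - z₁ 1) * a1) - (z₃ 0 - z₁ 0) * a0| := by ring_nf
        _ ≤ _ := abs_sub _ _
    rw [abs_mul, abs_mul] at e1
    have l1 : (23 / 100) * δ * |a1| ≤ |z₃ 1 - z₁ 1| * |a1| :=
      mul_le_mul_of_nonneg_right (hw1.trans (le_abs_self _)) (abs_nonneg _)
    have l2 : |z₃ 0 - z₁ 0| * |a0| ≤ (δ / 50) * |a0| :=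
      mul_le_mul_of_nonneg_right hw0 (abs_nonneg _)
    linarith
  have hS : |a0| + |a1| ≤ (20 / 7) * δ := by
    nlinarith [ea, eb, hδ, abs_nonneg a0, abs_nonneg a1]
  -- gradient bound at c
  have hlipc0 := pd_lip hψ hn 0 z₁ c
  have hlipc1 := pd_lip hψ hn 1 z₁ c
  have hcz : ‖c - z₁‖ ≤ δ / 100 := hz1
  have hpc0 : |pd 0 ψ c| ≤ |a0| + δ / 50 := by
    have habs : |pd 0 ψ c| ≤ |pd 0 ψ c - pd 0 ψ z₁| + |pd 0 ψ z₁| := by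
      have := abs_add_le (pd 0 ψ c - pd 0 ψ z₁) (pd 0 ψ z₁); simpa using this
    rw [← ha0] at habs
    linarith
  have hpc1 : |pd 1 ψ c| ≤ |a1| + δ / 50 := by
    have habs : |pd 1 ψ c| ≤ |pd 1 ψ c - pd 1 ψ z₁| + |pd 1 ψ z₁| := by
      have := abs_add_le (pd 1 ψ c - pd 1 ψ z₁) (pd 1 ψ z₁); simpa using this
    rw [← ha1] at habs
    linarith
  constructor
  · -- value bound
    have h := taylor1 hψ hn z₁ c
    rw [hv1] at h
    have heq2 : fderiv ℝ ψ z₁ (c - z₁) = (c 0 - z₁ 0) * a0 + (c 1 - z₁ 1) * a1 := by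
      rw [apply_eq]
      have h0 : (c - z₁) 0 = c 0 - z₁ 0 := by simp
      have h1 : (c - z₁) 1 = c 1 - z₁ 1 := by simp
      rw [h0, h1]; rfl
    rw [heq2] at h
    have hlin : |(c 0 - z₁ 0) * a0 + (c 1 - z₁ 1) * a1| ≤ (δ / 100) * (|a0| + |a1|) := by
      refine (abs_add_le _ _).trans ?_
      rw [abs_mul, abs_mul]
      have l0 : |c 0 - z₁ 0| * |a0| ≤ (δ / 100) * |a0| :=
        mul_le_mul_of_nonneg_right hc0 (abs_nonneg _)
      have l1 : |c 1 - z₁ 1| * |a1| ≤ (δ / 100) * |a1| :=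
        mul_le_mul_of_nonneg_right hc1 (abs_nonneg _)
      linarith
    have habs : |ψ c| ≤ |ψ c - 0 - ((c 0 - z₁ 0) * a0 + (c 1 - z₁ 1) * a1)|
        + |(c 0 - z₁ 0) * a0 + (c 1 - z₁ 1) * a1| := by
      have := abs_add_le (ψ c - 0 - ((c 0 - z₁ 0) * a0 + (c 1 - z₁ 1) * a1))
        ((c 0 - z₁ 0) * a0 + (c 1 - z₁ 1) * a1)
      simpa using this
    have q1 : 4 * ‖c - z₁‖ * ‖c - z₁‖ ≤ 4 * (δ / 100) * (δ / 100) := by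
      nlinarith [norm_nonneg (c - z₁)]
    have q2 : (δ / 100) * (|a0| + |a1|) ≤ (δ / 100) * ((20 / 7) * δ) :=
      mul_le_mul_of_nonneg_left hS (by linarith)
    have q3 : δ * δ ≤ δ := by nlinarith
    nlinarith [habs, h, hlin, q1, q2, q3]
  · -- gradient bound
    have hop := opnorm_le (fderiv ℝ ψ c)
    have h0 : fderiv ℝ ψ c (EuclideanSpace.single 0 1) = pd 0 ψ c := rfl
    have h1 : fderiv ℝ ψ c (EuclideanSpace.single 1 1) = pd 1 ψ c := rfl
    rw [h0, h1] at hop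
    refine hop.trans ?_
    linarith

lemma mem_sqC_center (c : E2) (δ : ℝ) (hδ : 0 < δ) : c ∈ sqC c δ :=
  fun _ => ⟨by linarith, by linarith⟩

lemma mem_sqC_shift (c : E2) (δ : ℝ) (hδ : 0 < δ) (i : Fin 2) :
    c + (δ / 4) • EuclideanSpace.single i 1 ∈ sqC c δ := by
  intro j
  have hco : (c + (δ / 4) • EuclideanSpace.single i 1 : E2) j
      = c j + (δ / 4) * (if j = i then 1 else 0) := by
    simp [EuclideanSpace.single_apply]
  rw [hco]
  split_ifs <;> constructor <;> linarith

lemma jet_apply_self (φ : E2 → ℝ) (c : E2) : jet φ c c = φ c := by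
  simp [jet]

lemma jet_sub_fderiv (φ φ' : E2 → ℝ) (c : E2) :
    fderiv ℝ (jet φ c - jet φ' c) c = fderiv ℝ φ c - fderiv ℝ φ' c := by
  have heq : jet φ c - jet φ' c
      = fun y => (φ c - φ' c - (fderiv ℝ φ c - fderiv ℝ φ' c) c)
        + (fderiv ℝ φ c - fderiv ℝ φ' c) y := by
    funext y
    simp only [Pi.sub_apply, jet, map_sub, ContinuousLinearMap.sub_apply]
    ring
  rw [heq, fderiv_const_add]
  exact ContinuousLinearMap.fderiv _

end CZaux

set_option maxHeartbeats 4000000 in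
/-- (Lemma 5.6 of [JL20].) Each CZ square contains a representative
point quantitatively far from `E`. -/
theorem CZ_representative_point :
    ∀ (k₀ : ℕ) (C₀ : ℝ), 4 ≤ k₀ → 1000 ≤ C₀ →
      ∃ c₀ : ℝ, 0 < c₀ ∧
        ∀ E : Set E2, E.Finite →
          ∀ q ∈ Lambda0 E k₀ C₀,
            ∃ x ∈ dyadicSq q, ∀ y ∈ E, c₀ * dyadicLen q ≤ dist x y := by
  intro k₀ C₀ hk₀ hC₀
  refine ⟨1 / 100, by norm_num, ?_⟩
  intro E hE q hq
  set δ : ℝ := dyadicLen q with hδdef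
  have hδ : 0 < δ := by
    have : (0:ℝ) < 2 := by norm_num
    exact zpow_pos this _
  obtain ⟨hδ1, hdiam, -⟩ := hq
  by_contra hcon
  push_neg at hcon
  set c : E2 := dyadicCenter q with hcdef
  -- the three probe points and nearby points of E
  have hp1 : c ∈ dyadicSq q := CZaux.mem_sqC_center c δ hδ
  have hp2 : c + (δ / 4) • EuclideanSpace.single 0 1 ∈ dyadicSq q :=
    CZaux.mem_sqC_shift c δ hδ 0
  have hp3 : c + (δ / 4) • EuclideanSpace.single 1 1 ∈ dyadicSq q :=
    CZaux.mem_sqC_shift c δ hδ 1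
  obtain ⟨z₁, hz₁E, hz₁d⟩ := hcon c hp1
  obtain ⟨z₂, hz₂E, hz₂d⟩ := hcon _ hp2
  obtain ⟨z₃, hz₃E, hz₃d⟩ := hcon _ hp3
  have hn1 : ‖c - z₁‖ ≤ δ / 100 := by
    rw [← dist_eq_norm]; linarith
  have hn2 : ‖c + (δ / 4) • EuclideanSpace.single 0 1 - z₂‖ ≤ δ / 100 := by
    rw [← dist_eq_norm]; linarith
  have hn3 : ‖c + (δ / 4) • EuclideanSpace.single 1 1 - z₃‖ ≤ δ / 100 := by
    rw [← dist_eq_norm]; linarith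
  -- the center lies in the dilate 2Q
  have hcmem : c ∈ dilate q 2 := CZaux.mem_sqC_center c (2 * δ) (by linarith)
  have hD := hdiam c hcmem
  -- bound the diameter of σ♯ at the center by 7δ
  have hbound : jetDiam c (sigmaSharp E c k₀) ≤ 7 * δ := by
    apply Real.sSup_le _ (by linarith)
    rintro r ⟨P, hP, P', hP', rfl⟩
    set S : Set E2 := {z₁, z₂, z₃} with hSdef
    have hSsub : S ⊆ E := by
      intro z hz
      rcases hz with h | h | h
      · rwa [h]
      · rwa [h]
      · rw [mem_singleton_iff] at h; rwa [h]
    have hScard : S.ncard ≤ k₀ := by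
      have h1 : S.ncard ≤ ({z₂, z₃} : Set E2).ncard + 1 := Set.ncard_insert_le _ _
      have h2 : ({z₂, z₃} : Set E2).ncard ≤ ({z₃} : Set E2).ncard + 1 :=
        Set.ncard_insert_le _ _
      have h3 : ({z₃} : Set E2).ncard = 1 := Set.ncard_singleton _
      omega
    obtain ⟨φ, hφ2, hφ0, hφn, hPeq⟩ := hP S hSsub hScard
    obtain ⟨φ', hφ2', hφ0', hφn', hPeq'⟩ := hP' S hSsub hScard
    have hk := CZaux.key_s14 δ hδ hδ1 c z₁ z₂ z₃ hn1 hn2 hn3 hφ2 hφn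
      (hφ0 z₁ (by simp [hSdef])) (hφ0 z₂ (by simp [hSdef])) (hφ0 z₃ (by simp [hSdef]))
    have hk' := CZaux.key_s14 δ hδ hδ1 c z₁ z₂ z₃ hn1 hn2 hn3 hφ2' hφn'
      (hφ0' z₁ (by simp [hSdef])) (hφ0' z₂ (by simp [hSdef])) (hφ0' z₃ (by simp [hSdef]))
    -- compute the jet norm
    have hval : (P - P') c = φ c - φ' c := by
      rw [hPeq, hPeq']
      show jet φ c c - jet φ' c c = φ c - φ' c
      rw [CZaux.jet_apply_self, CZaux.jet_apply_self]
    have hgrad : fderiv ℝ (P - P') c = fderiv ℝ φ c - fderiv ℝ φ' c := by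
      rw [hPeq, hPeq']
      exact CZaux.jet_sub_fderiv φ φ' c
    have hv : |(P - P') c| ≤ 2 * δ := by
      rw [hval]
      have := abs_sub (φ c) (φ' c)
      linarith [hk.1, hk'.1, abs_sub_abs_le_abs_sub (φ c) (φ' c),
        (abs_sub (φ c) (φ' c)).trans (add_le_add hk.1 hk'.1)]
    have hg : ‖fderiv ℝ (P - P') c‖ ≤ 6 * δ := by
      rw [hgrad]
      calc ‖fderiv ℝ φ c - fderiv ℝ φ' c‖ ≤ ‖fderiv ℝ φ c‖ + ‖fderiv ℝ φ' c‖ :=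
            norm_sub_le _ _
        _ ≤ 3 * δ + 3 * δ := add_le_add hk.2 hk'.2
        _ = 6 * δ := by ring
    -- conclude
    unfold jetNormAt
    have hsq : ((P - P') c) ^ 2 + ‖fderiv ℝ (P - P') c‖ ^ 2 ≤ (7 * δ) ^ 2 := by
      have h1 : ((P - P') c) ^ 2 ≤ (2 * δ) ^ 2 := by
        nlinarith [sq_abs ((P - P') c), abs_nonneg ((P - P') c), hδ]
      have h2 : ‖fderiv ℝ (P - P') c‖ ^ 2 ≤ (6 * δ) ^ 2 := by
        nlinarith [norm_nonneg (fderiv ℝ (P - P') c), hδ]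
      nlinarith [hδ]
    calc Real.sqrt (((P - P') c) ^ 2 + ‖fderiv ℝ (P - P') c‖ ^ 2)
        ≤ Real.sqrt ((7 * δ) ^ 2) := Real.sqrt_le_sqrt hsq
      _ = 7 * δ := by rw [Real.sqrt_sq (by linarith)]
  -- contradiction
  have h1000 : 1000 * δ ≤ C₀ * δ := mul_le_mul_of_nonneg_right hC₀ hδ.le
  linarith

end
end

section
/- Fix constants k₀ ≥ 4 and C₀ ≥ 1000 and let E ⊂ ℝ² be finite. There is a universal constant C such that for every Q ∈ Λ^♯ and every point x_Q^♯ ∈ Q with dist(x_Q^♯, E) ≥ c₀δ_Q (c₀ the universal constant of the representative-point lemma), one has σ^♯(x_Q^♯, 4k₀) ⊂ C·ℬ(x_Q^♯, δ_Q). -/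
open Set Real Pointwise

noncomputable section

namespace SSB

noncomputable def e (i : Fin 2) : E2 := EuclideanSpace.single i 1

lemma e_apply (i j : Fin 2) : e i j = if j = i then (1:ℝ) else 0 := by
  simp [e, EuclideanSpace.single_apply]

lemma decomp (v : E2) : v = v 0 • e 0 + v 1 • e 1 := by
  ext j
  fin_cases j <;> simp [e, EuclideanSpace.single_apply]

lemma clm_apply_eq (L : E2 →L[ℝ] ℝ) (v : E2) : L v = v 0 * L (e 0) + v 1 * L (e 1) := by
  conv_lhs => rw [decomp v]
  simp [smul_eq_mul]

lemma coord_abs_le_norm (v : E2) (i : Fin 2) : |v i| ≤ ‖v‖ := by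
  rw [EuclideanSpace.norm_eq]
  rw [show |v i| = Real.sqrt ((v i)^2) by rw [Real.sqrt_sq_eq_abs]]
  apply Real.sqrt_le_sqrt
  rw [Fin.sum_univ_two]
  fin_cases i <;> simp [sq_abs] <;> positivity

lemma norm_le_coords (v : E2) : ‖v‖ ≤ |v 0| + |v 1| := by
  rw [EuclideanSpace.norm_eq, Fin.sum_univ_two]
  have h : ‖v 0‖^2 + ‖v 1‖^2 ≤ (|v 0| + |v 1|)^2 := by
    simp only [Real.norm_eq_abs]
    nlinarith [abs_nonneg (v 0), abs_nonneg (v 1)]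
  calc Real.sqrt (‖v 0‖^2 + ‖v 1‖^2) ≤ Real.sqrt ((|v 0| + |v 1|)^2) := Real.sqrt_le_sqrt h
    _ = |v 0| + |v 1| := Real.sqrt_sq (by positivity)

lemma opnorm_le (L : E2 →L[ℝ] ℝ) : ‖L‖ ≤ |L (e 0)| + |L (e 1)| := by
  apply ContinuousLinearMap.opNorm_le_bound _ (by positivity)
  intro v
  rw [Real.norm_eq_abs, clm_apply_eq L v]
  calc |v 0 * L (e 0) + v 1 * L (e 1)| ≤ |v 0 * L (e 0)| + |v 1 * L (e 1)| := abs_add_le _ _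
    _ = |v 0| * |L (e 0)| + |v 1| * |L (e 1)| := by rw [abs_mul, abs_mul]
    _ ≤ ‖v‖ * |L (e 0)| + ‖v‖ * |L (e 1)| := by
        gcongr <;> first | exact coord_abs_le_norm v _ | positivity
    _ = (|L (e 0)| + |L (e 1)|) * ‖v‖ := by ring

end SSB

namespace SSB

lemma dmul00 (f : E2 → ℝ) : Dmul (0,0) f = f := rfl
lemma dmul10 (f : E2 → ℝ) : Dmul (1,0) f = pd 0 f := rfl
lemma dmul01 (f : E2 → ℝ) : Dmul (0,1) f = pd 1 f := rfl
lemma dmul20 (f : E2 → ℝ) : Dmul (2,0) f = pd 0 (pd 0 f) := rfl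
lemma dmul11 (f : E2 → ℝ) : Dmul (1,1) f = pd 0 (pd 1 f) := rfl
lemma dmul02 (f : E2 → ℝ) : Dmul (0,2) f = pd 1 (pd 1 f) := rfl

lemma mem_multiIdx2 (a b : ℕ) (h : a + b ≤ 2) : (a, b) ∈ multiIdx2 := by
  simp only [multiIdx2, Finset.mem_filter, Finset.mem_product, Finset.mem_range]
  omega

lemma sum_sq_le_one {f : E2 → ℝ} (hn : C2NormLE f 1) (z : E2) :
    ∑ α ∈ multiIdx2, (Dmul α f z) ^ 2 ≤ 1 := by
  have h := hn z
  unfold C2sum at h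
  have h0 : 0 ≤ ∑ α ∈ multiIdx2, (Dmul α f z) ^ 2 :=
    Finset.sum_nonneg fun _ _ => sq_nonneg _
  nlinarith [Real.sq_sqrt h0, Real.sqrt_nonneg (∑ α ∈ multiIdx2, (Dmul α f z) ^ 2)]

lemma dmul_abs_le_one {f : E2 → ℝ} (hn : C2NormLE f 1) {a b : ℕ} (h : a + b ≤ 2) (z : E2) :
    |Dmul (a,b) f z| ≤ 1 := by
  have h1 : (Dmul (a,b) f z)^2 ≤ 1 := by
    calc (Dmul (a,b) f z)^2 ≤ ∑ α ∈ multiIdx2, (Dmul α f z) ^ 2 :=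
        Finset.single_le_sum (f := fun α => (Dmul α f z)^2) (fun _ _ => sq_nonneg _)
          (mem_multiIdx2 a b h)
      _ ≤ 1 := sum_sq_le_one hn z
  nlinarith [abs_nonneg (Dmul (a,b) f z), sq_abs (Dmul (a,b) f z)]

variable {φ : E2 → ℝ}

lemma pd_contDiff (hφ : ContDiff ℝ 2 φ) (i : Fin 2) : ContDiff ℝ 1 (pd i φ) := by
  have h1 : ContDiff ℝ 1 (fderiv ℝ φ) := hφ.fderiv_right (by norm_num)
  exact h1.clm_apply contDiff_const

lemma pd_diff (hφ : ContDiff ℝ 2 φ) (i : Fin 2) : Differentiable ℝ (pd i φ) :=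
  (pd_contDiff hφ i).differentiable (by norm_num)

lemma pd_pd_eq (hφ : ContDiff ℝ 2 φ) (i j : Fin 2) (z : E2) :
    pd j (pd i φ) z = (fderiv ℝ (fderiv ℝ φ) z) (e j) (e i) := by
  have hdiff : Differentiable ℝ φ := hφ.differentiable (by norm_num)
  have hdF : DifferentiableAt ℝ (fderiv ℝ φ) z :=
    ((hφ.fderiv_right (m := 1) (by norm_num)).differentiable (by norm_num)) z
  have : pd i φ = fun u => (fderiv ℝ φ u) (e i) := rfl
  rw [show pd j (pd i φ) z = fderiv ℝ (fun u => (fderiv ℝ φ u) (e i)) z (e j) from rfl]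
  rw [fderiv_clm_apply hdF (differentiableAt_const _)]
  simp

lemma pd_symm (hφ : ContDiff ℝ 2 φ) (z : E2) :
    pd 1 (pd 0 φ) z = pd 0 (pd 1 φ) z := by
  have hdiff : Differentiable ℝ φ := hφ.differentiable (by norm_num)
  have hdF : DifferentiableAt ℝ (fderiv ℝ φ) z :=
    ((hφ.fderiv_right (m := 1) (by norm_num)).differentiable (by norm_num)) z
  rw [pd_pd_eq hφ, pd_pd_eq hφ]
  exact second_derivative_symmetric (fun y => (hdiff y).hasFDerivAt) hdF.hasFDerivAt _ _

lemma pd_pd_abs_le (hφ : ContDiff ℝ 2 φ) (hn : C2NormLE φ 1) (i j : Fin 2) (z : E2) :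
    |pd j (pd i φ) z| ≤ 1 := by
  fin_cases i <;> fin_cases j
  · show |pd 0 (pd 0 φ) z| ≤ 1
    exact (dmul20 φ ▸ dmul_abs_le_one hn (by norm_num) z : _)
  · show |pd 1 (pd 0 φ) z| ≤ 1
    rw [pd_symm hφ]
    exact (dmul11 φ ▸ dmul_abs_le_one hn (by norm_num) z : _)
  · show |pd 0 (pd 1 φ) z| ≤ 1
    exact (dmul11 φ ▸ dmul_abs_le_one hn (by norm_num) z : _)
  · show |pd 1 (pd 1 φ) z| ≤ 1
    exact (dmul02 φ ▸ dmul_abs_le_one hn (by norm_num) z : _)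

lemma pd_eq_fderiv_apply (f : E2 → ℝ) (i : Fin 2) (z : E2) : pd i f z = fderiv ℝ f z (e i) := rfl

lemma grad_le (hn : C2NormLE φ 1) (z : E2) : ‖fderiv ℝ φ z‖ ≤ 2 := by
  have h0 := dmul_abs_le_one hn (a := 1) (b := 0) (by norm_num) z
  have h1 := dmul_abs_le_one hn (a := 0) (b := 1) (by norm_num) z
  rw [dmul10] at h0; rw [dmul01] at h1
  calc ‖fderiv ℝ φ z‖ ≤ |fderiv ℝ φ z (e 0)| + |fderiv ℝ φ z (e 1)| := opnorm_le _
    _ ≤ 2 := by rw [← pd_eq_fderiv_apply, ← pd_eq_fderiv_apply]; linarith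

lemma pd_lip (hφ : ContDiff ℝ 2 φ) (hn : C2NormLE φ 1) (i : Fin 2) (a b : E2) :
    |pd i φ a - pd i φ b| ≤ 2 * ‖a - b‖ := by
  have := Convex.norm_image_sub_le_of_norm_fderiv_le (f := pd i φ) (s := Set.univ) (C := 2)
    (fun u _ => pd_diff hφ i u) ?_ convex_univ (Set.mem_univ b) (Set.mem_univ a)
  · rwa [Real.norm_eq_abs] at this
  · intro u _
    calc ‖fderiv ℝ (pd i φ) u‖ ≤ |fderiv ℝ (pd i φ) u (e 0)| + |fderiv ℝ (pd i φ) u (e 1)| :=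
        opnorm_le _
      _ = |pd 0 (pd i φ) u| + |pd 1 (pd i φ) u| := rfl
      _ ≤ 2 := by
          have := pd_pd_abs_le hφ hn i 0 u
          have := pd_pd_abs_le hφ hn i 1 u
          linarith

lemma fderiv_lip (hφ : ContDiff ℝ 2 φ) (hn : C2NormLE φ 1) (a b : E2) :
    ‖fderiv ℝ φ a - fderiv ℝ φ b‖ ≤ 4 * ‖a - b‖ := by
  calc ‖fderiv ℝ φ a - fderiv ℝ φ b‖
      ≤ |(fderiv ℝ φ a - fderiv ℝ φ b) (e 0)| + |(fderiv ℝ φ a - fderiv ℝ φ b) (e 1)| :=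
        opnorm_le _
    _ = |pd 0 φ a - pd 0 φ b| + |pd 1 φ a - pd 1 φ b| := by
        simp [ContinuousLinearMap.sub_apply, pd_eq_fderiv_apply]
    _ ≤ 2 * ‖a - b‖ + 2 * ‖a - b‖ := add_le_add (pd_lip hφ hn 0 a b) (pd_lip hφ hn 1 a b)
    _ = 4 * ‖a - b‖ := by ring

lemma taylor2 (hφ : ContDiff ℝ 2 φ) (hn : C2NormLE φ 1) (z w : E2) :
    |φ w - φ z - fderiv ℝ φ z (w - z)| ≤ 4 * ‖w - z‖ ^ 2 := by
  have hdiff : Differentiable ℝ φ := hφ.differentiable (by norm_num)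
  set L := fderiv ℝ φ z with hL
  set g : E2 → ℝ := fun u => φ u - L u with hg
  have hgd : ∀ u, DifferentiableAt ℝ g u := fun u => (hdiff u).sub (L.differentiable u)
  have hgf : ∀ u, fderiv ℝ g u = fderiv ℝ φ u - L := by
    intro u
    rw [hg]
    rw [fderiv_fun_sub (hdiff u) (L.differentiable u)]
    simp [L.fderiv]
  have key := Convex.norm_image_sub_le_of_norm_fderiv_le (f := g) (s := Metric.closedBall z ‖w - z‖)
    (C := 4 * ‖w - z‖) (x := z) (y := w) (fun u _ => hgd u) ?_ (convex_closedBall _ _) ?_ ?_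
  · have : g w - g z = φ w - φ z - L (w - z) := by
      simp only [hg, map_sub]; ring
    rw [this, Real.norm_eq_abs] at key
    calc |φ w - φ z - fderiv ℝ φ z (w - z)| ≤ 4 * ‖w - z‖ * ‖w - z‖ := key
      _ = 4 * ‖w - z‖ ^ 2 := by ring
  · intro u hu
    rw [hgf u]
    calc ‖fderiv ℝ φ u - L‖ ≤ 4 * ‖u - z‖ := fderiv_lip hφ hn u z
      _ ≤ 4 * ‖w - z‖ := by
          have : dist u z ≤ ‖w - z‖ := Metric.mem_closedBall.mp hu
          rw [dist_eq_norm] at this; linarith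
  · exact Metric.mem_closedBall.mpr (by simp)
  · exact Metric.mem_closedBall.mpr (by rw [dist_eq_norm])

end SSB

namespace SSB

lemma jet_eq_affine (φ : E2 → ℝ) (x : E2) :
    jet φ x = fun w => (φ x - fderiv ℝ φ x x) + fderiv ℝ φ x w := by
  funext w
  simp only [jet, map_sub]
  ring

lemma jet_hasFDerivAt (φ : E2 → ℝ) (x y : E2) :
    HasFDerivAt (jet φ x) (fderiv ℝ φ x) y := by
  rw [jet_eq_affine]
  exact ((fderiv ℝ φ x).hasFDerivAt (x := y)).const_add _

lemma jet_differentiable (φ : E2 → ℝ) (x : E2) : Differentiable ℝ (jet φ x) :=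
  fun y => (jet_hasFDerivAt φ x y).differentiableAt

lemma jet_fderiv (φ : E2 → ℝ) (x y : E2) : fderiv ℝ (jet φ x) y = fderiv ℝ φ x :=
  (jet_hasFDerivAt φ x y).fderiv

lemma jet_apply_self (φ : E2 → ℝ) (x : E2) : jet φ x x = φ x := by
  simp [jet]

lemma pd_zero (i : Fin 2) : pd i (0 : E2 → ℝ) = 0 := by
  funext z
  simp only [pd]
  rw [show (0 : E2 → ℝ) = fun _ => (0:ℝ) from rfl, fderiv_fun_const]
  simp

lemma dmul_zero (α : ℕ × ℕ) : Dmul α (0 : E2 → ℝ) z = 0 := by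
  have h1 : (pd 1)^[α.2] (0 : E2 → ℝ) = 0 := Function.iterate_fixed (pd_zero 1) α.2
  have h0 : (pd 0)^[α.1] (0 : E2 → ℝ) = 0 := Function.iterate_fixed (pd_zero 0) α.1
  simp only [Dmul, h1, h0]
  rfl

lemma c2norm_zero : C2NormLE (0 : E2 → ℝ) 1 := by
  intro z
  unfold C2sum
  have : ∀ α ∈ multiIdx2, (Dmul α (0 : E2 → ℝ) z)^2 = 0 := by
    intro α _; rw [dmul_zero]; ring
  rw [Finset.sum_congr rfl this]
  simp

lemma jet_zero (x : E2) : jet (0 : E2 → ℝ) x = 0 := by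
  funext w
  simp only [jet]
  rw [show (0 : E2 → ℝ) = fun _ => (0:ℝ) from rfl, fderiv_fun_const]
  simp

lemma zero_mem_sigmaSharp (E : Set E2) (x : E2) (k : ℕ) : (0 : E2 → ℝ) ∈ sigmaSharp E x k := by
  intro S _ _
  exact ⟨0, contDiff_const, fun z _ => rfl, c2norm_zero, (jet_zero x).symm⟩

/-- convex combination of partial derivatives -/
lemma pd_combo {f g : E2 → ℝ} (hf : Differentiable ℝ f) (hg : Differentiable ℝ g)
    (a b : ℝ) (i : Fin 2) : pd i (a • f + b • g) = a • pd i f + b • pd i g := by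
  funext z
  have h1 : DifferentiableAt ℝ (fun y => a • f y) z := ((hf z).const_smul a : _)
  have h2 : DifferentiableAt ℝ (fun y => b • g y) z := ((hg z).const_smul b : _)
  have : (a • f + b • g) = fun y => a • f y + b • g y := rfl
  simp only [pd, this]
  rw [fderiv_fun_add h1 h2, fderiv_fun_const_smul (hf z), fderiv_fun_const_smul (hg z)]
  simp [pd, smul_eq_mul]

lemma combo_contDiff {f g : E2 → ℝ} (hf : ContDiff ℝ 2 f) (hg : ContDiff ℝ 2 g) (a b : ℝ) :
    ContDiff ℝ 2 (a • f + b • g) := (hf.const_smul a).add (hg.const_smul b)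

lemma dmul_combo {f g : E2 → ℝ} (hf : ContDiff ℝ 2 f) (hg : ContDiff ℝ 2 g)
    (a b : ℝ) {α : ℕ × ℕ} (hα : α ∈ multiIdx2) (z : E2) :
    Dmul α (a • f + b • g) z = a * Dmul α f z + b * Dmul α g z := by
  have hfd : Differentiable ℝ f := hf.differentiable (by norm_num)
  have hgd : Differentiable ℝ g := hg.differentiable (by norm_num)
  obtain ⟨a1, a2⟩ := α
  simp only [multiIdx2, Finset.mem_filter, Finset.mem_product, Finset.mem_range] at hα
  obtain ⟨⟨hr1, hr2⟩, hle⟩ := hα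
  have hb1 : a1 ≤ 2 := by omega
  have hb2 : a2 ≤ 2 := by omega
  interval_cases a1 <;> interval_cases a2 <;> try omega
  · rfl
  · rw [show Dmul (0,1) = pd 1 from rfl, pd_combo hfd hgd]; rfl
  · rw [show ∀ h, Dmul (0,2) h = pd 1 (pd 1 h) from fun _ => rfl, pd_combo hfd hgd,
      pd_combo (pd_diff hf 1) (pd_diff hg 1)]; rfl
  · rw [show Dmul (1,0) = pd 0 from rfl, pd_combo hfd hgd]; rfl
  · rw [show ∀ h, Dmul (1,1) h = pd 0 (pd 1 h) from fun _ => rfl, pd_combo hfd hgd,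
      pd_combo (pd_diff hf 1) (pd_diff hg 1)]; rfl
  · rw [show ∀ h, Dmul (2,0) h = pd 0 (pd 0 h) from fun _ => rfl, pd_combo hfd hgd,
      pd_combo (pd_diff hf 0) (pd_diff hg 0)]; rfl

lemma sqrt_sum_combo {ι : Type*} (s : Finset ι) (u v : ι → ℝ) (a b : ℝ)
    (ha : 0 ≤ a) (hb : 0 ≤ b) :
    Real.sqrt (∑ i ∈ s, (a * u i + b * v i)^2) ≤
      a * Real.sqrt (∑ i ∈ s, (u i)^2) + b * Real.sqrt (∑ i ∈ s, (v i)^2) := by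
  set A := Real.sqrt (∑ i ∈ s, (u i)^2) with hA
  set B := Real.sqrt (∑ i ∈ s, (v i)^2) with hB
  have hA0 : 0 ≤ A := Real.sqrt_nonneg _
  have hB0 : 0 ≤ B := Real.sqrt_nonneg _
  have hA2 : A^2 = ∑ i ∈ s, (u i)^2 := Real.sq_sqrt (Finset.sum_nonneg fun _ _ => sq_nonneg _)
  have hB2 : B^2 = ∑ i ∈ s, (v i)^2 := Real.sq_sqrt (Finset.sum_nonneg fun _ _ => sq_nonneg _)
  have hCS : ∑ i ∈ s, u i * v i ≤ A * B := by
    calc ∑ i ∈ s, u i * v i ≤ Real.sqrt (∑ i ∈ s, (u i)^2) * Real.sqrt (∑ i ∈ s, (v i)^2) :=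
        Real.sum_mul_le_sqrt_mul_sqrt s u v
      _ = A * B := rfl
  have hexp : ∑ i ∈ s, (a * u i + b * v i)^2 ≤ (a * A + b * B)^2 := by
    have : ∑ i ∈ s, (a * u i + b * v i)^2
        = a^2 * (∑ i ∈ s, (u i)^2) + 2*a*b * (∑ i ∈ s, u i * v i) + b^2 * (∑ i ∈ s, (v i)^2) := by
      rw [Finset.mul_sum, Finset.mul_sum, Finset.mul_sum, ← Finset.sum_add_distrib,
        ← Finset.sum_add_distrib]
      apply Finset.sum_congr rfl
      intro i _
      ring
    rw [this, ← hA2, ← hB2]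
    nlinarith [mul_nonneg (mul_nonneg ha hb) (sub_nonneg.mpr hCS)]
  calc Real.sqrt (∑ i ∈ s, (a * u i + b * v i)^2) ≤ Real.sqrt ((a * A + b * B)^2) :=
      Real.sqrt_le_sqrt hexp
    _ = a * A + b * B := Real.sqrt_sq (by positivity)

lemma c2norm_combo {f g : E2 → ℝ} (hf : ContDiff ℝ 2 f) (hg : ContDiff ℝ 2 g)
    (hnf : C2NormLE f 1) (hng : C2NormLE g 1) {a b : ℝ} (ha : 0 ≤ a) (hb : 0 ≤ b)
    (hab : a + b = 1) : C2NormLE (a • f + b • g) 1 := by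
  intro z
  unfold C2sum
  have heq : ∀ α ∈ multiIdx2, (Dmul α (a • f + b • g) z)^2
      = (a * Dmul α f z + b * Dmul α g z)^2 := by
    intro α hα
    rw [dmul_combo hf hg a b hα z]
  rw [Finset.sum_congr rfl heq]
  calc Real.sqrt (∑ α ∈ multiIdx2, (a * Dmul α f z + b * Dmul α g z)^2)
      ≤ a * Real.sqrt (∑ α ∈ multiIdx2, (Dmul α f z)^2)
        + b * Real.sqrt (∑ α ∈ multiIdx2, (Dmul α g z)^2) :=
      sqrt_sum_combo _ _ _ a b ha hb
    _ ≤ a * 1 + b * 1 := by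
        apply add_le_add
        · exact mul_le_mul_of_nonneg_left (hnf z) ha
        · exact mul_le_mul_of_nonneg_left (hng z) hb
    _ = 1 := by rw [mul_one, mul_one, hab]

lemma jet_combo {f g : E2 → ℝ} (hf : ContDiff ℝ 2 f) (hg : ContDiff ℝ 2 g)
    (a b : ℝ) (x : E2) : jet (a • f + b • g) x = a • jet f x + b • jet g x := by
  have hfd : Differentiable ℝ f := hf.differentiable (by norm_num)
  have hgd : Differentiable ℝ g := hg.differentiable (by norm_num)
  funext w
  have h1 : DifferentiableAt ℝ (fun y => a • f y) x := ((hfd x).const_smul a : _)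
  have h2 : DifferentiableAt ℝ (fun y => b • g y) x := ((hgd x).const_smul b : _)
  have hsum : (a • f + b • g) = fun y => a • f y + b • g y := rfl
  have hD : fderiv ℝ (a • f + b • g) x = a • fderiv ℝ f x + b • fderiv ℝ g x := by
    rw [hsum, fderiv_fun_add h1 h2, fderiv_fun_const_smul (hfd x), fderiv_fun_const_smul (hgd x)]
  simp only [jet, hD, Pi.add_apply, Pi.smul_apply, ContinuousLinearMap.add_apply,
    ContinuousLinearMap.coe_smul', smul_eq_mul]
  ring

lemma sigmaSet_convex (x : E2) (S : Set E2) : Convex ℝ (sigmaSet x S) := by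
  rintro P1 ⟨f, hf, hfS, hnf, rfl⟩ P2 ⟨g, hg, hgS, hng, rfl⟩ a b ha hb hab
  refine ⟨a • f + b • g, combo_contDiff hf hg a b, ?_, c2norm_combo hf hg hnf hng ha hb hab, ?_⟩
  · intro z hz
    simp [Pi.add_apply, Pi.smul_apply, hfS z hz, hgS z hz]
  · rw [jet_combo hf hg a b x]

end SSB

namespace SSB

lemma vec2_apply0 (a b : ℝ) : vec2 a b 0 = a := rfl
lemma vec2_apply1 (a b : ℝ) : vec2 a b 1 = b := rfl

lemma dyadicLen_pos (q : ℤ × ℤ × ℤ) : 0 < dyadicLen q := by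
  unfold dyadicLen
  positivity

lemma sqC_abs {c : E2} {δ : ℝ} {x : E2} (hx : x ∈ sqC c δ) (i : Fin 2) :
    |x i - c i| ≤ δ / 2 := by
  obtain ⟨h1, h2⟩ := hx i
  rw [abs_le]
  constructor <;> linarith

lemma center_coord (q : ℤ × ℤ × ℤ) :
    dyadicCenter q 0 = dyadicLen q * ((q.1 : ℝ) + 1/2) ∧
    dyadicCenter q 1 = dyadicLen q * ((q.2.1 : ℝ) + 1/2) := by
  constructor <;> rfl

lemma parent_len (q : ℤ × ℤ × ℤ) : dyadicLen (dyadicParent q) = 2 * dyadicLen q := by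
  unfold dyadicLen dyadicParent
  rw [show (q.1.fdiv 2, q.2.1.fdiv 2, q.2.2 + 1).2.2 = q.2.2 + 1 from rfl]
  rw [zpow_add_one₀ (by norm_num : (2:ℝ) ≠ 0)]
  ring

lemma parent_center_close (q : ℤ × ℤ × ℤ) (i : Fin 2) :
    |dyadicCenter (dyadicParent q) i - dyadicCenter q i| ≤ dyadicLen q / 2 := by
  set δ := dyadicLen q with hδ
  have hδpos : 0 < δ := dyadicLen_pos q
  have key : ∀ m : ℤ, |2 * δ * ((m.fdiv 2 : ℝ) + 1/2) - δ * ((m : ℝ) + 1/2)| ≤ δ / 2 := by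
    intro m
    have hmod := Int.fmod_nonneg_of_pos m (by norm_num : (0:ℤ) < 2)
    have hmod2 : m.fmod 2 < 2 := Int.fmod_lt_of_pos m (by norm_num)
    have hdm : 2 * m.fdiv 2 = m - m.fmod 2 := by
      have := Int.mul_fdiv_add_fmod m 2
      omega
    have hcast : (2 : ℝ) * (m.fdiv 2 : ℝ) = (m : ℝ) - (m.fmod 2 : ℝ) := by
      have : ((2 * m.fdiv 2 : ℤ) : ℝ) = ((m - m.fmod 2 : ℤ) : ℝ) := by rw [hdm]
      push_cast at this
      linarith
    have hexp : 2 * δ * ((m.fdiv 2 : ℝ) + 1/2) - δ * ((m : ℝ) + 1/2)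
        = δ * (1/2 - (m.fmod 2 : ℝ)) := by
      have : 2 * δ * ((m.fdiv 2 : ℝ)) = δ * ((m:ℝ) - (m.fmod 2 : ℝ)) := by
        rw [show 2 * δ * ((m.fdiv 2 : ℝ)) = δ * (2 * (m.fdiv 2 : ℝ)) by ring, hcast]
      nlinarith [this]
    rw [hexp, abs_mul, abs_of_pos hδpos]
    have hm01 : (0:ℝ) ≤ (m.fmod 2 : ℝ) ∧ (m.fmod 2 : ℝ) ≤ 1 := by
      constructor <;> [exact_mod_cast hmod; exact_mod_cast (by omega : m.fmod 2 ≤ 1)]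
    have : |1/2 - (m.fmod 2 : ℝ)| ≤ 1/2 := by
      rw [abs_le]; constructor <;> linarith [hm01.1, hm01.2]
    calc δ * |1/2 - (m.fmod 2 : ℝ)| ≤ δ * (1/2) := by
          apply mul_le_mul_of_nonneg_left this (le_of_lt hδpos)
      _ = δ / 2 := by ring
  fin_cases i
  · show |dyadicCenter (dyadicParent q) 0 - dyadicCenter q 0| ≤ δ / 2
    rw [(center_coord (dyadicParent q)).1, (center_coord q).1, parent_len]
    exact key q.1
  · show |dyadicCenter (dyadicParent q) 1 - dyadicCenter q 1| ≤ δ / 2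
    rw [(center_coord (dyadicParent q)).2, (center_coord q).2, parent_len]
    exact key q.2.1

lemma norm_sub_le_of_coords {u v : E2} {r : ℝ} (h : ∀ i, |u i - v i| ≤ r) : ‖u - v‖ ≤ 2 * r := by
  have h0 := h 0
  have h1 := h 1
  have hs : ∀ i : Fin 2, (u - v) i = u i - v i := fun i => rfl
  calc ‖u - v‖ ≤ |(u - v) 0| + |(u - v) 1| := norm_le_coords _
    _ = |u 0 - v 0| + |u 1 - v 1| := by rw [hs 0, hs 1]
    _ ≤ 2 * r := by linarith

/-- distance from a point of `Q` to a point of `2Q⁺`. -/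
lemma dist_x_xhat {q : ℤ × ℤ × ℤ} {x xh : E2} (hx : x ∈ dyadicSq q)
    (hxh : xh ∈ dilate (dyadicParent q) 2) : ‖xh - x‖ ≤ 6 * dyadicLen q := by
  set δ := dyadicLen q with hδ
  have hδpos : 0 < δ := dyadicLen_pos q
  have hcoord : ∀ i, |xh i - x i| ≤ 3 * δ := by
    intro i
    have h1 : |x i - dyadicCenter q i| ≤ δ / 2 := sqC_abs hx i
    have h2 : |xh i - dyadicCenter (dyadicParent q) i| ≤ 2 * dyadicLen (dyadicParent q) / 2 :=
      sqC_abs hxh i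
    rw [parent_len] at h2
    have h3 := parent_center_close q i
    calc |xh i - x i| = |(xh i - dyadicCenter (dyadicParent q) i)
          + (dyadicCenter (dyadicParent q) i - dyadicCenter q i)
          + (dyadicCenter q i - x i)| := by ring_nf
      _ ≤ |(xh i - dyadicCenter (dyadicParent q) i)
          + (dyadicCenter (dyadicParent q) i - dyadicCenter q i)|
          + |dyadicCenter q i - x i| := abs_add_le _ _
      _ ≤ |xh i - dyadicCenter (dyadicParent q) i|
          + |dyadicCenter (dyadicParent q) i - dyadicCenter q i|
          + |dyadicCenter q i - x i| := by linarith [abs_add_le (xh i - dyadicCenter (dyadicParent q) i) (dyadicCenter (dyadicParent q) i - dyadicCenter q i)]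
      _ ≤ 2 * (2 * δ) / 2 + δ / 2 + δ / 2 := by
          rw [abs_sub_comm (dyadicCenter q i) (x i)]
          gcongr
      _ = 3 * δ := by ring
  calc ‖xh - x‖ ≤ 2 * (3 * δ) := norm_sub_le_of_coords hcoord
    _ = 6 * δ := by ring

lemma dist_x_y {q : ℤ × ℤ × ℤ} {x y : E2} (hx : x ∈ dyadicSq q)
    (hy : y ∈ dilate q 2) : ‖x - y‖ ≤ 3 * dyadicLen q := by
  set δ := dyadicLen q with hδ
  have hδpos : 0 < δ := dyadicLen_pos q
  have hcoord : ∀ i, |x i - y i| ≤ 3 / 2 * δ := by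
    intro i
    have h1 : |x i - dyadicCenter q i| ≤ δ / 2 := sqC_abs hx i
    have h2 : |y i - dyadicCenter q i| ≤ 2 * δ / 2 := sqC_abs hy i
    calc |x i - y i| = |(x i - dyadicCenter q i) - (y i - dyadicCenter q i)| := by ring_nf
      _ ≤ |x i - dyadicCenter q i| + |y i - dyadicCenter q i| := abs_sub _ _
      _ ≤ 3 / 2 * δ := by linarith
  calc ‖x - y‖ ≤ 2 * (3 / 2 * δ) := norm_sub_le_of_coords hcoord
    _ = 3 * δ := by ring

end SSB

namespace SSB

/-- affine function given by coefficients, centered at `c` -/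
noncomputable def Lp (c : E2) (p : Fin 3 → ℝ) : E2 → ℝ :=
  fun w => p 0 + p 1 * (w 0 - c 0) + p 2 * (w 1 - c 1)

noncomputable def Dp (p : Fin 3 → ℝ) : E2 →L[ℝ] ℝ :=
  p 1 • (EuclideanSpace.proj (𝕜 := ℝ) (0 : Fin 2)) + p 2 • (EuclideanSpace.proj (𝕜 := ℝ) (1 : Fin 2))

lemma Dp_apply (p : Fin 3 → ℝ) (v : E2) : Dp p v = p 1 * v 0 + p 2 * v 1 := by
  simp [Dp, smul_eq_mul]

lemma Lp_center (c : E2) (p : Fin 3 → ℝ) : Lp c p c = p 0 := by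
  simp [Lp]

lemma Lp_hasFDerivAt (c : E2) (p : Fin 3 → ℝ) (w : E2) :
    HasFDerivAt (Lp c p) (Dp p) w := by
  have : Lp c p = fun u => (p 0 - p 1 * c 0 - p 2 * c 1) + Dp p u := by
    funext u
    rw [Dp_apply]
    simp [Lp]
    ring
  rw [this]
  exact ((Dp p).hasFDerivAt (x := w)).const_add _

lemma Lp_fderiv (c : E2) (p : Fin 3 → ℝ) (w : E2) : fderiv ℝ (Lp c p) w = Dp p :=
  (Lp_hasFDerivAt c p w).fderiv

lemma Dp_e0 (p : Fin 3 → ℝ) : Dp p (e 0) = p 1 := by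
  rw [Dp_apply, e_apply, e_apply]
  norm_num

lemma Dp_e1 (p : Fin 3 → ℝ) : Dp p (e 1) = p 2 := by
  rw [Dp_apply, e_apply, e_apply]
  norm_num

lemma sqrt_le_of_le_sq {x r : ℝ} (hr : 0 ≤ r) (h : x ≤ r^2) : Real.sqrt x ≤ r := by
  calc Real.sqrt x ≤ Real.sqrt (r^2) := Real.sqrt_le_sqrt h
    _ = r := Real.sqrt_sq hr

lemma abs_le_sqrt_add_sq (a b : ℝ) : |a| ≤ Real.sqrt (a^2 + b^2) := by
  rw [← Real.sqrt_sq_eq_abs]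
  exact Real.sqrt_le_sqrt (by nlinarith [sq_nonneg b])

lemma nonneg_le_sqrt_add_sq (a b : ℝ) (hb : 0 ≤ b) : b ≤ Real.sqrt (a^2 + b^2) := by
  calc b = Real.sqrt (b^2) := (Real.sqrt_sq hb).symm
    _ ≤ Real.sqrt (a^2 + b^2) := Real.sqrt_le_sqrt (by nlinarith [sq_nonneg a])

lemma sub_coord (w c : E2) (i : Fin 2) : (w - c) i = w i - c i := rfl

/-- the jet of φ at `c` coincides with `Lp c` of its coefficient vector -/
lemma jet_eq_Lp (φ : E2 → ℝ) (c : E2) :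
    jet φ c = Lp c ![φ c, pd 0 φ c, pd 1 φ c] := by
  funext w
  simp only [jet, Lp]
  rw [clm_apply_eq (fderiv ℝ φ c) (w - c)]
  simp only [sub_coord, Matrix.cons_val_zero, Matrix.cons_val_one, Matrix.head_cons]
  rw [← pd_eq_fderiv_apply, ← pd_eq_fderiv_apply]
  show φ c + ((w 0 - c 0) * pd 0 φ c + (w 1 - c 1) * pd 1 φ c) =
    φ c + pd 0 φ c * (w 0 - c 0) + pd 1 φ c * (w 1 - c 1)
  ring

lemma abs_convex {a b u u' cc r : ℝ} (ha : 0 ≤ a) (hb : 0 ≤ b) (hab : a + b = 1)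
    (h1 : |u - cc| ≤ r) (h2 : |u' - cc| ≤ r) : |a * u + b * u' - cc| ≤ r := by
  have key : a * u + b * u' - cc = a * (u - cc) + b * (u' - cc) + (a + b - 1) * cc := by ring
  rw [key, hab]
  have h3 : |a * (u - cc) + b * (u' - cc) + (1 - 1) * cc| = |a * (u - cc) + b * (u' - cc)| := by
    norm_num
  rw [h3]
  calc |a * (u - cc) + b * (u' - cc)| ≤ |a * (u - cc)| + |b * (u' - cc)| := abs_add_le _ _
    _ = a * |u - cc| + b * |u' - cc| := by rw [abs_mul, abs_mul, abs_of_nonneg ha, abs_of_nonneg hb]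
    _ ≤ a * r + b * r := by
        apply add_le_add <;> apply mul_le_mul_of_nonneg_left <;> assumption
    _ = r := by rw [← add_mul, hab, one_mul]

end SSB

open SSB in
set_option maxHeartbeats 2000000 in
/-- (Lemma 5.7 of [JL20].) At a representative point `x_Q^♯` of
`Q ∈ Λ^♯`, one has `σ^♯(x_Q^♯, 4k₀) ⊆ C·ℬ(x_Q^♯, δ_Q)`. -/
theorem sigma_sharp_in_ball :
    ∀ (k₀ : ℕ) (C₀ : ℝ), 4 ≤ k₀ → 1000 ≤ C₀ →
      ∀ c₀ : ℝ, 0 < c₀ →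
        ∃ C : ℝ, 0 < C ∧
          ∀ E : Set E2, E.Finite →
            ∀ q ∈ LambdaSharp E k₀ C₀,
              ∀ x ∈ dyadicSq q, (∀ y ∈ E, c₀ * dyadicLen q ≤ dist x y) →
                sigmaSharp E x (4 * k₀) ⊆ C • jetBall x (dyadicLen q) := by
  classical
  intro k₀ C₀ hk₀ hC₀ c₀ _hc₀
  refine ⟨12 * C₀ + 300, by linarith, ?_⟩
  intro E hE q hq x hx _hrep P hP
  obtain ⟨⟨hδ1, _hlow, xh, hxhmem, hxhdiam⟩, y, hyE, hy2Q⟩ := hq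
  set δ := dyadicLen q with hδdef
  have hδpos : 0 < δ := dyadicLen_pos q
  set C : ℝ := 12 * C₀ + 300 with hCdef
  have hCpos : (0:ℝ) < C := by rw [hCdef]; linarith
  -- basic facts about P
  obtain ⟨φ₀, hφ₀, _, hn₀, hPeq₀⟩ := hP ∅ (Set.empty_subset E) (by simp)
  have hPdiff : ∀ w, DifferentiableAt ℝ P w := by
    intro w; rw [hPeq₀]; exact (jet_hasFDerivAt φ₀ x w).differentiableAt
  set β : Fin 2 → ℝ := fun i => fderiv ℝ P x (e i) with hβdef
  -- the same gradient for every representative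
  have hfP : ∀ ψ : E2 → ℝ, P = jet ψ x → fderiv ℝ P x = fderiv ℝ ψ x := by
    intro ψ h; rw [h, jet_fderiv]
  have hdistxh : ‖xh - x‖ ≤ 6 * δ := dist_x_xhat hx hxhmem
  have hdistxy : ‖x - y‖ ≤ 3 * δ := dist_x_y hx hy2Q
  -- Helly family
  set F : Finset E2 → Set (Fin 3 → ℝ) := fun t =>
    {p | Lp xh p ∈ sigmaSet xh ↑t ∧ |p 0 - P xh| ≤ 144 * δ^2 ∧
      |p 1 - β 0| ≤ 24 * δ ∧ |p 2 - β 1| ≤ 24 * δ} with hFdef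
  set s : Finset (Finset E2) := hE.toFinset.powerset.filter (fun t => t.card ≤ k₀) with hsdef
  have hrank : Module.finrank ℝ (Fin 3 → ℝ) = 3 := by
    rw [Module.finrank_pi]; simp
  -- convexity
  have hFconv : ∀ t ∈ s, Convex ℝ (F t) := by
    intro t _ p hp p' hp' a b ha hb hab
    obtain ⟨hp1, hp2, hp3, hp4⟩ := hp
    obtain ⟨hp1', hp2', hp3', hp4'⟩ := hp'
    have hcoord : ∀ j : Fin 3, (a • p + b • p') j = a * p j + b * p' j := fun j => rfl
    have hLcombo : Lp xh (a • p + b • p') = a • (Lp xh p) + b • (Lp xh p') := by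
      funext w
      simp only [Lp, hcoord, Pi.add_apply, Pi.smul_apply, smul_eq_mul]
      ring
    refine ⟨?_, ?_, ?_, ?_⟩
    · rw [hLcombo]
      exact sigmaSet_convex xh ↑t hp1 hp1' ha hb hab
    · rw [hcoord]; exact abs_convex ha hb hab hp2 hp2'
    · rw [hcoord]; exact abs_convex ha hb hab hp3 hp3'
    · rw [hcoord]; exact abs_convex ha hb hab hp4 hp4'
  -- intersection property
  have hinter : ∀ I ⊆ s, I.card ≤ Module.finrank ℝ (Fin 3 → ℝ) + 1 →
      (⋂ t ∈ I, F t).Nonempty := by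
    intro I hIs hIcard
    rw [hrank] at hIcard
    set S' : Finset E2 := I.biUnion id with hS'def
    have hS'sub : (↑S' : Set E2) ⊆ E := by
      intro z hz
      rw [Finset.mem_coe, hS'def, Finset.mem_biUnion] at hz
      obtain ⟨t, htI, hzt⟩ := hz
      have hts := hIs htI
      rw [hsdef, Finset.mem_filter, Finset.mem_powerset] at hts
      exact hE.mem_toFinset.mp (hts.1 hzt)
    have hcard : (↑S' : Set E2).ncard ≤ 4 * k₀ := by
      rw [Set.ncard_coe_finset]
      calc S'.card ≤ ∑ t ∈ I, (id t).card := Finset.card_biUnion_le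
        _ ≤ ∑ _t ∈ I, k₀ := by
            apply Finset.sum_le_sum
            intro t ht
            have hts := hIs ht
            rw [hsdef, Finset.mem_filter] at hts
            exact hts.2
        _ = I.card * k₀ := by rw [Finset.sum_const, smul_eq_mul]
        _ ≤ 4 * k₀ := Nat.mul_le_mul_right _ hIcard
    obtain ⟨φ, hφ, hφS, hnφ, hPjet⟩ := hP ↑S' hS'sub hcard
    refine ⟨![φ xh, pd 0 φ xh, pd 1 φ xh], Set.mem_biInter ?_⟩
    intro t htI
    have hjet : Lp xh ![φ xh, pd 0 φ xh, pd 1 φ xh] = jet φ xh := (jet_eq_Lp φ xh).symm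
    have htay := taylor2 hφ hnφ x xh
    have hPxh : P xh = φ x + fderiv ℝ φ x (xh - x) := by rw [hPjet]; rfl
    have hf : fderiv ℝ P x = fderiv ℝ φ x := hfP φ hPjet
    have hLip : ∀ i : Fin 2, |pd i φ xh - β i| ≤ 24 * δ := by
      intro i
      rw [hβdef]
      show |pd i φ xh - fderiv ℝ P x (e i)| ≤ 24 * δ
      rw [hf, pd_eq_fderiv_apply]
      have : fderiv ℝ φ xh (e i) - fderiv ℝ φ x (e i)
          = (fderiv ℝ φ xh - fderiv ℝ φ x) (e i) := rfl
      rw [this]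
      calc |(fderiv ℝ φ xh - fderiv ℝ φ x) (e i)|
          ≤ ‖fderiv ℝ φ xh - fderiv ℝ φ x‖ * ‖e i‖ :=
            (fderiv ℝ φ xh - fderiv ℝ φ x).le_opNorm (e i)
        _ = ‖fderiv ℝ φ xh - fderiv ℝ φ x‖ := by
            rw [show ‖e i‖ = 1 by simp [e, EuclideanSpace.norm_single], mul_one]
        _ ≤ 4 * ‖xh - x‖ := fderiv_lip hφ hnφ xh x
        _ ≤ 4 * (6 * δ) := by linarith
        _ = 24 * δ := by ring
    refine ⟨?_, ?_, ?_, ?_⟩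
    · rw [hjet]
      refine ⟨φ, hφ, ?_, hnφ, rfl⟩
      intro z hz
      apply hφS
      rw [Finset.mem_coe] at hz ⊢
      exact Finset.subset_biUnion_of_mem id htI hz
    · have h00 : (![φ xh, pd 0 φ xh, pd 1 φ xh]) 0 = φ xh := rfl
      rw [h00, hPxh]
      calc |φ xh - (φ x + fderiv ℝ φ x (xh - x))|
          = |φ xh - φ x - fderiv ℝ φ x (xh - x)| := by ring_nf
        _ ≤ 4 * ‖xh - x‖^2 := htay
        _ ≤ 4 * (6*δ)^2 := by
            apply mul_le_mul_of_nonneg_left _ (by norm_num)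
            exact pow_le_pow_left₀ (norm_nonneg _) hdistxh 2
        _ ≤ 144 * δ^2 := by nlinarith
    · have := hLip 0
      simpa using this
    · have := hLip 1
      simpa using this
  -- apply Helly
  obtain ⟨p, hpmem⟩ := Convex.helly_theorem' (𝕜 := ℝ) hFconv hinter
  have hpF : ∀ t ∈ s, p ∈ F t := by
    intro t ht
    exact Set.mem_iInter₂.mp hpmem t ht
  -- R is in sigmaSharp at xh with k₀
  have hR : Lp xh p ∈ sigmaSharp E xh k₀ := by
    intro S hSE hScard
    have hSfin : S.Finite := hE.subset hSE
    have htmem : hSfin.toFinset ∈ s := by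
      rw [hsdef, Finset.mem_filter, Finset.mem_powerset]
      constructor
      · exact (Set.Finite.toFinset_subset_toFinset).mpr hSE
      · rw [← Set.ncard_eq_toFinset_card S hSfin]
        exact hScard
    have := (hpF _ htmem).1
    rwa [Set.Finite.coe_toFinset] at this
  -- diameter bound at xh
  have h0 : (0 : E2 → ℝ) ∈ sigmaSharp E xh k₀ := zero_mem_sigmaSharp E xh k₀
  have hbdd : BddAbove {r | ∃ P1 ∈ sigmaSharp E xh k₀, ∃ P2 ∈ sigmaSharp E xh k₀,
      r = jetNormAt xh (P1 - P2)} := by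
    refine ⟨9, ?_⟩
    rintro r ⟨P1, hP1, P2, hP2, rfl⟩
    obtain ⟨f1, hf1, _, hn1, he1⟩ := hP1 ∅ (Set.empty_subset E) (by simp)
    obtain ⟨f2, hf2, _, hn2, he2⟩ := hP2 ∅ (Set.empty_subset E) (by simp)
    have hv : |(P1 - P2) xh| ≤ 2 := by
      have b1 : |f1 xh| ≤ 1 := by
        have := dmul_abs_le_one hn1 (a := 0) (b := 0) (by norm_num) xh
        rwa [dmul00] at this
      have b2 : |f2 xh| ≤ 1 := by
        have := dmul_abs_le_one hn2 (a := 0) (b := 0) (by norm_num) xh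
        rwa [dmul00] at this
      have hP1v : P1 xh = f1 xh := by rw [he1, jet_apply_self]
      have hP2v : P2 xh = f2 xh := by rw [he2, jet_apply_self]
      have : (P1 - P2) xh = f1 xh - f2 xh := by
        show P1 xh - P2 xh = f1 xh - f2 xh
        rw [hP1v, hP2v]
      rw [this]
      calc |f1 xh - f2 xh| ≤ |f1 xh| + |f2 xh| := abs_sub _ _
        _ ≤ 2 := by linarith
    have hg : ‖fderiv ℝ (P1 - P2) xh‖ ≤ 4 := by
      have hd1 : DifferentiableAt ℝ P1 xh := by
        rw [he1]; exact (jet_hasFDerivAt f1 xh xh).differentiableAt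
      have hd2 : DifferentiableAt ℝ P2 xh := by
        rw [he2]; exact (jet_hasFDerivAt f2 xh xh).differentiableAt
      rw [fderiv_sub hd1 hd2]
      have g1 : ‖fderiv ℝ P1 xh‖ ≤ 2 := by
        rw [he1, jet_fderiv]; exact grad_le hn1 xh
      have g2 : ‖fderiv ℝ P2 xh‖ ≤ 2 := by
        rw [he2, jet_fderiv]; exact grad_le hn2 xh
      calc ‖fderiv ℝ P1 xh - fderiv ℝ P2 xh‖ ≤ ‖fderiv ℝ P1 xh‖ + ‖fderiv ℝ P2 xh‖ :=
          norm_sub_le _ _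
        _ ≤ 4 := by linarith
    unfold jetNormAt
    apply sqrt_le_of_le_sq (by norm_num)
    have h1 : ((P1 - P2) xh)^2 ≤ 4 := by nlinarith [abs_nonneg ((P1-P2) xh), sq_abs ((P1-P2) xh)]
    have h2 : ‖fderiv ℝ (P1 - P2) xh‖^2 ≤ 16 := by nlinarith [norm_nonneg (fderiv ℝ (P1 - P2) xh)]
    nlinarith
  have hdiamle : jetNormAt xh (Lp xh p - 0) ≤ jetDiam xh (sigmaSharp E xh k₀) :=
    le_csSup hbdd ⟨Lp xh p, hR, 0, h0, rfl⟩
  have hjetlt : jetNormAt xh (Lp xh p) < 2 * C₀ * δ := by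
    have : Lp xh p - 0 = Lp xh p := sub_zero _
    rw [this] at hdiamle
    exact lt_of_le_of_lt hdiamle hxhdiam
  -- extract coefficient bounds
  have hLpval : Lp xh p xh = p 0 := Lp_center xh p
  have hLpf : fderiv ℝ (Lp xh p) xh = Dp p := Lp_fderiv xh p xh
  have hnormform : jetNormAt xh (Lp xh p) = Real.sqrt ((p 0)^2 + ‖Dp p‖^2) := by
    unfold jetNormAt
    rw [hLpval, hLpf]
  have hp0 : |p 0| ≤ 2 * C₀ * δ := by
    refine le_trans ?_ (le_of_lt hjetlt)
    rw [hnormform]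
    exact abs_le_sqrt_add_sq _ _
  have hDp : ‖Dp p‖ ≤ 2 * C₀ * δ := by
    refine le_trans ?_ (le_of_lt hjetlt)
    rw [hnormform]
    exact nonneg_le_sqrt_add_sq _ _ (norm_nonneg _)
  have hp1 : |p 1| ≤ 2 * C₀ * δ := by
    calc |p 1| = |Dp p (e 0)| := by rw [Dp_e0]
      _ ≤ ‖Dp p‖ * ‖e 0‖ := (Dp p).le_opNorm _
      _ = ‖Dp p‖ := by rw [show ‖e (0:Fin 2)‖ = 1 by simp [e, EuclideanSpace.norm_single], mul_one]
      _ ≤ 2 * C₀ * δ := hDp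
  have hp2 : |p 2| ≤ 2 * C₀ * δ := by
    calc |p 2| = |Dp p (e 1)| := by rw [Dp_e1]
      _ ≤ ‖Dp p‖ * ‖e 1‖ := (Dp p).le_opNorm _
      _ = ‖Dp p‖ := by rw [show ‖e (1:Fin 2)‖ = 1 by simp [e, EuclideanSpace.norm_single], mul_one]
      _ ≤ 2 * C₀ * δ := hDp
  -- β bounds, using ∅ ∈ s
  have hemptymem : (∅ : Finset E2) ∈ s := by
    rw [hsdef, Finset.mem_filter, Finset.mem_powerset]
    exact ⟨Finset.empty_subset _, by simp⟩
  obtain ⟨_, _, hβ0, hβ1⟩ := hpF ∅ hemptymem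
  have hβb : ∀ i : Fin 2, |β i| ≤ (2 * C₀ + 24) * δ := by
    intro i
    fin_cases i
    · calc |β 0| = |p 1 - (p 1 - β 0)| := by ring_nf
        _ ≤ |p 1| + |p 1 - β 0| := abs_sub _ _
        _ ≤ 2 * C₀ * δ + 24 * δ := add_le_add hp1 hβ0
        _ = (2 * C₀ + 24) * δ := by ring
    · calc |β 1| = |p 2 - (p 2 - β 1)| := by ring_nf
        _ ≤ |p 2| + |p 2 - β 1| := abs_sub _ _
        _ ≤ 2 * C₀ * δ + 24 * δ := add_le_add hp2 hβ1
        _ = (2 * C₀ + 24) * δ := by ring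
  have hgradP : ‖fderiv ℝ P x‖ ≤ (4 * C₀ + 48) * δ := by
    calc ‖fderiv ℝ P x‖ ≤ |fderiv ℝ P x (e 0)| + |fderiv ℝ P x (e 1)| := opnorm_le _
      _ = |β 0| + |β 1| := rfl
      _ ≤ (2 * C₀ + 24) * δ + (2 * C₀ + 24) * δ := add_le_add (hβb 0) (hβb 1)
      _ = (4 * C₀ + 48) * δ := by ring
  -- final bound on |P x| using y ∈ E ∩ 2Q
  obtain ⟨ψ, hψ, hψy, hnψ, hPy⟩ := hP {y} (by simpa using hyE) (by simp; omega)
  have hψx : P x = ψ x := by rw [hPy, jet_apply_self]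
  have hfψ : fderiv ℝ ψ x = fderiv ℝ P x := (hfP ψ hPy).symm
  have hy0 : ψ y = 0 := hψy y rfl
  have htay := taylor2 hψ hnψ y x
  have hgy : ‖fderiv ℝ ψ y‖ ≤ (4 * C₀ + 60) * δ := by
    calc ‖fderiv ℝ ψ y‖ = ‖fderiv ℝ ψ x + (fderiv ℝ ψ y - fderiv ℝ ψ x)‖ := by
          rw [add_sub_cancel]
      _ ≤ ‖fderiv ℝ ψ x‖ + ‖fderiv ℝ ψ y - fderiv ℝ ψ x‖ := norm_add_le _ _
      _ ≤ (4 * C₀ + 48) * δ + 4 * ‖y - x‖ := by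
          apply add_le_add
          · rw [hfψ]; exact hgradP
          · exact fderiv_lip hψ hnψ y x
      _ ≤ (4 * C₀ + 48) * δ + 4 * (3 * δ) := by
          have : ‖y - x‖ = ‖x - y‖ := norm_sub_rev _ _
          rw [this]; linarith
      _ = (4 * C₀ + 60) * δ := by ring
  have hPxbound : |P x| ≤ (12 * C₀ + 216) * δ^2 := by
    have h1 : |ψ x - ψ y - fderiv ℝ ψ y (x - y)| ≤ 4 * ‖x - y‖^2 := htay
    have h2 : |fderiv ℝ ψ y (x - y)| ≤ (4 * C₀ + 60) * δ * (3 * δ) := by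
      calc |fderiv ℝ ψ y (x - y)| ≤ ‖fderiv ℝ ψ y‖ * ‖x - y‖ := (fderiv ℝ ψ y).le_opNorm _
        _ ≤ ((4 * C₀ + 60) * δ) * (3 * δ) := by
            apply mul_le_mul hgy hdistxy (norm_nonneg _)
            positivity
    have h3 : 4 * ‖x - y‖^2 ≤ 36 * δ^2 := by
      have := pow_le_pow_left₀ (norm_nonneg (x-y)) hdistxy 2
      nlinarith
    calc |P x| = |ψ x| := by rw [hψx]
      _ = |(ψ x - ψ y - fderiv ℝ ψ y (x - y)) + fderiv ℝ ψ y (x - y) + ψ y| := by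
          rw [hy0]; ring_nf
      _ ≤ |ψ x - ψ y - fderiv ℝ ψ y (x - y)| + |fderiv ℝ ψ y (x - y)| + |ψ y| := by
          calc |(ψ x - ψ y - fderiv ℝ ψ y (x - y)) + fderiv ℝ ψ y (x - y) + ψ y|
              ≤ |(ψ x - ψ y - fderiv ℝ ψ y (x - y)) + fderiv ℝ ψ y (x - y)| + |ψ y| := abs_add_le _ _
            _ ≤ |ψ x - ψ y - fderiv ℝ ψ y (x - y)| + |fderiv ℝ ψ y (x - y)| + |ψ y| := by
                linarith [abs_add_le (ψ x - ψ y - fderiv ℝ ψ y (x - y)) (fderiv ℝ ψ y (x - y))]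
      _ ≤ 36 * δ^2 + (4 * C₀ + 60) * δ * (3 * δ) + 0 := by
          have hy0' : |ψ y| = 0 := by rw [hy0, abs_zero]
          rw [hy0']
          exact add_le_add (add_le_add (le_trans h1 h3) h2) (le_refl 0)
      _ = (12 * C₀ + 216) * δ^2 := by ring
  -- conclude
  rw [Set.mem_smul_set]
  refine ⟨C⁻¹ • P, ⟨?_, ?_⟩, smul_inv_smul₀ (ne_of_gt hCpos) P⟩
  · show |(C⁻¹ • P) x| ≤ δ^2
    have : (C⁻¹ • P) x = C⁻¹ * P x := rfl
    rw [this, abs_mul, abs_of_pos (inv_pos.mpr hCpos)]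
    rw [inv_mul_le_iff₀ hCpos]
    calc |P x| ≤ (12 * C₀ + 216) * δ^2 := hPxbound
      _ ≤ C * δ^2 := by
          apply mul_le_mul_of_nonneg_right _ (sq_nonneg δ)
          rw [hCdef]; linarith
  · intro i
    have hD : fderiv ℝ (C⁻¹ • P) x = C⁻¹ • fderiv ℝ P x := by
      have : (C⁻¹ • P) = fun w => C⁻¹ • P w := rfl
      rw [this, fderiv_fun_const_smul (hPdiff x)]
    rw [hD]
    have happ : (C⁻¹ • fderiv ℝ P x) (EuclideanSpace.single i (1:ℝ)) = C⁻¹ * β i := rfl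
    rw [happ, abs_mul, abs_of_pos (inv_pos.mpr hCpos), inv_mul_le_iff₀ hCpos]
    calc |β i| ≤ (2 * C₀ + 24) * δ := hβb i
      _ ≤ C * δ := by
          apply mul_le_mul_of_nonneg_right _ (le_of_lt hδpos)
          rw [hCdef]; linarith

end
end
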